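/- arXiv:1303.4593 — 4 statements merged into one kernel-verified Lean document; each statement's English description precedes it below -/
import Mathlib

section
/- Every finite simple graph G admits an odd edge coloring with at most 4 colors; that is, the odd chromatic index of every finite simple graph satisfies χ'_o(G) ≤ 4. -/
set_option linter.unusedSectionVars false

namespace OddEdge

open Finset SimpleGraph
open scoped symmDiff

variable {V : Type*} [Fintype V] [DecidableEq V]

/-- incidence degree of a finset of edges -/
def dE (E : Finset (Sym2 V)) (v : V) : ℕ := (E.filter (fun e => v ∈ e)).card

/-- parity-valued degree -/
def dZ (E : Finset (Sym2 V)) (v : V) : ZMod 2 := (dE E v : ZMod 2)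

def GE (E : Finset (Sym2 V)) : SimpleGraph V := SimpleGraph.fromEdgeSet ↑E

def Nondiag (E : Finset (Sym2 V)) : Prop := ∀ e ∈ E, ¬ e.IsDiag

def cnt {α : Type*} [DecidableEq α] (E : Finset (Sym2 V)) (c : Sym2 V → α) (i : α) (v : V) : ℕ :=
  (E.filter (fun e => v ∈ e ∧ c e = i)).card

def OddOr0 (n : ℕ) : Prop := Odd n ∨ n = 0

def Valid (E : Finset (Sym2 V)) (c : Sym2 V → Fin 4) : Prop :=
  ∀ (i : Fin 4) (v : V), OddOr0 (cnt E c i v)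

lemma nondiag_of_subset {E F : Finset (Sym2 V)} (h : F ⊆ E) (hE : Nondiag E) : Nondiag F :=
  fun e he => hE e (h he)

lemma cast_zmod2 (n : ℕ) : (n : ZMod 2) = if Odd n then 1 else 0 := by
  induction n with
  | zero => simp
  | succ k ih =>
    push_cast
    rw [ih]
    rcases Nat.even_or_odd k with h | h
    · rw [if_neg (Nat.not_odd_iff_even.mpr h), if_pos (Even.add_one h)]
      ring
    · rw [if_pos h, if_neg (by simpa using (Odd.add_one h))]
      decide

lemma odd_of_dZ_one {n : ℕ} (h : (n : ZMod 2) = 1) : Odd n := by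
  by_contra hc
  rw [cast_zmod2, if_neg hc] at h
  exact absurd h (by decide)

lemma dZ_one_iff (n : ℕ) : (n : ZMod 2) = 1 ↔ Odd n := by
  constructor
  · exact odd_of_dZ_one
  · intro h; rw [cast_zmod2, if_pos h]

lemma dZ_zero_iff (n : ℕ) : (n : ZMod 2) = 0 ↔ Even n := by
  rw [cast_zmod2]
  rcases Nat.even_or_odd n with h | h
  · simp [Nat.not_odd_iff_even.mpr h, h]
  · rw [if_pos h]
    constructor
    · intro hh; exact absurd hh (by decide)
    · intro hh; exact absurd hh (Nat.not_even_iff_odd.mpr h)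


lemma GE_adj {E : Finset (Sym2 V)} {a b : V} : (GE E).Adj a b ↔ s(a,b) ∈ E ∧ a ≠ b := by
  simp [GE, SimpleGraph.fromEdgeSet_adj]

lemma GE_mono {E F : Finset (Sym2 V)} (h : F ⊆ E) : GE F ≤ GE E := by
  apply SimpleGraph.fromEdgeSet_mono
  exact_mod_cast h

lemma walk_edge_mem {E : Finset (Sym2 V)} {u v : V} (p : (GE E).Walk u v) :
    ∀ e ∈ p.edges, e ∈ E := by
  intro e he
  have h2 := p.edges_subset_edgeSet he
  rw [GE, SimpleGraph.edgeSet_fromEdgeSet] at h2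
  exact_mod_cast h2.1

lemma mem_GE_edgeSet {E : Finset (Sym2 V)} (hE : Nondiag E) {e : Sym2 V} (he : e ∈ E) :
    e ∈ (GE E).edgeSet := by
  rw [GE, SimpleGraph.edgeSet_fromEdgeSet]
  exact ⟨by exact_mod_cast he, hE e he⟩

lemma mem_support_cases {G : SimpleGraph V} {u w x : V} (p : G.Walk u w) (hx : x ∈ p.support) :
    x = u ∨ ∃ e ∈ p.edges, x ∈ e := by
  induction p with
  | nil => left; simpa using hx
  | @cons a b c h q ih =>
    rw [SimpleGraph.Walk.support_cons, List.mem_cons] at hx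
    rcases hx with rfl | hx
    · left; rfl
    · rcases ih hx with rfl | ⟨e, he, hxe⟩
      · right; exact ⟨s(a,x), by simp [SimpleGraph.Walk.edges_cons], by simp⟩
      · right; exact ⟨e, by simp [SimpleGraph.Walk.edges_cons, he], hxe⟩

lemma trail_parity {G : SimpleGraph V} {x : V} {u w : V} (p : G.Walk u w) (hp : p.IsTrail) :
    ((p.edges.toFinset.filter (fun e => x ∈ e)).card : ZMod 2)
      = (if x = u then 1 else 0) + (if x = w then 1 else 0) := by
  induction p with
  | nil =>
    simp only [SimpleGraph.Walk.edges_nil, List.toFinset_nil, Finset.filter_empty,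
      Finset.card_empty, Nat.cast_zero]
    split_ifs <;> decide
  | @cons a b c h q ih =>
    rw [SimpleGraph.Walk.isTrail_cons] at hp
    have hnotin : s(a,b) ∉ q.edges.toFinset := by simpa using hp.2
    rw [SimpleGraph.Walk.edges_cons, List.toFinset_cons, Finset.filter_insert]
    have hab : a ≠ b := h.ne
    have hchar : (2 : ZMod 2) = 0 := by decide
    by_cases hP : x ∈ s(a,b)
    · rw [if_pos hP, Finset.card_insert_of_notMem (fun hc => hnotin (Finset.mem_of_mem_filter _ hc))]
      push_cast
      rw [ih hp.1]
      rcases Sym2.mem_iff.mp hP with h1 | h1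
      · have hxb : x ≠ b := by rw [h1]; exact hab
        rw [if_pos h1, if_neg hxb]
        ring
      · have hxa : x ≠ a := by rw [h1]; exact fun hc => hab hc.symm
        rw [if_pos h1, if_neg hxa]
        linear_combination hchar
    · rw [if_neg hP, ih hp.1]
      have hxa : x ≠ a := fun hc => hP (by rw [hc]; simp)
      have hxb : x ≠ b := fun hc => hP (by rw [hc]; simp)
      rw [if_neg hxa, if_neg hxb]

lemma two_incident {G : SimpleGraph V} {u w x : V} (p : G.Walk u w) (hp : p.IsTrail)
    (hpar : ((if x = u then 1 else 0) + (if x = w then 1 else 0) : ZMod 2) = 0)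
    (he : ∃ e ∈ p.edges, x ∈ e) :
    2 ≤ (p.edges.toFinset.filter (fun e => x ∈ e)).card := by
  have hcard := trail_parity (x := x) p hp
  rw [hpar] at hcard
  obtain ⟨e, hee, hxe⟩ := he
  have h1 : 0 < (p.edges.toFinset.filter (fun e => x ∈ e)).card :=
    Finset.card_pos.mpr ⟨e, Finset.mem_filter.mpr ⟨List.mem_toFinset.mpr hee, hxe⟩⟩
  by_contra hcon
  have h2 : (p.edges.toFinset.filter (fun e => x ∈ e)).card = 1 := by omega
  rw [h2] at hcard
  exact absurd hcard (by decide)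

lemma touched_of_reachable {E : Finset (Sym2 V)} {a b : V} (h : (GE E).Reachable a b)
    (hab : a ≠ b) : 0 < dE E b := by
  obtain ⟨p⟩ := h
  induction p with
  | nil => exact absurd rfl hab
  | @cons a m c h q ih =>
    by_cases hmc : m = c
    · subst hmc
      have : s(a, m) ∈ E := (GE_adj.mp h).1
      refine Finset.card_pos.mpr ⟨s(a,m), Finset.mem_filter.mpr ⟨this, by simp⟩⟩
    · exact ih hmc

lemma card_mem_sym2 {e : Sym2 V} (he : ¬ e.IsDiag) :
    (Finset.univ.filter (fun v => v ∈ e)).card = 2 := by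
  induction e using Sym2.ind with
  | _ a b =>
    have hab : a ≠ b := by
      intro hc; exact he (by rw [hc]; exact Sym2.isDiag_iff_proj_eq |>.mpr rfl)
    have hset : Finset.univ.filter (fun v => v ∈ s(a,b)) = {a, b} := by
      ext x; simp [Sym2.mem_iff]
    rw [hset, Finset.card_pair hab]

lemma sum_dE (E : Finset (Sym2 V)) (hE : Nondiag E) : ∑ v, dE E v = 2 * E.card := by
  unfold dE
  have h1 : ∀ v : V, (E.filter (fun e => v ∈ e)).card = ∑ e ∈ E, if v ∈ e then 1 else 0 := by
    intro v; rw [Finset.card_filter]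
  simp_rw [h1]
  rw [Finset.sum_comm]
  have h2 : ∀ e ∈ E, (∑ v : V, if v ∈ e then 1 else 0) = 2 := by
    intro e he
    rw [← Finset.card_filter]
    exact card_mem_sym2 (hE e he)
  rw [Finset.sum_congr rfl h2, Finset.sum_const, smul_eq_mul, mul_comm]

def touched (E : Finset (Sym2 V)) : Finset V := Finset.univ.filter (fun v => dE E v ≠ 0)

lemma mem_touched {E : Finset (Sym2 V)} {v : V} : v ∈ touched E ↔ dE E v ≠ 0 := by
  simp [touched]

lemma even_card_odds (E : Finset (Sym2 V)) (hE : Nondiag E) :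
    Even ((Finset.univ.filter (fun v => Odd (dE E v))).card) := by
  have h0 : ((∑ v, dE E v : ℕ) : ZMod 2) = 0 := by
    rw [sum_dE E hE]; push_cast; rw [show ((2:ZMod 2)) = 0 by decide]; ring
  rw [Nat.cast_sum] at h0
  rw [Finset.sum_congr rfl (fun v _ => cast_zmod2 (dE E v))] at h0
  rw [Finset.sum_boole] at h0
  exact (dZ_zero_iff _).mp h0

lemma card_symmDiff_parity {α : Type*} [DecidableEq α] (A B : Finset α) :
    ((A ∆ B).card : ZMod 2) = A.card + B.card := by
  have h1 : (A ∆ B) = (A \ B) ∪ (B \ A) := by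
    ext x; simp [Finset.mem_symmDiff, Finset.mem_union, Finset.mem_sdiff]
  have hd : Disjoint (A \ B) (B \ A) := disjoint_sdiff_sdiff
  rw [h1, Finset.card_union_of_disjoint hd]
  have h2 := Finset.card_sdiff_add_card_inter A B
  have h3 := Finset.card_sdiff_add_card_inter B A
  have c2 : (((A \ B).card : ZMod 2)) + ((A ∩ B).card : ZMod 2) = (A.card : ZMod 2) := by
    exact_mod_cast congrArg (fun n : ℕ => (n : ZMod 2)) h2
  have c3 : (((B \ A).card : ZMod 2)) + ((B ∩ A).card : ZMod 2) = (B.card : ZMod 2) := by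
    exact_mod_cast congrArg (fun n : ℕ => (n : ZMod 2)) h3
  have h4 : ((A ∩ B).card : ZMod 2) + ((A ∩ B).card : ZMod 2) = 0 := by
    have : ∀ z : ZMod 2, z + z = 0 := by decide
    exact this _
  have h5 : (B ∩ A) = (A ∩ B) := Finset.inter_comm B A
  rw [h5] at c3
  push_cast
  linear_combination c2 + c3 - h4

lemma filter_symmDiff' {α : Type*} [DecidableEq α] (p : α → Prop) [DecidablePred p]
    (A B : Finset α) : (A ∆ B).filter p = (A.filter p) ∆ (B.filter p) := by
  ext x
  simp only [Finset.mem_filter, Finset.mem_symmDiff]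
  tauto

lemma dZ_symmDiff (A B : Finset (Sym2 V)) (v : V) : dZ (A ∆ B) v = dZ A v + dZ B v := by
  unfold dZ dE
  rw [filter_symmDiff']
  exact card_symmDiff_parity _ _

lemma dZ_sdiff {A B : Finset (Sym2 V)} (h : B ⊆ A) (v : V) : dZ (A \ B) v = dZ A v + dZ B v := by
  have : A \ B = A ∆ B := by
    ext x
    simp only [Finset.mem_sdiff, Finset.mem_symmDiff]
    constructor
    · intro ⟨h1, h2⟩; left; exact ⟨h1, h2⟩
    · rintro (⟨h1, h2⟩ | ⟨h1, h2⟩)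
      · exact ⟨h1, h2⟩
      · exact absurd (h h1) h2
  rw [this]
  exact dZ_symmDiff A B v

lemma dZ_empty (v : V) : dZ (∅ : Finset (Sym2 V)) v = 0 := by simp [dZ, dE]

lemma dE_mono {E F : Finset (Sym2 V)} (h : F ⊆ E) (v : V) : dE F v ≤ dE E v :=
  Finset.card_le_card (Finset.filter_subset_filter _ h)


lemma exists_join (E : Finset (Sym2 V)) (S : Finset V) (hEven : Even S.card)
    (hConn : ∀ a ∈ S, ∀ b ∈ S, (GE E).Reachable a b) :
    ∃ J ⊆ E, ∀ v, dZ J v = if v ∈ S then 1 else 0 := by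
  classical
  induction S using Finset.strongInduction with
  | _ S ih =>
  rcases S.eq_empty_or_nonempty with rfl | ⟨a, ha⟩
  · exact ⟨∅, Finset.empty_subset _, fun v => by simp [dZ_empty]⟩
  · have h2 : 1 < S.card := by
      obtain ⟨k, hk⟩ := hEven
      have h1 : 0 < S.card := Finset.card_pos.mpr ⟨a, ha⟩
      omega
    obtain ⟨b, hb, hba⟩ := Finset.exists_mem_ne h2 a
    have hsub : {a, b} ⊆ S := by
      intro x hx; rcases Finset.mem_insert.mp hx with rfl | hx
      · exact ha
      · rw [Finset.mem_singleton.mp hx]; exact hb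
    set S' := S \ {a, b} with hS'
    have hS'ss : S' ⊂ S := by
      refine Finset.ssubset_iff_of_subset (Finset.sdiff_subset) |>.mpr ⟨a, ha, ?_⟩
      simp [hS']
    have hcardS' : S'.card = S.card - 2 := by
      rw [hS', Finset.card_sdiff_of_subset hsub, Finset.card_pair (Ne.symm hba)]
    have hEven' : Even S'.card := by
      obtain ⟨k, hk⟩ := hEven
      rw [hcardS', hk]
      have : k + k - 2 = (k - 1) + (k - 1) := by omega
      exact ⟨k - 1, this⟩
    have hConn' : ∀ x ∈ S', ∀ y ∈ S', (GE E).Reachable x y := fun x hx y hy =>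
      hConn x (Finset.mem_sdiff.mp hx).1 y (Finset.mem_sdiff.mp hy).1
    obtain ⟨J', hJ'sub, hJ'⟩ := ih S' hS'ss hEven' hConn'
    obtain ⟨p0⟩ := hConn a ha b hb
    set p := p0.bypass with hp
    have hpath : p.IsPath := SimpleGraph.Walk.bypass_isPath p0
    set P := p.edges.toFinset with hP
    have hPsub : P ⊆ E := fun e he => walk_edge_mem p e (List.mem_toFinset.mp he)
    have hPd : ∀ v, dZ P v = (if v = a then 1 else 0) + (if v = b then 1 else 0) :=
      fun v => trail_parity (x := v) p hpath.isTrail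
    refine ⟨J' ∆ P, ?_, ?_⟩
    · intro e he
      rcases Finset.mem_symmDiff.mp he with ⟨h1, _⟩ | ⟨h1, _⟩
      · exact hJ'sub h1
      · exact hPsub h1
    · intro v
      rw [dZ_symmDiff, hJ' v, hPd v]
      have hanS' : a ∉ S' := by simp [hS']
      have hbnS' : b ∉ S' := by simp [hS']
      by_cases hva : v = a
      · subst hva
        rw [if_neg hanS', if_pos rfl, if_neg hba.symm, if_pos ha]
        ring
      · by_cases hvb : v = b
        · subst hvb
          rw [if_neg hbnS', if_neg hva, if_pos rfl, if_pos hb]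
          ring
        · rw [if_neg hva, if_neg hvb]
          have : v ∈ S' ↔ v ∈ S := by
            simp [hS', Finset.mem_sdiff, hva, hvb]
          by_cases hvS : v ∈ S
          · rw [if_pos (this.mpr hvS), if_pos hvS]; ring
          · rw [if_neg (fun hc => hvS (this.mp hc)), if_neg hvS]; ring

lemma exists_acyclic_join (E : Finset (Sym2 V)) (S : Finset V)
    (hEven : Even S.card) (hConn : ∀ a ∈ S, ∀ b ∈ S, (GE E).Reachable a b) :
    ∃ J ⊆ E, (GE J).IsAcyclic ∧ ∀ v, dZ J v = if v ∈ S then 1 else 0 := by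
  classical
  obtain ⟨J0, hJ0sub, hJ0⟩ := exists_join E S hEven hConn
  set 𝒥 := (E.powerset.filter (fun J => ∀ v, dZ J v = if v ∈ S then 1 else 0)) with h𝒥
  have hne : 𝒥.Nonempty := ⟨J0, by
    rw [h𝒥, Finset.mem_filter, Finset.mem_powerset]; exact ⟨hJ0sub, hJ0⟩⟩
  obtain ⟨J, hJmem, hJmin⟩ := Finset.exists_min_image 𝒥 Finset.card hne
  rw [h𝒥, Finset.mem_filter, Finset.mem_powerset] at hJmem
  refine ⟨J, hJmem.1, ?_, hJmem.2⟩
  intro v c hc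
  have hCsub : c.edges.toFinset ⊆ J := fun e he => walk_edge_mem c e (List.mem_toFinset.mp he)
  have hCne : c.edges.toFinset.Nonempty := by
    have h3 := hc.three_le_length
    have hlen := c.length_edges
    have hnil : c.edges ≠ [] := by
      intro h0; rw [h0] at hlen; simp at hlen; omega
    obtain ⟨e, he⟩ := List.exists_mem_of_ne_nil _ hnil
    exact ⟨e, List.mem_toFinset.mpr he⟩
  have hCd : ∀ x, dZ (c.edges.toFinset) x = 0 := by
    intro x
    show ((c.edges.toFinset.filter (fun e => x ∈ e)).card : ZMod 2) = 0
    rw [trail_parity (x := x) c hc.isTrail]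
    split_ifs <;> decide
  set J' := J \ c.edges.toFinset with hJ'
  have hJ'd : ∀ w, dZ J' w = if w ∈ S then 1 else 0 := by
    intro w
    rw [hJ', dZ_sdiff hCsub, hCd w, hJmem.2 w, add_zero]
  have hcard : J'.card < J.card := Finset.card_lt_card (Finset.sdiff_ssubset hCsub hCne)
  have hmem' : J' ∈ 𝒥 := by
    rw [h𝒥, Finset.mem_filter, Finset.mem_powerset]
    exact ⟨Finset.Subset.trans (Finset.sdiff_subset) hJmem.1, hJ'd⟩
  have := hJmin J' hmem'
  omega

lemma acyclic_anti {E F : Finset (Sym2 V)} (h : F ⊆ E) (hA : (GE E).IsAcyclic) :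
    (GE F).IsAcyclic := by
  intro v c hc
  have hsub : ∀ e ∈ c.edges, e ∈ (GE E).edgeSet := by
    intro e he
    have h1 := c.edges_subset_edgeSet he
    rw [GE, SimpleGraph.edgeSet_fromEdgeSet] at h1 ⊢
    exact ⟨by exact_mod_cast h h1.1, h1.2⟩
  exact hA (c.transfer (GE E) hsub) (hc.transfer hsub)


lemma separation {F : Finset (Sym2 V)} (hA : (GE F).IsAcyclic) {u a b : V}
    (ha : s(u,a) ∈ F) (hb : s(u,b) ∈ F) (hab : a ≠ b) (hau : a ≠ u) (hbu : b ≠ u) :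
    ¬ (GE (F.filter (fun e => u ∉ e))).Reachable a b := by
  intro hr
  obtain ⟨p0⟩ := hr
  set p := p0.bypass with hpdef
  have hpath : p.IsPath := p0.bypass_isPath
  have hedges : ∀ e ∈ p.edges, u ∉ e ∧ e ∈ F := by
    intro e he
    have h1 := walk_edge_mem p e he
    rw [Finset.mem_filter] at h1
    exact ⟨h1.2, h1.1⟩
  have hus : u ∉ p.support := by
    intro hu
    rcases mem_support_cases p hu with rfl | ⟨e, he, hue⟩
    · exact hau rfl
    · exact (hedges e he).1 hue
  have htr : ∀ e ∈ p.edges, e ∈ (GE F).edgeSet := by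
    intro e he
    have h1 := p.edges_subset_edgeSet he
    rw [GE, SimpleGraph.edgeSet_fromEdgeSet] at h1 ⊢
    exact ⟨by exact_mod_cast (hedges e he).2, h1.2⟩
  set q := p.transfer (GE F) htr with hq
  have hqpath : q.IsPath := hpath.transfer htr
  have hqs : u ∉ q.support := by
    rw [hq, SimpleGraph.Walk.support_transfer]
    exact hus
  have hqe : q.edges = p.edges := SimpleGraph.Walk.edges_transfer p htr
  have hadj_ua : (GE F).Adj u a := GE_adj.mpr ⟨ha, fun hc => hau hc.symm⟩
  have hadj_bu : (GE F).Adj b u := GE_adj.mpr ⟨by rwa [Sym2.eq_swap], hbu⟩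
  set r := SimpleGraph.Walk.cons hadj_ua q with hrdef
  have hrpath : r.IsPath := by
    rw [hrdef, SimpleGraph.Walk.cons_isPath_iff]
    exact ⟨hqpath, hqs⟩
  have hcyc : (SimpleGraph.Walk.cons hadj_bu r).IsCycle := by
    rw [SimpleGraph.Walk.cons_isCycle_iff]
    refine ⟨hrpath, ?_⟩
    rw [hrdef, SimpleGraph.Walk.edges_cons]
    intro hmem
    rcases List.mem_cons.mp hmem with heq | hmem2
    · rcases Sym2.eq_iff.mp heq with ⟨hc1, hc2⟩ | ⟨hc1, hc2⟩
      · exact hbu hc1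
      · exact hab hc1.symm
    · rw [hqe] at hmem2
      exact (hedges _ hmem2).1 (by simp)
  exact hA _ hcyc

lemma exists_leaf {F : Finset (Sym2 V)} (hF : Nondiag F) (hne : F.Nonempty)
    (hA : (GE F).IsAcyclic) : ∃ v, dE F v = 1 := by
  classical
  obtain ⟨e0, he0⟩ := hne
  have h1L : 1 ∈ (Finset.range (Fintype.card V + 1)).filter
      (fun n => ∃ u v : V, ∃ p : (GE F).Walk u v, p.IsPath ∧ p.length = n) := by
    rw [Finset.mem_filter, Finset.mem_range]
    induction e0 using Sym2.ind with
    | _ x y =>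
      have hxy : x ≠ y := fun hc => hF _ he0 (by rw [hc]; exact Sym2.isDiag_iff_proj_eq.mpr rfl)
      have hadj : (GE F).Adj x y := GE_adj.mpr ⟨he0, hxy⟩
      have hcard : 0 < Fintype.card V := Fintype.card_pos_iff.mpr ⟨x⟩
      refine ⟨by omega, x, y, SimpleGraph.Walk.cons hadj SimpleGraph.Walk.nil, ?_, rfl⟩
      rw [SimpleGraph.Walk.cons_isPath_iff]
      exact ⟨SimpleGraph.Walk.IsPath.nil, by simp [hxy]⟩
  obtain ⟨n0, hn0mem, hn0max⟩ := Finset.exists_max_image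
    ((Finset.range (Fintype.card V + 1)).filter
      (fun n => ∃ u v : V, ∃ p : (GE F).Walk u v, p.IsPath ∧ p.length = n)) id ⟨1, h1L⟩
  have hn0ge : 1 ≤ n0 := hn0max 1 h1L
  rw [Finset.mem_filter] at hn0mem
  obtain ⟨hrange, u, v, p, hp, hplen⟩ := hn0mem
  cases p with
  | nil => rw [SimpleGraph.Walk.length_nil] at hplen; omega
  | @cons _ m _ hadj q =>
    have he1 : s(u, m) ∈ F := (GE_adj.mp hadj).1
    have hqpath : q.IsPath ∧ u ∉ q.support := (SimpleGraph.Walk.cons_isPath_iff _ _).mp hp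
    have hge1 : 0 < dE F u :=
      Finset.card_pos.mpr ⟨s(u,m), Finset.mem_filter.mpr ⟨he1, by simp⟩⟩
    rcases Nat.lt_or_ge (dE F u) 2 with hlt | hge2
    · exact ⟨u, by omega⟩
    · exfalso
      have hgt : 1 < (F.filter (fun e => u ∈ e)).card := by
        have : dE F u = (F.filter (fun e => u ∈ e)).card := rfl
        omega
      obtain ⟨e2, he2star, he2ne⟩ := Finset.exists_mem_ne hgt s(u,m)
      rw [Finset.mem_filter] at he2star
      obtain ⟨c, hc⟩ := Sym2.mem_iff_exists.mp he2star.2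
      have hcu : c ≠ u := by
        intro hcc
        exact hF _ he2star.1 (by rw [hc, hcc]; exact Sym2.isDiag_iff_proj_eq.mpr rfl)
      have hadj_uc : (GE F).Adj u c := GE_adj.mpr ⟨hc ▸ he2star.1, fun hcc => hcu hcc.symm⟩
      by_cases hcs : c ∈ (SimpleGraph.Walk.cons hadj q).support
      · set q' := (SimpleGraph.Walk.cons hadj q).takeUntil c hcs with hq'
        have hq'path : q'.IsPath := hp.takeUntil hcs
        have hq'edges : q'.edges ⊆ (SimpleGraph.Walk.cons hadj q).edges :=
          SimpleGraph.Walk.edges_takeUntil_subset _ hcs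
        have hnotmem : s(u, c) ∉ (SimpleGraph.Walk.cons hadj q).edges := by
          rw [SimpleGraph.Walk.edges_cons]
          intro hmem
          rcases List.mem_cons.mp hmem with heq | hmem2
          · rw [hc] at he2ne; exact he2ne heq
          · have : u ∈ q.support := SimpleGraph.Walk.fst_mem_support_of_mem_edges q hmem2
            exact hqpath.2 this
        have hcyc : (SimpleGraph.Walk.cons (hadj_uc.symm) q').IsCycle := by
          rw [SimpleGraph.Walk.cons_isCycle_iff]
          refine ⟨hq'path, ?_⟩
          intro hmem
          apply hnotmem
          rw [Sym2.eq_swap] at hmem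
          exact hq'edges hmem
        exact hA _ hcyc
      · set p' := SimpleGraph.Walk.cons (hadj_uc.symm) (SimpleGraph.Walk.cons hadj q) with hp'
        have hp'path : p'.IsPath := by
          rw [hp', SimpleGraph.Walk.cons_isPath_iff]
          exact ⟨hp, hcs⟩
        have hp'len : p'.length = n0 + 1 := by
          rw [hp', SimpleGraph.Walk.length_cons, hplen]
        have hmemL : n0 + 1 ∈ (Finset.range (Fintype.card V + 1)).filter
            (fun n => ∃ u v : V, ∃ p : (GE F).Walk u v, p.IsPath ∧ p.length = n) := by
          rw [Finset.mem_filter, Finset.mem_range]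
          refine ⟨?_, c, v, p', hp'path, hp'len⟩
          have := hp'path.length_lt
          omega
        have := hn0max _ hmemL
        simp only [id] at this
        omega

lemma GE_erase_eq (E : Finset (Sym2 V)) (e : Sym2 V) :
    GE (E.erase e) = (GE E) \ SimpleGraph.fromEdgeSet {e} := by
  ext a b
  simp only [GE, SimpleGraph.fromEdgeSet_adj, SimpleGraph.sdiff_adj, Finset.coe_erase,
    Set.mem_diff, Finset.mem_coe, Set.mem_singleton_iff, Finset.mem_erase]
  tauto

lemma reach_of_erase {E : Finset (Sym2 V)} {e : Sym2 V}
    (hcyc : ∃ (x : V) (c : (GE E).Walk x x), c.IsCycle ∧ e ∈ c.edges) :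
    ∀ a b, (GE E).Reachable a b → (GE (E.erase e)).Reachable a b := by
  obtain ⟨x, c, hc, hec⟩ := hcyc
  induction e using Sym2.ind with
  | _ pp qq =>
  have hR0 : ((GE E) \ SimpleGraph.fromEdgeSet {s(pp,qq)}).Reachable pp qq :=
    (SimpleGraph.adj_and_reachable_delete_edges_iff_exists_cycle.mpr ⟨x, c, hc, hec⟩).2
  rw [← GE_erase_eq] at hR0
  intro a b hr
  obtain ⟨w⟩ := hr
  induction w with
  | nil => exact SimpleGraph.Reachable.refl _
  | @cons a m b h q ih =>
    refine SimpleGraph.Reachable.trans ?_ ih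
    by_cases he : s(a, m) = s(pp, qq)
    · rcases Sym2.eq_iff.mp he with ⟨h1, h2⟩ | ⟨h1, h2⟩
      · rw [h1, h2]; exact hR0
      · rw [h1, h2]; exact hR0.symm
    · refine SimpleGraph.Adj.reachable ?_
      rw [GE_adj]
      exact ⟨Finset.mem_erase.mpr ⟨he, (GE_adj.mp h).1⟩, h.ne⟩

lemma exists_spanning_forest (E : Finset (Sym2 V)) (hE : Nondiag E) :
    ∃ T ⊆ E, (GE T).IsAcyclic ∧ ∀ a b, (GE E).Reachable a b → (GE T).Reachable a b := by
  classical
  induction E using Finset.strongInduction with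
  | _ E ih =>
  by_cases hA : (GE E).IsAcyclic
  · exact ⟨E, Finset.Subset.refl _, hA, fun a b h => h⟩
  · rw [SimpleGraph.IsAcyclic] at hA
    push_neg at hA
    obtain ⟨x, c, hc⟩ := hA
    have h3 := hc.three_le_length
    have hlenE := c.length_edges
    have hnil : c.edges ≠ [] := by
      intro h0; rw [h0] at hlenE; simp at hlenE; omega
    obtain ⟨e, he⟩ := List.exists_mem_of_ne_nil _ hnil
    have heE : e ∈ E := walk_edge_mem c e he
    have hss : E.erase e ⊂ E := Finset.erase_ssubset heE
    obtain ⟨T, hT1, hT2, hT3⟩ := ih (E.erase e) hss (nondiag_of_subset (Finset.erase_subset _ _) hE)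
    refine ⟨T, Finset.Subset.trans hT1 (Finset.erase_subset _ _), hT2, ?_⟩
    intro a b hr
    exact hT3 a b (reach_of_erase ⟨x, c, hc, he⟩ a b hr)


lemma cnt_zero_of_untouched {α : Type*} [DecidableEq α] {A : Finset (Sym2 V)} {v : V}
    (h : dE A v = 0) (c : Sym2 V → α) (i : α) : cnt A c i v = 0 := by
  unfold cnt
  unfold dE at h
  rw [Finset.card_eq_zero] at h ⊢
  rw [Finset.eq_empty_iff_forall_notMem] at h ⊢
  intro e he
  rw [Finset.mem_filter] at he
  exact h e (Finset.mem_filter.mpr ⟨he.1, he.2.1⟩)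

lemma cnt_split {α : Type*} [DecidableEq α] {A B : Finset (Sym2 V)} (hd : Disjoint A B)
    (c cA cB : Sym2 V → α) (hA : ∀ e ∈ A, c e = cA e) (hB : ∀ e ∈ B, c e = cB e)
    (i : α) (v : V) : cnt (A ∪ B) c i v = cnt A cA i v + cnt B cB i v := by
  unfold cnt
  have h1 : A.filter (fun e => v ∈ e ∧ c e = i) = A.filter (fun e => v ∈ e ∧ cA e = i) :=
    Finset.filter_congr (fun e he => by rw [hA e he])
  have h2 : B.filter (fun e => v ∈ e ∧ c e = i) = B.filter (fun e => v ∈ e ∧ cB e = i) :=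
    Finset.filter_congr (fun e he => by rw [hB e he])
  rw [Finset.filter_union, Finset.card_union_of_disjoint (Finset.disjoint_filter_filter hd),
    h1, h2]

lemma star_filter_vertex {F : Finset (Sym2 V)} (u w : V) (hw : w ≠ u) :
    (F.filter (fun e => u ∈ e)).filter (fun e => w ∈ e)
      = if s(u,w) ∈ F then {s(u,w)} else ∅ := by
  ext e
  rw [Finset.mem_filter, Finset.mem_filter]
  constructor
  · rintro ⟨⟨heF, hue⟩, hwe⟩
    obtain ⟨z, hz⟩ := Sym2.mem_iff_exists.mp hue
    subst hz
    rcases Sym2.mem_iff.mp hwe with rfl | rfl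
    · exact absurd rfl hw
    · rw [if_pos heF]; simp
  · intro he
    by_cases hm : s(u,w) ∈ F
    · rw [if_pos hm, Finset.mem_singleton] at he
      subst he
      exact ⟨⟨hm, by simp⟩, by simp⟩
    · rw [if_neg hm] at he
      exact absurd he (Finset.notMem_empty e)

lemma fin2_cases (g i : Fin 2) : i = g ∨ i = g + 1 := by
  fin_cases g <;> fin_cases i <;> simp

lemma fin2_ne (g : Fin 2) : g + 1 ≠ g := by fin_cases g <;> decide


lemma forest_coloring : ∀ (n : ℕ) (F : Finset (Sym2 V)), F.card ≤ n → Nondiag F →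
    (GE F).IsAcyclic → ∀ (S : Finset V) (γ : V → Fin 2),
    (∀ a ∈ S, ∀ b ∈ S, a ≠ b → ¬ (GE F).Reachable a b) →
    ∃ c : Sym2 V → Fin 2, ∀ (i : Fin 2) (v : V),
      if v ∈ S ∧ i = γ v then Even (cnt F c i v) else OddOr0 (cnt F c i v) := by
  intro n
  induction n using Nat.strong_induction_on with
  | _ n ih =>
  intro F hcard hF hA S γ hpair
  classical
  rcases F.eq_empty_or_nonempty with rfl | hne
  · refine ⟨fun _ => 0, ?_⟩
    intro i v
    have h0 : cnt (∅ : Finset (Sym2 V)) (fun _ => (0 : Fin 2)) i v = 0 := by simp [cnt]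
    split_ifs <;> rw [h0]
    · exact Even.zero
    · exact Or.inr rfl
  · have hpivot : ∃ u, dE F u ≠ 0 ∧ (u ∈ S ∨ ∀ s ∈ S, dE F s = 0) := by
      by_cases hSu : ∃ s ∈ S, dE F s ≠ 0
      · obtain ⟨s, hs1, hs2⟩ := hSu
        exact ⟨s, hs2, Or.inl hs1⟩
      · push_neg at hSu
        obtain ⟨e0, he0⟩ := hne
        induction e0 using Sym2.ind with
        | _ x y =>
          refine ⟨x, ?_, Or.inr hSu⟩
          apply Nat.pos_iff_ne_zero.mp
          exact Finset.card_pos.mpr ⟨s(x,y), Finset.mem_filter.mpr ⟨he0, by simp⟩⟩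
    obtain ⟨u, hu0, hucase⟩ := hpivot
    set star := F.filter (fun e => u ∈ e) with hstar
    set F' := F.filter (fun e => u ∉ e) with hF'def
    have hdisj : Disjoint star F' := by
      refine Finset.disjoint_left.mpr ?_
      intro e he1 he2
      exact (Finset.mem_filter.mp he2).2 (Finset.mem_filter.mp he1).2
    have hunion : star ∪ F' = F := Finset.filter_union_filter_not_eq _ F
    have hstarne : star.Nonempty := by
      rw [← Finset.card_pos]
      have h1 : dE F u = star.card := rfl
      omega
    have hcard' : F'.card < n := by
      have h1 : star.card + F'.card = F.card := by
        rw [← Finset.card_union_of_disjoint hdisj, hunion]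
      have h2 : 0 < star.card := Finset.card_pos.mpr hstarne
      omega
    have hF'sub : F' ⊆ F := Finset.filter_subset _ _
    have hF'nd : Nondiag F' := nondiag_of_subset hF'sub hF
    have hF'A : (GE F').IsAcyclic := acyclic_anti hF'sub hA
    set N := Finset.univ.filter (fun w => w ≠ u ∧ s(u, w) ∈ F) with hN
    have hmemN : ∀ w, w ∈ N ↔ (w ≠ u ∧ s(u,w) ∈ F) := by intro w; simp [hN]
    have hNS : ∀ w ∈ N, w ∉ S := by
      intro w hw hwS
      rw [hmemN] at hw
      rcases hucase with huS | hS0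
      · have hadj : (GE F).Adj u w := GE_adj.mpr ⟨hw.2, fun hc => hw.1 hc.symm⟩
        exact hpair u huS w hwS (fun hc => hw.1 hc.symm) hadj.reachable
      · have hpos : dE F w ≠ 0 := by
          apply Nat.pos_iff_ne_zero.mp
          exact Finset.card_pos.mpr ⟨s(u,w), Finset.mem_filter.mpr ⟨hw.2, by simp⟩⟩
        exact hpos (hS0 w hwS)
    have huN : u ∉ N := by simp [hmemN]
    -- choose the color g and the subset X of the star to receive color g
    have hchoice : ∃ (g : Fin 2) (X : Finset (Sym2 V)), X ⊆ star ∧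
        (u ∈ S → g = γ u) ∧
        ((u ∈ S ∧ Even X.card ∧ OddOr0 (star.card - X.card)) ∨
         (u ∉ S ∧ OddOr0 X.card ∧ OddOr0 (star.card - X.card))) := by
      by_cases huS : u ∈ S
      · rcases Nat.even_or_odd star.card with hev | hod
        · exact ⟨γ u, star, Finset.Subset.refl _, fun _ => rfl,
            Or.inl ⟨huS, hev, Or.inr (by omega)⟩⟩
        · exact ⟨γ u, ∅, Finset.empty_subset _, fun _ => rfl,
            Or.inl ⟨huS, Even.zero, Or.inl (by simpa using hod)⟩⟩
      · rcases Nat.even_or_odd star.card with hev | hod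
        · obtain ⟨e1, he1⟩ := hstarne
          refine ⟨0, {e1}, Finset.singleton_subset_iff.mpr he1, fun hc => absurd hc huS,
            Or.inr ⟨huS, Or.inl (by simp), Or.inl ?_⟩⟩
          rw [Finset.card_singleton]
          have hpos : 0 < star.card := Finset.card_pos.mpr ⟨e1, he1⟩
          exact Nat.Even.sub_odd (by omega) hev (by simp)
        · exact ⟨0, ∅, Finset.empty_subset _, fun hc => absurd hc huS,
            Or.inr ⟨huS, Or.inr (by simp), Or.inl (by simpa using hod)⟩⟩
    obtain ⟨g, X, hXsub, hgu, hXcase⟩ := hchoice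
    set κ : Sym2 V → Fin 2 := fun e => if e ∈ X then g else g + 1 with hκ
    have hκg : ∀ e, κ e = g ↔ e ∈ X := by
      intro e
      by_cases heX : e ∈ X
      · constructor
        · intro _; exact heX
        · intro _; rw [hκ]; simp only [if_pos heX]
      · constructor
        · intro hc
          rw [hκ] at hc
          simp only [if_neg heX] at hc
          exact absurd hc (fin2_ne g)
        · intro hc; exact absurd hc heX
    have hstar_u : ∀ i, cnt star κ i u = if i = g then X.card else star.card - X.card := by
      intro i
      unfold cnt
      have hsame : star.filter (fun e => u ∈ e ∧ κ e = i)
          = star.filter (fun e => κ e = i) := by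
        apply Finset.filter_congr
        intro e he
        have hue : u ∈ e := (Finset.mem_filter.mp he).2
        simp [hue]
      rw [hsame]
      by_cases hig : i = g
      · rw [if_pos hig]
        have hXf : star.filter (fun e => κ e = i) = X := by
          ext e
          rw [Finset.mem_filter]
          constructor
          · rintro ⟨_, hk⟩
            exact (hκg e).mp (by rw [← hig]; exact hk)
          · intro heX
            exact ⟨hXsub heX, by rw [hig]; exact (hκg e).mpr heX⟩
        rw [hXf]
      · rw [if_neg hig]
        have hig2 : i = g + 1 := (fin2_cases g i).resolve_left hig
        have hXf : star.filter (fun e => κ e = i) = star \ X := by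
          ext e
          rw [Finset.mem_filter, Finset.mem_sdiff]
          constructor
          · rintro ⟨hes, hk⟩
            refine ⟨hes, fun hex => ?_⟩
            rw [hκ] at hk
            simp only [if_pos hex] at hk
            exact hig hk.symm
          · rintro ⟨hes, hex⟩
            refine ⟨hes, ?_⟩
            rw [hκ]
            simp only [if_neg hex]
            exact hig2.symm
        rw [hXf, Finset.card_sdiff_of_subset hXsub]
    have hstar_w : ∀ (i : Fin 2) (w : V), w ≠ u → s(u,w) ∈ F →
        cnt star κ i w = if κ s(u,w) = i then 1 else 0 := by
      intro i w hwne hmem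
      unfold cnt
      rw [← Finset.filter_filter]
      rw [show star.filter (fun e => w ∈ e)
            = if s(u,w) ∈ F then {s(u,w)} else ∅ from star_filter_vertex u w hwne]
      rw [if_pos hmem, Finset.filter_singleton]
      by_cases hki : κ s(u,w) = i
      · rw [if_pos hki, if_pos hki, Finset.card_singleton]
      · rw [if_neg hki, if_neg hki, Finset.card_empty]
    have hstar_o : ∀ (i : Fin 2) (v : V), v ≠ u → s(u,v) ∉ F → cnt star κ i v = 0 := by
      intro i v hvne hvmem
      apply cnt_zero_of_untouched
      show (star.filter (fun e => v ∈ e)).card = 0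
      rw [show star.filter (fun e => v ∈ e)
            = if s(u,v) ∈ F then {s(u,v)} else ∅ from star_filter_vertex u v hvne]
      rw [if_neg hvmem, Finset.card_empty]
    set S' := (S.erase u) ∪ N with hS'
    set γ' : V → Fin 2 := fun w => if w ∈ N then κ s(u,w) else γ w with hγ'
    have hcross : ∀ x ∈ N, ∀ y ∈ S.erase u, ¬ (GE F').Reachable x y := by
      intro x hx y hy hr
      rw [hmemN] at hx
      have hyS : y ∈ S := Finset.mem_of_mem_erase hy
      have hyu : y ≠ u := Finset.ne_of_mem_erase hy
      have hrF : (GE F).Reachable x y := hr.mono (GE_mono hF'sub)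
      rcases hucase with huS | hS0
      · have hadj : (GE F).Adj u x := GE_adj.mpr ⟨hx.2, fun hc => hx.1 hc.symm⟩
        exact hpair u huS y hyS (fun hc => hyu hc.symm) (hadj.reachable.trans hrF)
      · have hxy : x ≠ y := by
          intro hc
          subst hc
          have hpos : dE F x ≠ 0 := by
            apply Nat.pos_iff_ne_zero.mp
            exact Finset.card_pos.mpr ⟨s(u,x), Finset.mem_filter.mpr ⟨hx.2, by simp⟩⟩
          exact hpos (hS0 x hyS)
        have := touched_of_reachable hrF hxy
        have h0 := hS0 y hyS
        omega
    have hpair' : ∀ a ∈ S', ∀ b ∈ S', a ≠ b → ¬ (GE F').Reachable a b := by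
      intro a ha b hb hab hr
      rcases Finset.mem_union.mp ha with ha1 | ha1 <;> rcases Finset.mem_union.mp hb with hb1 | hb1
      · exact hpair a (Finset.mem_of_mem_erase ha1) b (Finset.mem_of_mem_erase hb1) hab
          (hr.mono (GE_mono hF'sub))
      · exact hcross b hb1 a ha1 hr.symm
      · exact hcross a ha1 b hb1 hr
      · have hxa := (hmemN a).mp ha1
        have hxb := (hmemN b).mp hb1
        exact separation hA hxa.2 hxb.2 hab hxa.1 hxb.1 hr
    obtain ⟨c', hc'⟩ := ih F'.card hcard' F' (le_refl _) hF'nd hF'A S' γ' hpair'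
    refine ⟨fun e => if u ∈ e then κ e else c' e, ?_⟩
    intro i v
    have hsplit : cnt F (fun e => if u ∈ e then κ e else c' e) i v
        = cnt star κ i v + cnt F' c' i v := by
      conv_lhs => rw [← hunion]
      refine cnt_split hdisj _ _ _ ?_ ?_ i v
      · intro e he
        have hue : u ∈ e := (Finset.mem_filter.mp he).2
        simp [hue]
      · intro e he
        have hue : u ∉ e := (Finset.mem_filter.mp he).2
        simp [hue]
    rw [hsplit]
    by_cases hvu : v = u
    · subst hvu
      have hdF'u : dE F' v = 0 := by
        unfold dE
        rw [Finset.card_eq_zero, Finset.eq_empty_iff_forall_notMem]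
        intro e he
        rw [Finset.mem_filter] at he
        exact (Finset.mem_filter.mp he.1).2 he.2
      rw [cnt_zero_of_untouched hdF'u c' i, Nat.add_zero, hstar_u i]
      rcases hXcase with ⟨hvS, hXev, hXodd⟩ | ⟨hvS, hXo1, hXo2⟩
      · have hgv : g = γ v := hgu hvS
        by_cases hig : i = g
        · have hpc : v ∈ S ∧ i = γ v := ⟨hvS, by rw [hig, hgv]⟩
          rw [if_pos hpc, if_pos hig]
          exact hXev
        · have hnc : ¬ (v ∈ S ∧ i = γ v) := by
            rintro ⟨_, hc⟩
            rw [← hgv] at hc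
            exact hig hc
          rw [if_neg hnc, if_neg hig]
          exact hXodd
      · rw [if_neg (fun hc => hvS hc.1)]
        by_cases hig : i = g
        · rw [if_pos hig]; exact hXo1
        · rw [if_neg hig]; exact hXo2
    · by_cases hvN : v ∈ N
      · have hx := (hmemN v).mp hvN
        have hvS : v ∉ S := hNS v hvN
        rw [if_neg (fun hc => hvS hc.1)]
        rw [hstar_w i v hx.1 hx.2]
        have hIH := hc' i v
        have hvS' : v ∈ S' := Finset.mem_union_right _ hvN
        have hγ'v : γ' v = κ s(u,v) := by
          rw [hγ']
          simp only [if_pos hvN]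
        by_cases hik : κ s(u,v) = i
        · rw [if_pos hik]
          have hpc : v ∈ S' ∧ i = γ' v := ⟨hvS', by rw [hγ'v, hik]⟩
          rw [if_pos hpc] at hIH
          left
          rw [Nat.add_comm]
          exact Even.add_one hIH
        · rw [if_neg hik, Nat.zero_add]
          have hnc : ¬ (v ∈ S' ∧ i = γ' v) := by
            rintro ⟨_, hc⟩
            rw [hγ'v] at hc
            exact hik hc.symm
          rw [if_neg hnc] at hIH
          exact hIH
      · have hsnot : s(u,v) ∉ F := by
          intro hc
          exact hvN ((hmemN v).mpr ⟨hvu, hc⟩)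
        rw [hstar_o i v hvu hsnot, Nat.zero_add]
        have hIH := hc' i v
        have hvS'iff : v ∈ S' ↔ v ∈ S := by
          rw [hS', Finset.mem_union]
          constructor
          · rintro (h1 | h1)
            · exact Finset.mem_of_mem_erase h1
            · exact absurd h1 hvN
          · intro h1
            exact Or.inl (Finset.mem_erase.mpr ⟨hvu, h1⟩)
        have hγ'v : γ' v = γ v := by
          rw [hγ']
          simp only [if_neg hvN]
        by_cases hcond : v ∈ S ∧ i = γ v
        · rw [if_pos hcond]
          have hpc : v ∈ S' ∧ i = γ' v := ⟨hvS'iff.mpr hcond.1, by rw [hγ'v]; exact hcond.2⟩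
          rw [if_pos hpc] at hIH
          exact hIH
        · rw [if_neg hcond]
          have hnc : ¬ (v ∈ S' ∧ i = γ' v) := by
            rintro ⟨h1, h2⟩
            exact hcond ⟨hvS'iff.mp h1, by rw [← hγ'v]; exact h2⟩
          rw [if_neg hnc] at hIH
          exact hIH


def lift2 : Fin 2 → Fin 4 := fun j => if j = 0 then 2 else 3

lemma lift2_inj : Function.Injective lift2 := by decide

lemma lift2_ne0 : ∀ j, lift2 j ≠ 0 := by decide

lemma lift2_ne1 : ∀ j, lift2 j ≠ 1 := by decide

lemma lift2_zero : lift2 0 = 2 := by decide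

lemma lift2_one : lift2 1 = 3 := by decide

lemma fin4_cases (i : Fin 4) : i = 0 ∨ i = 1 ∨ i = 2 ∨ i = 3 := by
  revert i; decide

lemma cnt_const_self (j : Fin 4) (A : Finset (Sym2 V)) (v : V) :
    cnt A (fun _ => j) j v = dE A v := by
  unfold cnt dE
  congr 1
  apply Finset.filter_congr
  intro e _
  simp

lemma cnt_const_ne {j i : Fin 4} (h : j ≠ i) (A : Finset (Sym2 V)) (v : V) :
    cnt A (fun _ => j) i v = 0 := by
  unfold cnt
  rw [Finset.card_eq_zero, Finset.eq_empty_iff_forall_notMem]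
  intro e he
  rw [Finset.mem_filter] at he
  exact h he.2.2

lemma cnt_const (j i : Fin 4) (A : Finset (Sym2 V)) (v : V) :
    cnt A (fun _ => j) i v = if j = i then dE A v else 0 := by
  unfold cnt dE
  by_cases h : j = i
  · rw [if_pos h]
    congr 1
    apply Finset.filter_congr
    intro e _
    simp [h]
  · rw [if_neg h, Finset.card_eq_zero, Finset.eq_empty_iff_forall_notMem]
    intro e he
    rw [Finset.mem_filter] at he
    exact h he.2.2

lemma cnt_map (J : Finset (Sym2 V)) (cF : Sym2 V → Fin 2) (f : Fin 2 → Fin 4)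
    (hf : Function.Injective f) (j : Fin 2) (v : V) :
    cnt J (fun e => f (cF e)) (f j) v = cnt J cF j v := by
  unfold cnt
  congr 1
  apply Finset.filter_congr
  intro e _
  simp [hf.eq_iff]

lemma cnt_map_ne (J : Finset (Sym2 V)) (cF : Sym2 V → Fin 2) (f : Fin 2 → Fin 4)
    (i : Fin 4) (hi : ∀ j, f j ≠ i) (v : V) :
    cnt J (fun e => f (cF e)) i v = 0 := by
  unfold cnt
  rw [Finset.card_eq_zero, Finset.eq_empty_iff_forall_notMem]
  intro e he
  rw [Finset.mem_filter] at he
  exact hi (cF e) he.2.2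

/-- If `E` splits into an odd-or-zero part `A` and a forest `Fo`, then `E` has a valid
coloring avoiding color 1. -/
lemma three_color (E A Fo : Finset (Sym2 V)) (hE : Nondiag E) (hd : Disjoint A Fo)
    (hu : A ∪ Fo = E) (hA : ∀ v, OddOr0 (dE A v)) (hFA : (GE Fo).IsAcyclic) :
    ∃ c : Sym2 V → Fin 4, Valid E c ∧ ∀ e, c e ≠ 1 := by
  have hFo_sub : Fo ⊆ E := by rw [← hu]; exact Finset.subset_union_right
  obtain ⟨cF, hcF⟩ := forest_coloring Fo.card Fo (le_refl _)
    (nondiag_of_subset hFo_sub hE) hFA ∅ (fun _ => 0) (by simp)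
  have hcF' : ∀ (i : Fin 2) (v : V), OddOr0 (cnt Fo cF i v) := by
    intro i v
    have h1 := hcF i v
    rwa [if_neg (by rintro ⟨h2, _⟩; exact absurd h2 (Finset.notMem_empty v))] at h1
  refine ⟨fun e => if e ∈ Fo then lift2 (cF e) else 0, ?_, ?_⟩
  · intro i v
    have hsplit : cnt E (fun e => if e ∈ Fo then lift2 (cF e) else 0) i v
        = cnt A (fun _ => (0 : Fin 4)) i v + cnt Fo (fun e => lift2 (cF e)) i v := by
      conv_lhs => rw [← hu]
      refine cnt_split hd _ _ _ ?_ ?_ i v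
      · intro e he
        have hno : e ∉ Fo := Finset.disjoint_left.mp hd he
        simp [hno]
      · intro e he
        simp [he]
    rw [hsplit]
    rcases fin4_cases i with rfl | rfl | rfl | rfl
    · rw [cnt_const_self, cnt_map_ne Fo cF lift2 0 lift2_ne0 v, Nat.add_zero]
      exact hA v
    · rw [cnt_const_ne (by decide), cnt_map_ne Fo cF lift2 1 lift2_ne1 v, Nat.add_zero]
      exact Or.inr rfl
    · rw [cnt_const_ne (by decide), Nat.zero_add, ← lift2_zero,
        cnt_map Fo cF lift2 lift2_inj 0 v]
      exact hcF' 0 v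
    · rw [cnt_const_ne (by decide), Nat.zero_add, ← lift2_one,
        cnt_map Fo cF lift2 lift2_inj 1 v]
      exact hcF' 1 v
  · intro e
    by_cases h : e ∈ Fo
    · simp only [if_pos h]
      exact lift2_ne1 (cF e)
    · simp only [if_neg h]
      decide

lemma decomp_even (E : Finset (Sym2 V)) (hE : Nondiag E)
    (hconn : ∀ a ∈ touched E, ∀ b ∈ touched E, (GE E).Reachable a b)
    (ht : Even (touched E).card) :
    ∃ J ⊆ E, (GE J).IsAcyclic ∧ ∀ v, dE E v ≠ 0 → Odd (dE (E \ J) v) := by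
  classical
  set S : Finset V := (touched E).filter (fun v => Even (dE E v)) with hS
  have hodds_sub : Finset.univ.filter (fun v => Odd (dE E v)) ⊆ touched E := by
    intro v hv
    rw [Finset.mem_filter] at hv
    rw [mem_touched]
    intro h0
    rw [h0] at hv
    exact (Nat.not_odd_iff_even.mpr Even.zero) hv.2
  have hSdef : S = touched E \ (Finset.univ.filter (fun v => Odd (dE E v))) := by
    ext v
    rw [hS, Finset.mem_filter, Finset.mem_sdiff, Finset.mem_filter]
    constructor
    · rintro ⟨h1, h2⟩
      exact ⟨h1, fun hc => (Nat.not_odd_iff_even.mpr h2) hc.2⟩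
    · rintro ⟨h1, h2⟩
      refine ⟨h1, ?_⟩
      rcases Nat.even_or_odd (dE E v) with h | h
      · exact h
      · exact absurd h (fun hc => h2 ⟨Finset.mem_univ v, hc⟩)
  have hSeven : Even S.card := by
    rw [hSdef, Finset.card_sdiff_of_subset hodds_sub]
    rw [Nat.even_sub (Finset.card_le_card hodds_sub)]
    constructor
    · intro _; exact even_card_odds E hE
    · intro _; exact ht
  have hSconn : ∀ a ∈ S, ∀ b ∈ S, (GE E).Reachable a b := by
    intro a ha b hb
    rw [hS, Finset.mem_filter] at ha hb
    exact hconn a ha.1 b hb.1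
  obtain ⟨J, hJsub, hJA, hJd⟩ := exists_acyclic_join E S hSeven hSconn
  refine ⟨J, hJsub, hJA, ?_⟩
  intro v hv
  have hdz := dZ_sdiff hJsub v
  rw [hJd v] at hdz
  by_cases hve : Even (dE E v)
  · have hvS : v ∈ S := by
      rw [hS, Finset.mem_filter]
      exact ⟨mem_touched.mpr hv, hve⟩
    rw [if_pos hvS] at hdz
    apply odd_of_dZ_one
    show dZ (E \ J) v = 1
    rw [hdz]
    show dZ E v + 1 = 1
    rw [show dZ E v = 0 from (dZ_zero_iff _).mpr hve, zero_add]
  · have hvS : v ∉ S := by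
      rw [hS, Finset.mem_filter]
      rintro ⟨_, hc⟩
      exact hve hc
    rw [if_neg hvS, add_zero] at hdz
    apply odd_of_dZ_one
    show dZ (E \ J) v = 1
    rw [hdz]
    show ((dE E v : ℕ) : ZMod 2) = 1
    rw [cast_zmod2, if_pos (Nat.not_even_iff_odd.mp hve)]

lemma color_even (E : Finset (Sym2 V)) (hE : Nondiag E)
    (hconn : ∀ a ∈ touched E, ∀ b ∈ touched E, (GE E).Reachable a b)
    (ht : Even (touched E).card) :
    ∃ c : Sym2 V → Fin 4, Valid E c ∧ ∀ e, c e ≠ 1 := by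
  obtain ⟨J, hJsub, hJA, hJodd⟩ := decomp_even E hE hconn ht
  refine three_color E (E \ J) J hE (Finset.sdiff_disjoint) (Finset.sdiff_union_of_subset hJsub)
    ?_ hJA
  intro v
  by_cases hv : dE E v = 0
  · right
    have := dE_mono (Finset.sdiff_subset : E \ J ⊆ E) v
    omega
  · exact Or.inl (hJodd v hv)


lemma not_in_edge_of_not_in_support {G : SimpleGraph V} {a b x : V} (p : G.Walk a b)
    (hz : x ∉ p.support) : ∀ e ∈ p.edges, x ∉ e := by
  intro e he hxe
  obtain ⟨w', rfl⟩ := Sym2.mem_iff_exists.mp hxe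
  exact hz (p.fst_mem_support_of_mem_edges he)

lemma path_avoid {E : Finset (Sym2 V)} {a b x : V} (p : (GE E).Walk a b) (hp : p.IsPath)
    (hxa : x ≠ a) (hxb : x ≠ b) (hdx : dE E x ≤ 1) : x ∉ p.support := by
  intro hxs
  have hex : ∃ e ∈ p.edges, x ∈ e := by
    rcases mem_support_cases p hxs with rfl | h
    · exact absurd rfl hxa
    · exact h
  have h2 := two_incident p hp.isTrail (by rw [if_neg hxa, if_neg hxb]; ring) hex
  have hsub : p.edges.toFinset.filter (fun e => x ∈ e) ⊆ E.filter (fun e => x ∈ e) := by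
    apply Finset.filter_subset_filter
    intro e he
    exact walk_edge_mem p e (List.mem_toFinset.mp he)
  have := Finset.card_le_card hsub
  unfold dE at hdx
  omega

lemma color_leafy (E : Finset (Sym2 V)) (hE : Nondiag E)
    (hconn : ∀ a ∈ touched E, ∀ b ∈ touched E, (GE E).Reachable a b)
    (ht : ¬ Even (touched E).card)
    {z y : V} (hzy : s(z,y) ∈ E) (hdz : dE E z = 1) :
    ∃ c : Sym2 V → Fin 4, Valid E c ∧ ∀ e, c e ≠ 1 := by
  classical
  have hzyne : z ≠ y := by
    intro hc
    exact hE _ hzy (by rw [hc]; exact Sym2.isDiag_iff_proj_eq.mpr rfl)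
  have hstarz : E.filter (fun e => z ∈ e) = {s(z,y)} := by
    obtain ⟨a, ha⟩ := Finset.card_eq_one.mp hdz
    have hm : s(z,y) ∈ E.filter (fun e => z ∈ e) := Finset.mem_filter.mpr ⟨hzy, by simp⟩
    rw [ha] at hm ⊢
    rw [Finset.mem_singleton] at hm
    rw [hm]
  set E'' := E.erase s(z,y) with hE''
  have hE''sub : E'' ⊆ E := Finset.erase_subset _ _
  have hE''nd : Nondiag E'' := nondiag_of_subset hE''sub hE
  have hdz'' : dE E'' z = 0 := by
    unfold dE
    rw [hE'', Finset.filter_erase, hstarz]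
    simp
  have hztouch : z ∈ touched E := by
    rw [mem_touched, hdz]; omega
  have hytouch : y ∈ touched E := by
    rw [mem_touched]
    apply Nat.pos_iff_ne_zero.mp
    exact Finset.card_pos.mpr ⟨s(z,y), Finset.mem_filter.mpr ⟨hzy, by simp⟩⟩
  -- degrees in E'' for vertices other than z
  have hdeg'' : ∀ v, v ≠ z → v ≠ y → dE E'' v = dE E v := by
    intro v hvz hvy
    unfold dE
    rw [hE'', Finset.filter_erase]
    rw [Finset.erase_eq_of_notMem]
    intro hc
    rw [Finset.mem_filter] at hc
    rcases Sym2.mem_iff.mp hc.2 with rfl | rfl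
    · exact hvz rfl
    · exact hvy rfl
  have hdy'' : dE E'' y = dE E y - 1 := by
    unfold dE
    rw [hE'', Finset.filter_erase, Finset.card_erase_of_mem
      (Finset.mem_filter.mpr ⟨hzy, by simp⟩)]
  -- y has degree at least 2
  have hdy2 : 2 ≤ dE E y := by
    by_contra hcon
    have hdy1 : dE E y = 1 := by
      have h0 : dE E y ≠ 0 := mem_touched.mp hytouch
      omega
    -- touched E ⊆ {z, y} and hence card ≤ 2, contradiction with odd ≥ 3
    have h3 : 3 ≤ (touched E).card := by
      have h2 : ({z, y} : Finset V) ⊆ touched E := by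
        intro x hx
        rcases Finset.mem_insert.mp hx with rfl | hx
        · exact hztouch
        · rw [Finset.mem_singleton.mp hx]; exact hytouch
      have hcard2 : 2 ≤ (touched E).card := by
        have := Finset.card_le_card h2
        rw [Finset.card_pair hzyne] at this
        omega
      rcases Nat.lt_or_ge ((touched E).card) 3 with hlt | hge
      · exfalso
        have : (touched E).card = 2 := by omega
        rw [this] at ht
        exact ht (by decide)
      · exact hge
    obtain ⟨w, hw, hwzy⟩ : ∃ w ∈ touched E, w ∉ ({z, y} : Finset V) := by
      by_contra hcon2
      push_neg at hcon2
      have := Finset.card_le_card (fun x hx => hcon2 x hx)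
      rw [Finset.card_pair hzyne] at this
      omega
    have hwz : w ≠ z := by intro hc; subst hc; exact hwzy (by simp)
    have hwy : w ≠ y := by intro hc; subst hc; exact hwzy (by simp)
    obtain ⟨p0⟩ := hconn z hztouch w hw
    set p := p0.bypass with hp
    have hpath : p.IsPath := p0.bypass_isPath
    have hyavoid : y ∉ p.support := path_avoid p hpath (fun hc => hzyne hc.symm)
      (fun hc => hwy hc.symm) (le_of_eq hdy1)
    have hzedge : ∃ e ∈ p.edges, z ∈ e := by
      by_contra hcon2
      push_neg at hcon2
      have hcard0 : (p.edges.toFinset.filter (fun e => z ∈ e)).card = 0 := by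
        rw [Finset.card_eq_zero, Finset.eq_empty_iff_forall_notMem]
        intro e he
        rw [Finset.mem_filter, List.mem_toFinset] at he
        exact hcon2 e he.1 he.2
      have hpar := trail_parity (x := z) p hpath.isTrail
      rw [hcard0, if_pos rfl, if_neg (fun hc => hwz hc.symm)] at hpar
      rw [show ((0:ℕ) : ZMod 2) = 0 from rfl] at hpar
      exact absurd hpar (by decide)
    obtain ⟨e, he, hze⟩ := hzedge
    have heE : e ∈ E := walk_edge_mem p e he
    have hestar : e ∈ E.filter (fun ee => z ∈ ee) := Finset.mem_filter.mpr ⟨heE, hze⟩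
    rw [hstarz, Finset.mem_singleton] at hestar
    subst hestar
    exact hyavoid (SimpleGraph.Walk.snd_mem_support_of_mem_edges p he)
  -- touched E'' = (touched E).erase z
  have htouch'' : touched E'' = (touched E).erase z := by
    ext v
    rw [mem_touched, Finset.mem_erase, mem_touched]
    constructor
    · intro h1
      have hvz : v ≠ z := by
        intro hc; subst hc; exact h1 hdz''
      refine ⟨hvz, ?_⟩
      intro hc
      have := dE_mono hE''sub v
      omega
    · rintro ⟨hvz, h1⟩
      by_cases hvy : v = y
      · subst hvy
        omega
      · rw [hdeg'' v hvz hvy]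
        exact h1
  have ht'' : Even (touched E'').card := by
    rw [htouch'', Finset.card_erase_of_mem hztouch]
    have hpos : 0 < (touched E).card := Finset.card_pos.mpr ⟨z, hztouch⟩
    rcases Nat.even_or_odd ((touched E).card) with h | h
    · exact absurd h ht
    · obtain ⟨k, hk⟩ := h
      refine ⟨k, by omega⟩
  have hconn'' : ∀ a ∈ touched E'', ∀ b ∈ touched E'', (GE E'').Reachable a b := by
    intro a ha b hb
    rw [htouch'', Finset.mem_erase] at ha hb
    obtain ⟨p0⟩ := hconn a ha.2 b hb.2
    set p := p0.bypass with hp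
    have hpath : p.IsPath := p0.bypass_isPath
    have hzavoid : z ∉ p.support := path_avoid p hpath (fun hc => ha.1 hc.symm)
      (fun hc => hb.1 hc.symm) (by omega)
    have htr : ∀ e ∈ p.edges, e ∈ (GE E'').edgeSet := by
      intro e he
      have h1 := p.edges_subset_edgeSet he
      rw [GE, SimpleGraph.edgeSet_fromEdgeSet] at h1 ⊢
      refine ⟨?_, h1.2⟩
      have heE : e ∈ E := walk_edge_mem p e he
      have hze : z ∉ e := not_in_edge_of_not_in_support p hzavoid e he
      have : e ≠ s(z,y) := by
        intro hc; subst hc; exact hze (by simp)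
      rw [hE'']
      exact_mod_cast Finset.mem_erase.mpr ⟨this, heE⟩
    exact ⟨p.transfer (GE E'') htr⟩
  obtain ⟨J, hJsub, hJA, hJodd⟩ := decomp_even E'' hE''nd hconn'' ht''
  -- the forest with the pendant edge
  set Fo := insert s(z,y) J with hFo
  have hJz : ∀ e ∈ J, z ∉ e := by
    intro e he hze
    have : e ∈ E''.filter (fun ee => z ∈ ee) := Finset.mem_filter.mpr ⟨hJsub he, hze⟩
    unfold dE at hdz''
    rw [Finset.card_eq_zero] at hdz''
    rw [hdz''] at this
    exact absurd this (Finset.notMem_empty e)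
  have hFoA : (GE Fo).IsAcyclic := by
    intro x c hc
    have hCsub : ∀ e ∈ c.edges, e ∈ Fo := fun e he => walk_edge_mem c e he
    have hzynot : s(z,y) ∉ c.edges := by
      intro hmem
      have hzs : z ∈ c.support := c.fst_mem_support_of_mem_edges hmem
      have h2 := two_incident (x := z) c hc.isTrail (by split_ifs <;> decide)
        ⟨s(z,y), hmem, by rw [Sym2.mem_iff]; left; rfl⟩
      have hsub2 : c.edges.toFinset.filter (fun e => z ∈ e) ⊆ {s(z,y)} := by
        intro e he
        rw [Finset.mem_filter, List.mem_toFinset] at he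
        rcases Finset.mem_insert.mp (hCsub e he.1) with h1 | h1
        · rw [Finset.mem_singleton]; exact h1
        · exact absurd he.2 (hJz e h1)
      have := Finset.card_le_card hsub2
      rw [Finset.card_singleton] at this
      omega
    have htr : ∀ e ∈ c.edges, e ∈ (GE J).edgeSet := by
      intro e he
      have h1 := c.edges_subset_edgeSet he
      rw [GE, SimpleGraph.edgeSet_fromEdgeSet] at h1 ⊢
      refine ⟨?_, h1.2⟩
      rcases Finset.mem_insert.mp (hCsub e he) with h2 | h2
      · exact absurd (h2 ▸ he) hzynot
      · exact_mod_cast h2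
    exact hJA (c.transfer (GE J) htr) (hc.transfer htr)
  have hd : Disjoint (E'' \ J) Fo := by
    refine Finset.disjoint_left.mpr ?_
    intro e he1 he2
    rw [Finset.mem_sdiff] at he1
    rcases Finset.mem_insert.mp he2 with h1 | h1
    · subst h1
      exact (Finset.ne_of_mem_erase (hE'' ▸ he1.1)) rfl
    · exact he1.2 h1
  have hu : (E'' \ J) ∪ Fo = E := by
    rw [hFo, Finset.union_insert, Finset.sdiff_union_of_subset hJsub, hE'',
      Finset.insert_erase hzy]
  refine three_color E (E'' \ J) Fo hE hd hu ?_ hFoA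
  intro v
  by_cases hv : v ∈ touched E''
  · exact Or.inl (hJodd v (mem_touched.mp hv))
  · right
    rw [mem_touched] at hv
    have hv0 : dE E'' v = 0 := of_not_not hv
    have := dE_mono (Finset.sdiff_subset : E'' \ J ⊆ E'') v
    omega


lemma reach_endpoints {E : Finset (Sym2 V)} {a : V} {e : Sym2 V} (he : e ∈ E) (ha : a ∈ e) :
    ∀ x ∈ e, (GE E).Reachable a x := by
  intro x hx
  by_cases hxa : x = a
  · subst hxa; exact SimpleGraph.Reachable.refl x
  · obtain ⟨w', rfl⟩ := Sym2.mem_iff_exists.mp ha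
    rcases Sym2.mem_iff.mp hx with rfl | rfl
    · exact absurd rfl hxa
    · exact (GE_adj.mpr ⟨he, fun hc => hxa hc.symm⟩).reachable

lemma oddor0_of_le_one {m : ℕ} (h : m ≤ 1) : OddOr0 m := by
  interval_cases m
  · exact Or.inr rfl
  · exact Or.inl odd_one

lemma cnt_avoid {A : Finset (Sym2 V)} {c : Sym2 V → Fin 4} (hc : ∀ e, c e ≠ 1) (v : V) :
    cnt A c 1 v = 0 := by
  unfold cnt
  rw [Finset.card_eq_zero, Finset.eq_empty_iff_forall_notMem]
  intro e he
  rw [Finset.mem_filter] at he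
  exact hc e he.2.2

lemma add_star (E D : Finset (Sym2 V)) (hsub : D ⊆ E) (hDodd : ∀ w, OddOr0 (dE D w))
    (c' : Sym2 V → Fin 4) (hc' : Valid (E \ D) c') (hc'1 : ∀ e, c' e ≠ 1) :
    ∃ c, Valid E c := by
  classical
  refine ⟨fun e => if e ∈ D then 1 else c' e, ?_⟩
  intro i v
  have hu : D ∪ (E \ D) = E := Finset.union_sdiff_of_subset hsub
  have hd : Disjoint D (E \ D) := Finset.disjoint_sdiff
  have hsplit : cnt E (fun e => if e ∈ D then 1 else c' e) i v
      = cnt D (fun _ => (1 : Fin 4)) i v + cnt (E \ D) c' i v := by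
    conv_lhs => rw [← hu]
    refine cnt_split hd _ _ _ ?_ ?_ i v
    · intro e he; simp [he]
    · intro e he
      have : e ∉ D := (Finset.mem_sdiff.mp he).2
      simp [this]
  rw [hsplit]
  by_cases hi : i = 1
  · subst hi
    rw [cnt_const_self, cnt_avoid hc'1, Nat.add_zero]
    exact hDodd v
  · rw [cnt_const_ne (fun hc => hi hc.symm), Nat.zero_add]
    exact hc' i v

lemma dE_drop {E D : Finset (Sym2 V)} {v w : V} (hw : w ≠ v)
    (hD : D ⊆ E.filter (fun e => v ∈ e)) : dE E w ≤ dE (E \ D) w + 1 := by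
  have hsub : E.filter (fun e => w ∈ e) ⊆ ((E \ D).filter (fun e => w ∈ e)) ∪ {s(v,w)} := by
    intro e he
    rw [Finset.mem_filter] at he
    by_cases heD : e ∈ D
    · have h2 := hD heD
      rw [Finset.mem_filter] at h2
      obtain ⟨z, rfl⟩ := Sym2.mem_iff_exists.mp h2.2
      rcases Sym2.mem_iff.mp he.2 with rfl | rfl
      · exact absurd rfl hw
      · exact Finset.mem_union_right _ (by simp)
    · exact Finset.mem_union_left _ (Finset.mem_filter.mpr ⟨Finset.mem_sdiff.mpr ⟨he.1, heD⟩, he.2⟩)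
  have h1 := Finset.card_le_card hsub
  have h2 := Finset.card_union_le ((E \ D).filter (fun e => w ∈ e)) ({s(v,w)} : Finset (Sym2 V))
  have h3 : ({s(v,w)} : Finset (Sym2 V)).card = 1 := Finset.card_singleton _
  unfold dE
  omega


theorem master : ∀ (n : ℕ) (E : Finset (Sym2 V)), E.card ≤ n → Nondiag E →
    ∃ c : Sym2 V → Fin 4, Valid E c := by
  intro n
  induction n using Nat.strong_induction_on with
  | _ n ih =>
  intro E hcard hE
  classical
  rcases E.eq_empty_or_nonempty with rfl | hEne
  · exact ⟨fun _ => 0, fun i v => Or.inr (by simp [cnt])⟩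
  by_cases hsplit : ∃ E1 : Finset (Sym2 V), E1 ⊆ E ∧ E1.Nonempty ∧ E1 ≠ E ∧
      ∀ v, ¬(dE E1 v ≠ 0 ∧ dE (E \ E1) v ≠ 0)
  · -- glue two vertex-disjoint parts
    obtain ⟨E1, hsub, hne1, hneq, hdisjv⟩ := hsplit
    have hcard1 : E1.card < n := by
      have h1 : E1.card < E.card := Finset.card_lt_card (lt_of_le_of_ne hsub hneq)
      omega
    have hcard2 : (E \ E1).card < n := by
      have h2 : (E \ E1).card < E.card := Finset.card_lt_card (Finset.sdiff_ssubset hsub hne1)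
      omega
    obtain ⟨c1, hc1⟩ := ih E1.card hcard1 E1 (le_refl _) (nondiag_of_subset hsub hE)
    obtain ⟨c2, hc2⟩ := ih (E \ E1).card hcard2 (E \ E1) (le_refl _)
      (nondiag_of_subset Finset.sdiff_subset hE)
    refine ⟨fun e => if e ∈ E1 then c1 e else c2 e, ?_⟩
    intro i v
    have hu : E1 ∪ (E \ E1) = E := Finset.union_sdiff_of_subset hsub
    have hd : Disjoint E1 (E \ E1) := Finset.disjoint_sdiff
    have hsplitc : cnt E (fun e => if e ∈ E1 then c1 e else c2 e) i v
        = cnt E1 c1 i v + cnt (E \ E1) c2 i v := by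
      conv_lhs => rw [← hu]
      refine cnt_split hd _ _ _ ?_ ?_ i v
      · intro e he; simp [he]
      · intro e he
        have : e ∉ E1 := (Finset.mem_sdiff.mp he).2
        simp [this]
    rw [hsplitc]
    by_cases hv1 : dE E1 v = 0
    · rw [cnt_zero_of_untouched hv1 c1 i, Nat.zero_add]
      exact hc2 i v
    · have hv2 : dE (E \ E1) v = 0 := by
        by_contra hcc
        exact hdisjv v ⟨hv1, hcc⟩
      rw [cnt_zero_of_untouched hv2 c2 i, Nat.add_zero]
      exact hc1 i v
  · -- connected on touched vertices
    push_neg at hsplit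
    have hconn : ∀ a ∈ touched E, ∀ b ∈ touched E, (GE E).Reachable a b := by
      intro a ha b hb
      by_contra hreach
      set E1 := E.filter (fun e => ∀ x ∈ e, (GE E).Reachable a x) with hE1
      have hsubE1 : E1 ⊆ E := Finset.filter_subset _ _
      have hne1 : E1.Nonempty := by
        rw [mem_touched] at ha
        obtain ⟨e, he⟩ : (E.filter (fun e => a ∈ e)).Nonempty := by
          rw [← Finset.card_pos]
          have : dE E a = (E.filter (fun e => a ∈ e)).card := rfl
          omega
        rw [Finset.mem_filter] at he
        exact ⟨e, Finset.mem_filter.mpr ⟨he.1, reach_endpoints he.1 he.2⟩⟩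
      have hneqE1 : E1 ≠ E := by
        intro hc
        rw [mem_touched] at hb
        obtain ⟨eb, heb⟩ : (E.filter (fun e => b ∈ e)).Nonempty := by
          rw [← Finset.card_pos]
          have : dE E b = (E.filter (fun e => b ∈ e)).card := rfl
          omega
        rw [Finset.mem_filter] at heb
        have hebE1 : eb ∈ E1 := by rw [hc]; exact heb.1
        rw [hE1, Finset.mem_filter] at hebE1
        exact hreach (hebE1.2 b heb.2)
      obtain ⟨v, hv1, hv2⟩ := hsplit E1 hsubE1 hne1 hneqE1
      obtain ⟨e1, he1⟩ : (E1.filter (fun e => v ∈ e)).Nonempty := by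
        rw [← Finset.card_pos]
        have : dE E1 v = (E1.filter (fun e => v ∈ e)).card := rfl
        omega
      obtain ⟨e2, he2⟩ : ((E \ E1).filter (fun e => v ∈ e)).Nonempty := by
        rw [← Finset.card_pos]
        have : dE (E \ E1) v = ((E \ E1).filter (fun e => v ∈ e)).card := rfl
        omega
      rw [Finset.mem_filter] at he1 he2
      have hva : (GE E).Reachable a v := by
        have h3 : e1 ∈ E1 := he1.1
        rw [hE1, Finset.mem_filter] at h3
        exact h3.2 v he1.2
      have he2E1 : e2 ∈ E1 := by
        rw [hE1, Finset.mem_filter]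
        have he2E : e2 ∈ E := (Finset.mem_sdiff.mp he2.1).1
        exact ⟨he2E, fun x hx => hva.trans (reach_endpoints he2E he2.2 x hx)⟩
      exact (Finset.mem_sdiff.mp he2.1).2 he2E1
    by_cases ht : Even (touched E).card
    · obtain ⟨c, hc, _⟩ := color_even E hE hconn ht
      exact ⟨c, hc⟩
    · by_cases hleaf : ∃ z, dE E z = 1
      · obtain ⟨z, hz⟩ := hleaf
        obtain ⟨e0, he0⟩ : (E.filter (fun e => z ∈ e)).Nonempty := by
          rw [← Finset.card_pos]
          have : dE E z = (E.filter (fun e => z ∈ e)).card := rfl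
          omega
        rw [Finset.mem_filter] at he0
        obtain ⟨y, rfl⟩ := Sym2.mem_iff_exists.mp he0.2
        obtain ⟨c, hc, _⟩ := color_leafy E hE hconn ht he0.1 hz
        exact ⟨c, hc⟩
      · push_neg at hleaf
        obtain ⟨T, hTsub, hTA, hTreach⟩ := exists_spanning_forest E hE
        have hTnd : Nondiag T := nondiag_of_subset hTsub hE
        have hTne : T.Nonempty := by
          obtain ⟨e, heE⟩ := hEne
          induction e using Sym2.ind with
          | _ x y' =>
            have hxy : x ≠ y' := by
              intro hc
              exact hE _ heE (by rw [hc]; exact Sym2.isDiag_iff_proj_eq.mpr rfl)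
            have hr : (GE T).Reachable x y' :=
              hTreach x y' (GE_adj.mpr ⟨heE, hxy⟩).reachable
            obtain ⟨p⟩ := hr
            cases p with
            | nil => exact absurd rfl hxy
            | cons h q => exact ⟨_, (GE_adj.mp h).1⟩
        obtain ⟨v, hvT⟩ := exists_leaf hTnd hTne hTA
        obtain ⟨estar, hestar⟩ : (T.filter (fun e => v ∈ e)).Nonempty := by
          rw [← Finset.card_pos]
          have : dE T v = (T.filter (fun e => v ∈ e)).card := rfl
          omega
        rw [Finset.mem_filter] at hestar
        obtain ⟨ys, rfl⟩ := Sym2.mem_iff_exists.mp hestar.2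
        have hstarT : T.filter (fun e => v ∈ e) = {s(v, ys)} := by
          obtain ⟨a, ha⟩ := Finset.card_eq_one.mp hvT
          have hm : s(v,ys) ∈ T.filter (fun e => v ∈ e) :=
            Finset.mem_filter.mpr ⟨hestar.1, by simp⟩
          rw [ha] at hm ⊢
          rw [Finset.mem_singleton] at hm
          rw [hm]
        have hvys : v ≠ ys := by
          intro hc
          exact hTnd _ hestar.1 (by rw [hc]; exact Sym2.isDiag_iff_proj_eq.mpr rfl)
        have hvE0 : dE E v ≠ 0 := by
          have h1 : s(v,ys) ∈ E := hTsub hestar.1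
          have : 0 < dE E v :=
            Finset.card_pos.mpr ⟨s(v,ys), Finset.mem_filter.mpr ⟨h1, by simp⟩⟩
          omega
        have hvtouch : v ∈ touched E := mem_touched.mpr hvE0
        have hdE2 : ∀ w, dE E w ≠ 0 → 2 ≤ dE E w := by
          intro w hw
          have := hleaf w
          omega
        -- the path-in-T avoidance principle
        have hTpath : ∀ a b, a ∈ touched E → b ∈ touched E → a ≠ v → b ≠ v →
            ∃ p : (GE T).Walk a b, p.IsPath ∧ v ∉ p.support := by
          intro a b haT hbT hav hbv
          obtain ⟨p0⟩ := hTreach a b (hconn a haT b hbT)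
          refine ⟨p0.bypass, p0.bypass_isPath, ?_⟩
          exact path_avoid p0.bypass p0.bypass_isPath (fun hc => hav hc.symm)
            (fun hc => hbv hc.symm) (le_of_eq hvT)
        rcases Nat.even_or_odd (dE E v) with hvev | hvod
        · -- even degree : leafify v
          set D := E.filter (fun e => v ∈ e ∧ e ≠ s(v, ys)) with hD
          have hDsub : D ⊆ E := Finset.filter_subset _ _
          have hDsubstar : D ⊆ E.filter (fun e => v ∈ e) := by
            intro e he
            rw [hD, Finset.mem_filter] at he
            exact Finset.mem_filter.mpr ⟨he.1, he.2.1⟩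
          have hDstar : D = (E.filter (fun e => v ∈ e)).erase s(v,ys) := by
            ext e
            rw [hD, Finset.mem_filter, Finset.mem_erase, Finset.mem_filter]
            tauto
          have hDcard : D.card = dE E v - 1 := by
            rw [hDstar, Finset.card_erase_of_mem
              (Finset.mem_filter.mpr ⟨hTsub hestar.1, by simp⟩)]
            rfl
          have hDodd : ∀ w, OddOr0 (dE D w) := by
            intro w
            by_cases hwv : w = v
            · left
              have hdDv : dE D v = D.card := by
                unfold dE
                congr 1
                apply Finset.filter_true_of_mem
                intro e he
                rw [hD, Finset.mem_filter] at he
                exact he.2.1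
              rw [hwv, hdDv, hDcard]
              exact Nat.Even.sub_odd (by have := hdE2 v hvE0; omega) hvev odd_one
            · apply oddor0_of_le_one
              have hsub2 : D.filter (fun e => w ∈ e) ⊆
                  (E.filter (fun e => v ∈ e)).filter (fun e => w ∈ e) :=
                Finset.filter_subset_filter _ hDsubstar
              have h1 := Finset.card_le_card hsub2
              rw [star_filter_vertex v w hwv] at h1
              unfold dE
              by_cases hm : s(v,w) ∈ E
              · rw [if_pos hm, Finset.card_singleton] at h1; omega
              · rw [if_neg hm, Finset.card_empty] at h1; omega
          -- E' := E \ D has v as a leaf with edge s(v,ys)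
          set E' := E \ D with hE'
          have hE'nd : Nondiag E' := nondiag_of_subset Finset.sdiff_subset hE
          have hstarE' : E'.filter (fun e => v ∈ e) = {s(v,ys)} := by
            ext e
            rw [Finset.mem_filter, hE', Finset.mem_sdiff, hD, Finset.mem_filter,
              Finset.mem_singleton]
            constructor
            · rintro ⟨⟨heE, hnd⟩, hve⟩
              by_contra hne
              exact hnd ⟨heE, hve, hne⟩
            · rintro rfl
              refine ⟨⟨hTsub hestar.1, ?_⟩, by simp⟩
              rintro ⟨_, _, hc⟩
              exact hc rfl
          have hdE'v : dE E' v = 1 := by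
            unfold dE
            rw [hstarE', Finset.card_singleton]
          have hsvysE' : s(v,ys) ∈ E' := by
            have : s(v,ys) ∈ E'.filter (fun e => v ∈ e) := by
              rw [hstarE']; simp
            exact (Finset.mem_filter.mp this).1
          have hTE' : T ⊆ E' := by
            intro e he
            rw [hE', Finset.mem_sdiff]
            refine ⟨hTsub he, ?_⟩
            rw [hD, Finset.mem_filter]
            rintro ⟨_, hve, hne⟩
            have : e ∈ T.filter (fun ee => v ∈ ee) := Finset.mem_filter.mpr ⟨he, hve⟩
            rw [hstarT, Finset.mem_singleton] at this
            exact hne this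
          have htouchE' : touched E' = touched E := by
            ext w
            rw [mem_touched, mem_touched]
            constructor
            · intro h1
              have := dE_mono (Finset.sdiff_subset : E \ D ⊆ E) w
              intro hc
              rw [hE'] at h1
              omega
            · intro h1
              by_cases hwv : w = v
              · subst hwv
                rw [hdE'v]; omega
              · have := dE_drop hwv hDsubstar
                have h2 := hdE2 w h1
                rw [← hE'] at this
                omega
          have hconn' : ∀ a ∈ touched E', ∀ b ∈ touched E', (GE E').Reachable a b := by
            intro a ha b hb
            rw [htouchE'] at ha hb
            exact (hTreach a b (hconn a ha b hb)).mono (GE_mono hTE')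
          have ht' : ¬ Even (touched E').card := by
            rw [htouchE']; exact ht
          obtain ⟨c', hc', hc'1⟩ := color_leafy E' hE'nd hconn' ht' hsvysE' hdE'v
          rw [hE'] at hc'
          exact add_star E D hDsub hDodd c' hc' hc'1
        · -- odd degree : remove the whole star
          set D := E.filter (fun e => v ∈ e) with hD
          have hDsub : D ⊆ E := Finset.filter_subset _ _
          have hDodd : ∀ w, OddOr0 (dE D w) := by
            intro w
            by_cases hwv : w = v
            · left
              have hdDv : dE D v = D.card := by
                unfold dE
                congr 1
                apply Finset.filter_true_of_mem
                intro e he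
                rw [hD, Finset.mem_filter] at he
                exact he.2
              rw [hwv, hdDv]
              have hDcard2 : D.card = dE E v := by rw [hD]; rfl
              rw [hDcard2]
              exact hvod
            · apply oddor0_of_le_one
              have h1 : D.filter (fun e => w ∈ e) =
                  if s(v,w) ∈ E then {s(v,w)} else ∅ := star_filter_vertex v w hwv
              unfold dE
              rw [h1]
              by_cases hm : s(v,w) ∈ E
              · rw [if_pos hm, Finset.card_singleton]
              · rw [if_neg hm, Finset.card_empty]; omega
          set E' := E \ D with hE'
          have hE'nd : Nondiag E' := nondiag_of_subset Finset.sdiff_subset hE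
          have hdE'v : dE E' v = 0 := by
            unfold dE
            rw [Finset.card_eq_zero, Finset.eq_empty_iff_forall_notMem]
            intro e he
            rw [Finset.mem_filter, hE', Finset.mem_sdiff, hD, Finset.mem_filter] at he
            exact he.1.2 ⟨he.1.1, he.2⟩
          have htouchE' : touched E' = (touched E).erase v := by
            ext w
            rw [mem_touched, Finset.mem_erase, mem_touched]
            constructor
            · intro h1
              have hwv : w ≠ v := by
                intro hc; subst hc; exact h1 hdE'v
              have := dE_mono (Finset.sdiff_subset : E \ D ⊆ E) w
              rw [← hE'] at this
              exact ⟨hwv, by intro hc; omega⟩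
            · rintro ⟨hwv, h1⟩
              have hDs : D ⊆ E.filter (fun e => v ∈ e) := by
                rw [hD]
              have hdrop := dE_drop hwv hDs
              have h2 := hdE2 w h1
              rw [← hE'] at hdrop
              omega
          have hconn' : ∀ a ∈ touched E', ∀ b ∈ touched E', (GE E').Reachable a b := by
            intro a ha b hb
            rw [htouchE', Finset.mem_erase] at ha hb
            obtain ⟨p, hppath, hpavoid⟩ := hTpath a b ha.2 hb.2 ha.1 hb.1
            have htr : ∀ e ∈ p.edges, e ∈ (GE E').edgeSet := by
              intro e he
              have h1 := p.edges_subset_edgeSet he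
              rw [GE, SimpleGraph.edgeSet_fromEdgeSet] at h1 ⊢
              refine ⟨?_, h1.2⟩
              have heT : e ∈ T := walk_edge_mem p e he
              have hve : v ∉ e := not_in_edge_of_not_in_support p hpavoid e he
              rw [hE']
              refine ?_
              have : e ∈ E \ D := by
                rw [Finset.mem_sdiff, hD, Finset.mem_filter]
                exact ⟨hTsub heT, fun hc => hve hc.2⟩
              exact_mod_cast this
            exact ⟨p.transfer (GE E') htr⟩
          have ht' : Even (touched E').card := by
            rw [htouchE', Finset.card_erase_of_mem hvtouch]
            rcases Nat.even_or_odd ((touched E).card) with h | h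
            · exact absurd h ht
            · obtain ⟨k, hk⟩ := h
              have hpos : 0 < (touched E).card := Finset.card_pos.mpr ⟨v, hvtouch⟩
              exact ⟨k, by omega⟩
          obtain ⟨c', hc', hc'1⟩ := color_even E' hE'nd hconn' ht'
          rw [hE'] at hc'
          exact add_star E D hDsub hDodd c' hc' hc'1

end OddEdge

/-- An odd edge coloring of a simple graph `G` with colors in `Fin k`:
for each color `i` and vertex `v`, the number of edges of `G` incident to `v`
that receive color `i` is odd or zero. -/
def IsOddEdgeColoring {V : Type*} [Fintype V] [DecidableEq V]
    (G : SimpleGraph V) [DecidableRel G.Adj] {k : ℕ} (c : Sym2 V → Fin k) : Prop :=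
  ∀ (i : Fin k) (v : V),
    Odd ((G.edgeFinset.filter (fun e => v ∈ e ∧ c e = i)).card) ∨
      (G.edgeFinset.filter (fun e => v ∈ e ∧ c e = i)).card = 0

/-- Every finite simple graph admits an odd edge coloring with at most 4 colors. -/
theorem oddChromaticIndex_le_four {V : Type*} [Fintype V] [DecidableEq V]
    (G : SimpleGraph V) [DecidableRel G.Adj] :
    ∃ c : Sym2 V → Fin 4, IsOddEdgeColoring G c := by
  obtain ⟨c, hc⟩ := OddEdge.master G.edgeFinset.card G.edgeFinset (le_refl _)
    (fun e he => G.not_isDiag_of_mem_edgeSet (SimpleGraph.mem_edgeFinset.mp he))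
  exact ⟨c, fun i v => hc i v⟩
end

section
/- Every finite tree T admits an odd edge coloring with at most 2 colors; that is, χ'_o(T) ≤ 2 for every finite tree T. -/
set_option linter.unusedSectionVars false

open SimpleGraph Finset

section OddAux
variable {V : Type*} [Fintype V] [DecidableEq V]

def oddCnt (E : Finset (Sym2 V)) (c : Sym2 V → Fin 2) (i : Fin 2) (v : V) : ℕ :=
  (E.filter (fun e => v ∈ e ∧ c e = i)).card

def OkAt (E : Finset (Sym2 V)) (c : Sym2 V → Fin 2) (v : V) : Prop :=
  ∀ i : Fin 2, Odd (oddCnt E c i v) ∨ oddCnt E c i v = 0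

def PendAt (E : Finset (Sym2 V)) (c : Sym2 V → Fin 2) (w : V) (a : Fin 2) : Prop :=
  Even (oddCnt E c a w) ∧ (Odd (oddCnt E c (a + 1) w) ∨ oddCnt E c (a + 1) w = 0)

lemma oddCnt_congr {E F : Finset (Sym2 V)} {c c' : Sym2 V → Fin 2} {i : Fin 2} {v : V}
    (h : ∀ e, (e ∈ E ∧ v ∈ e ∧ c e = i) ↔ (e ∈ F ∧ v ∈ e ∧ c' e = i)) :
    oddCnt E c i v = oddCnt F c' i v := by
  unfold oddCnt
  congr 1
  ext e
  simp only [Finset.mem_filter]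
  exact h e

lemma fin2_cases' (i a : Fin 2) : i = a ∨ i = a + 1 := by omega

lemma fin2_succ_ne (b : Fin 2) : b + 1 ≠ b := by omega

lemma walk_notMem_support {H : SimpleGraph V} {z : V}
    (hz : ∀ a b, H.Adj a b → a ≠ z) :
    ∀ {u v : V} (p : H.Walk u v), u ≠ z → v ≠ z → z ∉ p.support := by
  intro u v p
  induction p with
  | nil => intro hu _; simpa using fun h => hu h.symm
  | cons h q ih =>
    intro hu hv
    simp only [SimpleGraph.Walk.support_cons, List.mem_cons]
    rintro (rfl | hmem)
    · exact hu rfl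
    · exact ih (fun h' => hz _ _ h.symm h') hv hmem

lemma uniq_nbr {T H : SimpleGraph V} (hT : T.IsAcyclic)
    (hle : H ≤ T) {z : V} (hz : ∀ a b, H.Adj a b → a ≠ z)
    {x x' : V} (hx : T.Adj z x) (hx' : T.Adj z x') (h : H.Reachable x x') : x = x' := by
  by_contra hne
  obtain ⟨p⟩ := h
  have hzp : z ∉ p.support :=
    walk_notMem_support hz p (hx.ne') (hx'.ne')
  have hzq : z ∉ (p.mapLe hle).support := by
    have : (p.mapLe hle).support = p.support := by
      simp only [SimpleGraph.Walk.mapLe, SimpleGraph.Walk.support_map]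
      exact List.map_id _
    rwa [this]
  have hzq' : z ∉ ((p.mapLe hle).toPath : T.Walk x x').support :=
    fun hmem => hzq (SimpleGraph.Walk.support_toPath_subset _ hmem)
  have hP2 : (SimpleGraph.Walk.cons hx.symm (SimpleGraph.Walk.cons hx' SimpleGraph.Walk.nil) :
      T.Walk x x').IsPath := by
    simp [SimpleGraph.Walk.isPath_def, hx.ne, hx.ne', hx'.ne, hx'.ne', hne]
  have := (SimpleGraph.isAcyclic_iff_path_unique.mp hT) ⟨_, hP2⟩ ((p.mapLe hle).toPath)
  apply hzq'
  rw [← this]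
  simp

lemma star_step {T : SimpleGraph V} (hT : T.IsAcyclic) {n : ℕ}
    (IH : ∀ E : Finset (Sym2 V), E.card ≤ n → ↑E ⊆ T.edgeSet →
      ∀ (w : V) (a : Fin 2) (p : Bool), ∃ c : Sym2 V → Fin 2,
        (∀ v, v ≠ w → OkAt E c v) ∧ (if p then PendAt E c w a else OkAt E c w))
    {E : Finset (Sym2 V)} (hcard : E.card ≤ n + 1) (hsub : ↑E ⊆ T.edgeSet)
    (z : V) (hS : (E.filter (fun e => z ∈ e)).Nonempty) (b₀ : Fin 2) (flp : Bool) :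
    ∃ c : Sym2 V → Fin 2, (∀ v, v ≠ z → OkAt E c v) ∧
      oddCnt E c b₀ z = (E.filter (fun e => z ∈ e)).card - flp.toNat ∧
      oddCnt E c (b₀ + 1) z = flp.toNat := by
  classical
  set S : Finset (Sym2 V) := E.filter (fun e => z ∈ e) with hSdef
  set E' : Finset (Sym2 V) := E.filter (fun e => z ∉ e) with hE'def
  obtain ⟨e₀, he₀⟩ := hS
  have hE'subE : E' ⊆ E := Finset.filter_subset _ _
  have hSsubE : S ⊆ E := Finset.filter_subset _ _
  have hzE' : ∀ e ∈ E', z ∉ e := fun e he => (Finset.mem_filter.1 he).2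
  have hE'card : E'.card ≤ n := by
    have h1 : E' ⊆ E.erase e₀ := by
      intro e he
      refine Finset.mem_erase.2 ⟨?_, hE'subE he⟩
      rintro rfl
      exact hzE' _ he (Finset.mem_filter.1 he₀).2
    calc E'.card ≤ (E.erase e₀).card := Finset.card_le_card h1
      _ = E.card - 1 := Finset.card_erase_of_mem (hSsubE he₀)
      _ ≤ n := by omega
  have hE'sub : ↑E' ⊆ T.edgeSet := fun e he => hsub (hE'subE he)
  set H : SimpleGraph V := SimpleGraph.fromEdgeSet (↑E' : Set (Sym2 V)) with hHdef
  have hle : H ≤ T := by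
    intro a b hab
    rw [hHdef, SimpleGraph.fromEdgeSet_adj] at hab
    exact hE'sub hab.1
  have hHz : ∀ a b, H.Adj a b → a ≠ z := by
    intro a b hab
    rw [hHdef, SimpleGraph.fromEdgeSet_adj] at hab
    rintro rfl
    exact hzE' _ hab.1 (Sym2.mem_mk_left _ _)
  set oth : Sym2 V → V := fun e => if h : z ∈ e then Sym2.Mem.other' h else z with hothdef
  have hoth : ∀ e ∈ S, s(z, oth e) = e := by
    intro e he
    have hz : z ∈ e := (Finset.mem_filter.1 he).2
    simp only [hothdef, dif_pos hz]
    exact Sym2.other_spec' hz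
  have hmem_oth : ∀ e ∈ S, ∀ v ∈ e, v ≠ z → v = oth e := by
    intro e he v hv hvz
    rw [← hoth e he, Sym2.mem_iff] at hv
    tauto
  set P : V → Prop := fun x => s(z, x) ∈ E ∧ x ≠ z with hPdef
  have hPadj : ∀ x, P x → T.Adj z x := fun x hx => hsub hx.1
  set Ex : V → Finset (Sym2 V) := fun x => E'.filter (fun e => ∃ u ∈ e, H.Reachable x u)
    with hExdef
  have hExsub : ∀ x, Ex x ⊆ E' := fun x => Finset.filter_subset _ _
  have edge_reach : ∀ e ∈ E', ∀ u ∈ e, ∀ u' ∈ e, H.Reachable u u' := by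
    intro e he
    obtain ⟨⟨p, q⟩, rfl⟩ := e.exists_rep
    have hpq : p ≠ q := by
      have : T.Adj p q := hE'sub he
      exact this.ne
    have hadj : H.Adj p q := by
      rw [hHdef, SimpleGraph.fromEdgeSet_adj]
      exact ⟨he, hpq⟩
    intro u hu u' hu'
    rw [Sym2.mem_iff] at hu hu'
    rcases hu with rfl | rfl <;> rcases hu' with rfl | rfl
    · rfl
    · exact hadj.reachable
    · exact hadj.symm.reachable
    · rfl
  have uniqP : ∀ x x', P x → P x' → H.Reachable x x' → x = x' :=
    fun x x' hx hx' hr => uniq_nbr hT hle hHz (hPadj _ hx) (hPadj _ hx') hr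
  have reach_uniform : ∀ e ∈ E', ∀ v ∈ e, ∀ x, (e ∈ Ex x ↔ H.Reachable x v) := by
    intro e he v hv x
    constructor
    · rintro hex
      obtain ⟨u, hu, hru⟩ := (Finset.mem_filter.1 hex).2
      exact hru.trans (edge_reach e he u hu v hv)
    · intro hr
      exact Finset.mem_filter.2 ⟨he, v, hv, hr⟩
  set g : Sym2 V → Fin 2 := fun e => if flp = true ∧ e = e₀ then b₀ + 1 else b₀ with hgdef
  have hcx' : ∀ x : V, ∃ c : Sym2 V → Fin 2,
      (∀ v, v ≠ x → OkAt (Ex x) c v) ∧ PendAt (Ex x) c x (g s(z, x)) := by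
    intro x
    obtain ⟨c, h1, h2⟩ := IH (Ex x) (le_trans (Finset.card_le_card (hExsub x)) hE'card)
      (fun e he => hE'sub (hExsub x he)) x (g s(z, x)) true
    exact ⟨c, h1, by simpa using h2⟩
  choose cx hcx1 hcx2 using hcx'
  set L : Finset (Sym2 V) := E'.filter (fun e => ¬ ∃ x, P x ∧ e ∈ Ex x) with hLdef
  obtain ⟨cL, hcL1, hcL2⟩ := IH L
    (le_trans (Finset.card_le_card (Finset.filter_subset _ _)) hE'card)
    (fun e he => hE'sub (Finset.mem_of_mem_filter _ he)) z 0 false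
  have hcLall : ∀ v, OkAt L cL v := by
    intro v
    by_cases h : v = z
    · subst h; simpa using hcL2
    · exact hcL1 v h
  set c : Sym2 V → Fin 2 := fun e =>
    if z ∈ e then g e else if h : ∃ x, P x ∧ e ∈ Ex x then cx h.choose e else cL e with hcdef
  have hcS : ∀ e, z ∈ e → c e = g e := by
    intro e hz; simp only [hcdef, if_pos hz]
  have hc_E' : ∀ e ∈ E', ∀ x, P x → e ∈ Ex x → c e = cx x e := by
    intro e he x hPx hex
    have hz' : z ∉ e := hzE' e he
    have hex' : ∃ x, P x ∧ e ∈ Ex x := ⟨x, hPx, hex⟩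
    have hch : hex'.choose = x := by
      obtain ⟨hP1, hE1⟩ := hex'.choose_spec
      obtain ⟨u, hu, hru⟩ := (Finset.mem_filter.1 hE1).2
      obtain ⟨u', hu', hru'⟩ := (Finset.mem_filter.1 hex).2
      exact uniqP _ _ hP1 hPx
        ((hru.trans (edge_reach e he u hu u' hu')).trans hru'.symm)
    simp only [hcdef, if_neg hz', dif_pos hex', hch]
  have hc_L : ∀ e ∈ L, c e = cL e := by
    intro e he
    have he' : e ∈ E' := Finset.mem_of_mem_filter _ he
    have hno : ¬ ∃ x, P x ∧ e ∈ Ex x := (Finset.mem_filter.1 he).2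
    simp only [hcdef, if_neg (hzE' e he'), dif_neg hno]
  -- counting at x satisfying P
  have hcnt_x : ∀ x, P x → ∀ i, oddCnt E c i x =
      (if g s(z, x) = i then 1 else 0) + oddCnt (Ex x) (cx x) i x := by
    intro x hPx i
    have hxz : x ≠ z := hPx.2
    have hsplit : E.filter (fun e => x ∈ e ∧ c e = i) =
        (if g s(z, x) = i then {s(z, x)} else ∅) ∪
          (Ex x).filter (fun e => x ∈ e ∧ cx x e = i) := by
      ext e
      simp only [Finset.mem_union, Finset.mem_filter]
      constructor
      · rintro ⟨he, hxe, hce⟩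
        by_cases hze : z ∈ e
        · have heS : e ∈ S := Finset.mem_filter.2 ⟨he, hze⟩
          have hxo : x = oth e := hmem_oth e heS x hxe hxz
          have hezx : e = s(z, x) := by
            rw [hxo]
            exact (hoth e heS).symm
          rw [hcS e hze] at hce
          subst hezx
          left
          rw [if_pos hce]
          exact Finset.mem_singleton_self _
        · have heE' : e ∈ E' := Finset.mem_filter.2 ⟨he, hze⟩
          have hex : e ∈ Ex x := (reach_uniform e heE' x hxe x).2 (SimpleGraph.Reachable.refl x)
          right
          exact ⟨hex, hxe, by rw [← hc_E' e heE' x hPx hex]; exact hce⟩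
      · rintro (hl | hr)
        · by_cases hgi : g s(z, x) = i
          · rw [if_pos hgi] at hl
            have he : e = s(z, x) := Finset.mem_singleton.1 hl
            subst he
            exact ⟨hPx.1, Sym2.mem_mk_right _ _, by rw [hcS _ (Sym2.mem_mk_left z x)]; exact hgi⟩
          · rw [if_neg hgi] at hl
            exact absurd hl (Finset.notMem_empty _)
        · obtain ⟨hex, hxe, hcxe⟩ := hr
          have he' : e ∈ E' := hExsub x hex
          exact ⟨hE'subE he', hxe, by rw [hc_E' e he' x hPx hex]; exact hcxe⟩
    have hdisj : Disjoint (if g s(z, x) = i then ({s(z, x)} : Finset (Sym2 V)) else ∅)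
        ((Ex x).filter (fun e => x ∈ e ∧ cx x e = i)) := by
      split_ifs
      · rw [Finset.disjoint_singleton_left]
        intro hmem
        exact hzE' _ (hExsub x (Finset.mem_filter.1 hmem).1) (Sym2.mem_mk_left z x)
      · exact Finset.disjoint_empty_left _
    show (E.filter (fun e => x ∈ e ∧ c e = i)).card = _
    rw [hsplit, Finset.card_union_of_disjoint hdisj]
    congr 1
    split_ifs <;> simp
  -- Ok at x satisfying P
  have hok_x : ∀ x, P x → OkAt E c x := by
    intro x hPx i
    have hpend := hcx2 x
    rcases fin2_cases' i (g s(z, x)) with rfl | rfl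
    · left
      rw [hcnt_x x hPx, if_pos rfl]
      exact hpend.1.one_add
    · rw [hcnt_x x hPx, if_neg (fun h => fin2_succ_ne _ h.symm)]
      simpa using hpend.2
  -- Ok at other vertices
  have hok_v : ∀ v, v ≠ z → ¬ P v → OkAt E c v := by
    intro v hvz hPv
    have hv_no_star : ∀ e ∈ E, v ∈ e → z ∉ e := by
      intro e he hve hze
      have heS : e ∈ S := Finset.mem_filter.2 ⟨he, hze⟩
      have hvo : v = oth e := hmem_oth e heS v hve hvz
      have hev : e = s(z, v) := by
        rw [hvo]
        exact (hoth e heS).symm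
      exact hPv ⟨hev ▸ he, hvz⟩
    by_cases hvx : ∃ x, P x ∧ H.Reachable x v
    · obtain ⟨x, hPx, hreach⟩ := hvx
      have hvnx : v ≠ x := fun h => hPv (h ▸ hPx)
      have heq : ∀ i, oddCnt E c i v = oddCnt (Ex x) (cx x) i v := by
        intro i
        apply oddCnt_congr
        intro e
        constructor
        · rintro ⟨he, hve, hce⟩
          have hze : z ∉ e := hv_no_star e he hve
          have heE' : e ∈ E' := Finset.mem_filter.2 ⟨he, hze⟩
          have hex : e ∈ Ex x := (reach_uniform e heE' v hve x).2 hreach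
          exact ⟨hex, hve, by rw [← hc_E' e heE' x hPx hex]; exact hce⟩
        · rintro ⟨hex, hve, hce⟩
          have he' : e ∈ E' := hExsub x hex
          exact ⟨hE'subE he', hve, by rw [hc_E' e he' x hPx hex]; exact hce⟩
      intro i
      rw [heq]
      exact hcx1 x v hvnx i
    · have heq : ∀ i, oddCnt E c i v = oddCnt L cL i v := by
        intro i
        apply oddCnt_congr
        intro e
        constructor
        · rintro ⟨he, hve, hce⟩
          have hze : z ∉ e := hv_no_star e he hve
          have heE' : e ∈ E' := Finset.mem_filter.2 ⟨he, hze⟩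
          have heL : e ∈ L := by
            refine Finset.mem_filter.2 ⟨heE', ?_⟩
            rintro ⟨x, hPx, hex⟩
            exact hvx ⟨x, hPx, (reach_uniform e heE' v hve x).1 hex⟩
          exact ⟨heL, hve, by rw [← hc_L e heL]; exact hce⟩
        · rintro ⟨heL, hve, hce⟩
          exact ⟨hE'subE (Finset.mem_of_mem_filter _ heL), hve,
            by rw [hc_L e heL]; exact hce⟩
      intro i
      rw [heq]
      exact hcLall v i
  -- counting at z
  have hAz : ∀ i, E.filter (fun e => z ∈ e ∧ c e = i) = S.filter (fun e => g e = i) := by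
    intro i
    ext e
    rw [hSdef]
    simp only [Finset.mem_filter]
    constructor
    · rintro ⟨he, hz, hc⟩
      exact ⟨⟨he, hz⟩, by rw [← hcS e hz]; exact hc⟩
    · rintro ⟨⟨he, hz⟩, hg⟩
      exact ⟨he, hz, by rw [hcS e hz]; exact hg⟩
  have hgpos : g e₀ = if flp = true then b₀ + 1 else b₀ := by
    simp [hgdef]
  have hgneg : ∀ e, e ≠ e₀ → g e = b₀ := by
    intro e hne
    simp [hgdef, hne]
  have hfb : S.filter (fun e => g e = b₀) = if flp = true then S.erase e₀ else S := by
    cases flp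
    · simp only [Bool.false_eq_true, if_false]
      apply Finset.filter_true_of_mem
      intro e _
      by_cases he : e = e₀
      · subst he
        simpa using hgpos
      · exact hgneg e he
    · simp only [if_true]
      ext e
      simp only [Finset.mem_filter, Finset.mem_erase]
      constructor
      · rintro ⟨he, hg⟩
        refine ⟨?_, he⟩
        rintro rfl
        rw [hgpos] at hg
        simp only [if_true] at hg
        exact fin2_succ_ne _ hg
      · rintro ⟨hne, he⟩
        exact ⟨he, hgneg e hne⟩
  have hfb1 : S.filter (fun e => g e = b₀ + 1) = if flp = true then {e₀} else ∅ := by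
    cases flp
    · simp only [Bool.false_eq_true, if_false]
      apply Finset.filter_false_of_mem
      intro e _
      intro hg
      by_cases he : e = e₀
      · subst he
        rw [hgpos] at hg
        simp only [Bool.false_eq_true, if_false] at hg
        exact fin2_succ_ne b₀ hg.symm
      · rw [hgneg e he] at hg
        exact fin2_succ_ne b₀ hg.symm
    · simp only [if_true]
      ext e
      simp only [Finset.mem_filter, Finset.mem_singleton]
      constructor
      · rintro ⟨he, hg⟩
        by_contra hne
        rw [hgneg e hne] at hg
        exact fin2_succ_ne b₀ hg.symm
      · rintro rfl
        refine ⟨he₀, ?_⟩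
        rw [hgpos]
        simp
  refine ⟨c, ?_, ?_, ?_⟩
  · intro v hvz
    by_cases hPv : P v
    · exact hok_x v hPv
    · exact hok_v v hvz hPv
  · show (E.filter (fun e => z ∈ e ∧ c e = b₀)).card = S.card - flp.toNat
    rw [hAz, hfb]
    cases flp
    · simp
    · simp only [if_true, Bool.toNat_true]
      exact Finset.card_erase_of_mem he₀
  · show (E.filter (fun e => z ∈ e ∧ c e = (b₀ + 1))).card = flp.toNat
    rw [hAz, hfb1]
    cases flp <;> simp

end OddAux

lemma key_odd {V : Type*} [Fintype V] [DecidableEq V] {T : SimpleGraph V} (hT : T.IsAcyclic) :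
    ∀ (n : ℕ) (E : Finset (Sym2 V)), E.card ≤ n → ↑E ⊆ T.edgeSet →
    ∀ (w : V) (a : Fin 2) (p : Bool),
    ∃ c : Sym2 V → Fin 2,
      (∀ v, v ≠ w → OkAt E c v) ∧ (if p then PendAt E c w a else OkAt E c w) := by
  intro n
  induction n with
  | zero =>
    intro E hcard _ w a p
    have hE : E = ∅ := Finset.card_eq_zero.1 (Nat.le_zero.1 hcard)
    subst hE
    have h0 : ∀ (i : Fin 2) (v : V), oddCnt (∅ : Finset (Sym2 V)) (fun _ => 0) i v = 0 := by
      intro i v; simp [oddCnt]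
    refine ⟨fun _ => 0, fun v _ i => Or.inr (h0 i v), ?_⟩
    cases p
    · exact fun i => Or.inr (h0 i w)
    · exact ⟨by rw [h0]; exact Even.zero, Or.inr (h0 _ _)⟩
  | succ n IHn =>
    intro E hcard hsub w a p
    classical
    have ok_center : ∀ z : V, (E.filter (fun e => z ∈ e)).Nonempty →
        ∃ c : Sym2 V → Fin 2, (∀ v, v ≠ z → OkAt E c v) ∧ OkAt E c z := by
      intro z hz
      have hd1 : 1 ≤ (E.filter (fun e => z ∈ e)).card := Finset.card_pos.2 hz
      by_cases hodd : Odd (E.filter (fun e => z ∈ e)).card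
      · obtain ⟨c, h1, h2, h3⟩ := star_step hT IHn hcard hsub z hz 0 false
        simp only [Bool.toNat_false, Nat.sub_zero] at h2 h3
        refine ⟨c, h1, ?_⟩
        intro i
        rcases fin2_cases' i 0 with rfl | rfl
        · left; rw [h2]; exact hodd
        · right; exact h3
      · obtain ⟨c, h1, h2, h3⟩ := star_step hT IHn hcard hsub z hz 0 true
        simp only [Bool.toNat_true] at h2 h3
        refine ⟨c, h1, ?_⟩
        intro i
        rcases fin2_cases' i 0 with rfl | rfl
        · left; rw [h2]
          exact Nat.Even.sub_odd hd1 (Nat.not_odd_iff_even.1 hodd) odd_one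
        · left; rw [h3]; exact odd_one
    have pend_center : ∀ z : V, (E.filter (fun e => z ∈ e)).Nonempty → ∀ b : Fin 2,
        ∃ c : Sym2 V → Fin 2, (∀ v, v ≠ z → OkAt E c v) ∧ PendAt E c z b := by
      intro z hz b
      by_cases hodd : Odd (E.filter (fun e => z ∈ e)).card
      · obtain ⟨c, h1, h2, h3⟩ := star_step hT IHn hcard hsub z hz b true
        simp only [Bool.toNat_true] at h2 h3
        refine ⟨c, h1, ?_, ?_⟩
        · rw [h2]; exact Nat.Odd.sub_odd hodd odd_one
        · left; rw [h3]; exact odd_one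
      · obtain ⟨c, h1, h2, h3⟩ := star_step hT IHn hcard hsub z hz b false
        simp only [Bool.toNat_false, Nat.sub_zero] at h2 h3
        exact ⟨c, h1, by rw [h2]; exact Nat.not_odd_iff_even.1 hodd, Or.inr h3⟩
    by_cases hw : (E.filter (fun e => w ∈ e)).Nonempty
    · cases p
      · obtain ⟨c, h1, h2⟩ := ok_center w hw
        exact ⟨c, h1, by simpa using h2⟩
      · obtain ⟨c, h1, h2⟩ := pend_center w hw a
        exact ⟨c, h1, by simpa using h2⟩
    · have hw0 : ∀ (c : Sym2 V → Fin 2) (i : Fin 2), oddCnt E c i w = 0 := by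
        intro c i
        apply Finset.card_eq_zero.2
        rw [Finset.filter_eq_empty_iff]
        intro e he hcond
        exact hw ⟨e, Finset.mem_filter.2 ⟨he, hcond.1⟩⟩
      by_cases hE : E = ∅
      · subst hE
        have h0 : ∀ (c : Sym2 V → Fin 2) (i : Fin 2) (v : V),
            oddCnt (∅ : Finset (Sym2 V)) c i v = 0 := by
          intro c i v; simp [oddCnt]
        refine ⟨fun _ => 0, fun v _ i => Or.inr (h0 _ i v), ?_⟩
        cases p
        · exact fun i => Or.inr (h0 _ i w)
        · exact ⟨by rw [h0]; exact Even.zero, Or.inr (h0 _ _ _)⟩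
      · obtain ⟨e₁, he₁⟩ := Finset.nonempty_iff_ne_empty.2 hE
        obtain ⟨⟨u, u'⟩, rfl⟩ := e₁.exists_rep
        have hu_star : (E.filter (fun e => u ∈ e)).Nonempty :=
          ⟨s(u, u'), Finset.mem_filter.2 ⟨he₁, Sym2.mem_mk_left _ _⟩⟩
        obtain ⟨c, h1, h2⟩ := ok_center u hu_star
        have hall : ∀ v, v ≠ w → OkAt E c v := by
          intro v _
          by_cases hvu : v = u
          · subst hvu; exact h2
          · exact h1 v hvu
        refine ⟨c, hall, ?_⟩
        cases p
        · exact fun i => Or.inr (hw0 c i)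
        · exact ⟨by rw [hw0]; exact Even.zero, Or.inr (hw0 _ _)⟩


/-- Every finite tree admits an odd edge coloring with at most 2 colors. -/
theorem tree_oddChromaticIndex_le_two {V : Type*} [Fintype V] [DecidableEq V]
    (T : SimpleGraph V) [DecidableRel T.Adj] (hT : T.IsTree) :
    ∃ c : Sym2 V → Fin 2, IsOddEdgeColoring T c := by
  rcases isEmpty_or_nonempty V with h | h
  · exact ⟨fun _ => 0, fun i v => isEmptyElim v⟩
  · obtain ⟨w⟩ := h
    obtain ⟨c, h1, h2⟩ := key_odd hT.2 T.edgeFinset.card T.edgeFinset le_rfl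
      (by simp) w 0 false
    refine ⟨c, ?_⟩
    intro i v
    have hok : OkAt T.edgeFinset c v := by
      by_cases hv : v = w
      · subst hv; simpa using h2
      · exact h1 v hv
    exact hok i
end

section
/- Every finite forest F admits an odd edge coloring with at most 2 colors; that is, χ'_o(F) ≤ 2 for every finite forest F. -/
open Finset SimpleGraph

set_option linter.unusedSectionVars false

namespace OddForestAux

variable {V : Type*} [Fintype V] [DecidableEq V]

noncomputable def rt (F : SimpleGraph V) (v : V) : V := (F.connectedComponentMk v).out

noncomputable def dep (F : SimpleGraph V) (v : V) : ℕ := F.dist v (rt F v)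

lemma reach_rt (F : SimpleGraph V) (v : V) : F.Reachable v (rt F v) :=
  SimpleGraph.ConnectedComponent.exact ((Quot.out_eq (F.connectedComponentMk v)).symm)

lemma rt_adj {F : SimpleGraph V} {u v : V} (h : F.Adj u v) : rt F u = rt F v := by
  unfold rt
  rw [SimpleGraph.ConnectedComponent.connectedComponentMk_eq_of_adj h]

lemma exists_par {F : SimpleGraph V} {v : V} (hv : dep F v ≠ 0) :
    ∃ w, F.Adj v w ∧ dep F w + 1 = dep F v := by
  have hr := SimpleGraph.dist_ne_zero_iff_ne_and_reachable.mp (by rw [dep] at hv; exact hv)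
  obtain ⟨p, hp, hlen⟩ := hr.2.exists_path_of_dist
  obtain ⟨w, hadj, q, rfl⟩ := SimpleGraph.Walk.exists_eq_cons_of_ne hr.1 p
  refine ⟨w, hadj, ?_⟩
  have hrtw : rt F w = rt F v := (rt_adj hadj).symm
  have h1 : F.dist w (rt F v) ≤ q.length := SimpleGraph.dist_le q
  have h2 : F.dist v (rt F v) ≤ F.dist w (rt F v) + 1 := by
    obtain ⟨q', hq', hlq'⟩ := ((hadj.symm.reachable).trans (reach_rt F v)).exists_path_of_dist
    have := SimpleGraph.dist_le (q'.cons hadj)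
    simp only [SimpleGraph.Walk.length_cons] at this
    omega
  have h3 : (SimpleGraph.Walk.cons hadj q).length = q.length + 1 := by simp
  rw [dep, dep, hrtw]
  omega

open Classical in
noncomputable def par (F : SimpleGraph V) (v : V) : V :=
  if h : ∃ w, F.Adj v w ∧ dep F w + 1 = dep F v then h.choose else v

lemma par_spec {F : SimpleGraph V} {v : V} (hv : dep F v ≠ 0) :
    F.Adj v (par F v) ∧ dep F (par F v) + 1 = dep F v := by
  have h := exists_par hv
  rw [par, dif_pos h]
  exact h.choose_spec

lemma notMem_support' {F : SimpleGraph V} {x r : V} (v : V) (p : F.Walk x r)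
    (hlen : p.length = F.dist x r) (hne : v ≠ x) (hd : F.dist x r ≤ F.dist v r) :
    v ∉ p.support := by
  intro hv
  have hspec := p.take_spec hv
  have hlsum : (p.takeUntil v hv).length + (p.dropUntil v hv).length = p.length := by
    rw [← SimpleGraph.Walk.length_append, hspec]
  have ht : (p.takeUntil v hv).length ≠ 0 := fun h0 =>
    hne (SimpleGraph.Walk.eq_of_length_eq_zero h0).symm
  have h2 := SimpleGraph.dist_le (p.dropUntil v hv)
  omega

lemma adj_dep {F : SimpleGraph V} (hF : F.IsAcyclic) {u v : V} (h : F.Adj u v) :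
    dep F u = dep F v + 1 ∨ dep F v = dep F u + 1 := by
  by_contra hcon
  push_neg at hcon
  have hrv : rt F v = rt F u := (rt_adj h).symm
  have hru : F.Reachable u (rt F u) := reach_rt F u
  have hrvr : F.Reachable v (rt F u) := h.symm.reachable.trans hru
  obtain ⟨p, hp, hlp⟩ := hru.exists_path_of_dist
  obtain ⟨q, hq, hlq⟩ := hrvr.exists_path_of_dist
  have hdv : dep F v = F.dist v (rt F u) := by rw [dep, hrv]
  have hdu : dep F u = F.dist u (rt F u) := rfl
  have hle1 : F.dist u (rt F u) ≤ F.dist v (rt F u) + 1 := by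
    have := SimpleGraph.dist_le (q.cons h)
    simp only [SimpleGraph.Walk.length_cons] at this
    omega
  have hle2 : F.dist v (rt F u) ≤ F.dist u (rt F u) + 1 := by
    have := SimpleGraph.dist_le (p.cons h.symm)
    simp only [SimpleGraph.Walk.length_cons] at this
    omega
  have hns : u ∉ q.support := notMem_support' u q hlq h.ne (by omega)
  have hpath2 : (q.cons h).IsPath := hq.cons hns
  have huniq := (SimpleGraph.isAcyclic_iff_path_unique.mp hF)
    (⟨p, hp⟩ : F.Path u (rt F u)) ⟨q.cons h, hpath2⟩
  have hlen := congrArg (fun pp : F.Path u (rt F u) => pp.1.length) huniq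
  simp only [SimpleGraph.Walk.length_cons] at hlen
  omega

lemma par_unique {F : SimpleGraph V} (hF : F.IsAcyclic) {v w : V} (h : F.Adj v w)
    (hd : dep F w + 1 = dep F v) : w = par F v := by
  have hv : dep F v ≠ 0 := by omega
  obtain ⟨hadj', hd'⟩ := par_spec (F := F) (v := v) hv
  by_contra hne
  have hdvv : dep F v = F.dist v (rt F v) := rfl
  have hdwv : F.dist w (rt F v) = dep F w := by rw [dep, rt_adj h]
  have hdpv : F.dist (par F v) (rt F v) = dep F (par F v) := by rw [dep, rt_adj hadj']
  obtain ⟨q, hq, hlq⟩ := ((h.symm.reachable).trans (reach_rt F v)).exists_path_of_dist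
  obtain ⟨q', hq', hlq'⟩ := ((hadj'.symm.reachable).trans (reach_rt F v)).exists_path_of_dist
  have hvq : v ∉ q.support := notMem_support' v q hlq h.ne (by omega)
  have hvq' : v ∉ q'.support := notMem_support' v q' hlq' hadj'.ne (by omega)
  have hp1 : (q.cons h).IsPath := hq.cons hvq
  have hp2 : (q'.cons hadj').IsPath := hq'.cons hvq'
  have huniq := (SimpleGraph.isAcyclic_iff_path_unique.mp hF)
    (⟨q.cons h, hp1⟩ : F.Path v (rt F v)) ⟨q'.cons hadj', hp2⟩
  have h2 := congrArg (fun pp : F.Path v (rt F v) => pp.1.getVert 1) huniq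
  simp only [SimpleGraph.Walk.getVert_cons _ _ one_ne_zero, Nat.sub_self,
    SimpleGraph.Walk.getVert_zero] at h2
  exact hne h2


variable (F : SimpleGraph V) [DecidableRel F.Adj]

noncomputable def childFinset (v : V) : Finset V :=
  univ.filter (fun w => F.Adj v w ∧ dep F w = dep F v + 1)

lemma mem_childFinset {v w : V} :
    w ∈ childFinset F v ↔ F.Adj v w ∧ dep F w = dep F v + 1 := by
  simp [childFinset]

noncomputable def desig (v : V) : V :=
  if h : (childFinset F v).Nonempty then h.choose else v

lemma desig_mem {v : V} (h : (childFinset F v).Nonempty) : desig F v ∈ childFinset F v := by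
  rw [desig, dif_pos h]
  exact h.choose_spec

noncomputable def f (v : V) : Fin 2 :=
  if h : ∃ w, F.Adj v w ∧ dep F w + 1 = dep F v then
    f h.choose + (if Odd (childFinset F h.choose).card then 1 else 0) +
      (if dep F v = 1 ∧ ¬Odd (childFinset F h.choose).card ∧ v = desig F h.choose then 1 else 0)
  else 0
termination_by dep F v
decreasing_by
  have := h.choose_spec.2
  omega

lemma f_root {v : V} (hv : dep F v = 0) : f F v = 0 := by
  rw [f, dif_neg]
  rintro ⟨w, -, hw⟩
  omega

lemma f_eq {v : V} (hv : dep F v ≠ 0) :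
    f F v = f F (par F v) + (if Odd (childFinset F (par F v)).card then 1 else 0) +
      (if dep F v = 1 ∧ ¬Odd (childFinset F (par F v)).card ∧ v = desig F (par F v) then 1
        else 0) := by
  have h := exists_par hv
  rw [f, dif_pos h, par, dif_pos h]

noncomputable def col : Sym2 V → Fin 2 :=
  Sym2.lift ⟨fun a b => if dep F a < dep F b then f F b else if dep F b < dep F a then f F a
    else 0, by
    intro a b
    dsimp only
    rcases lt_trichotomy (dep F a) (dep F b) with h | h | h
    · rw [if_pos h, if_neg (by omega), if_pos h]
    · rw [if_neg (by omega), if_neg (by omega), if_neg (by omega), if_neg (by omega)]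
    · rw [if_neg (by omega), if_pos h, if_pos h]⟩

lemma col_child {v w : V} (h : dep F w = dep F v + 1) : col F s(v, w) = f F w := by
  rw [col, Sym2.lift_mk]
  dsimp only
  rw [if_pos (by omega)]

lemma col_par {v w : V} (h : dep F w + 1 = dep F v) : col F s(v, w) = f F v := by
  rw [col, Sym2.lift_mk]
  dsimp only
  rw [if_neg (by omega), if_pos (by omega)]

lemma card_edge_filter (v : V) (P : Sym2 V → Prop) [DecidablePred P] :
    (F.edgeFinset.filter (fun e => v ∈ e ∧ P e)).card =
      ((F.neighborFinset v).filter (fun w => P s(v, w))).card := by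
  refine (Finset.card_bij (fun w _ => s(v, w)) ?_ ?_ ?_).symm
  · intro w hw
    simp only [mem_filter, mem_neighborFinset] at hw
    simp only [mem_filter, mem_edgeFinset, mem_edgeSet]
    exact ⟨hw.1, Sym2.mem_mk_left v w, hw.2⟩
  · intro w1 h1 w2 h2 he
    exact Sym2.congr_right.mp he
  · intro e he
    simp only [mem_filter, mem_edgeFinset] at he
    obtain ⟨w, rfl⟩ := Sym2.mem_iff_exists.mp he.2.1
    refine ⟨w, ?_, rfl⟩
    simp only [mem_filter, mem_neighborFinset]
    exact ⟨F.mem_edgeSet.mp he.1, he.2.2⟩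


lemma par_notMem_childFinset {v : V} (hv : dep F v ≠ 0) :
    par F v ∉ childFinset F v := by
  rw [mem_childFinset]
  have := (par_spec hv).2
  rintro ⟨-, h⟩
  omega

lemma neighborFinset_eq (hF : F.IsAcyclic) (v : V) :
    F.neighborFinset v =
      if dep F v = 0 then childFinset F v else insert (par F v) (childFinset F v) := by
  ext w
  rw [mem_neighborFinset]
  split_ifs with h0
  · rw [mem_childFinset]
    constructor
    · intro h
      rcases adj_dep hF h with hd | hd
      · omega
      · exact ⟨h, hd⟩
    · exact fun h => h.1
  · rw [mem_insert, mem_childFinset]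
    constructor
    · intro h
      rcases adj_dep hF h with hd | hd
      · exact Or.inl (par_unique hF h (by omega))
      · exact Or.inr ⟨h, hd⟩
    · rintro (rfl | h)
      · exact (par_spec h0).1
      · exact h.1

lemma child_f (hF : F.IsAcyclic) {v w : V} (hw : w ∈ childFinset F v) :
    f F w = f F v + (if Odd (childFinset F v).card then 1 else 0) +
      (if dep F v = 0 ∧ ¬Odd (childFinset F v).card ∧ w = desig F v then 1 else 0) := by
  rw [mem_childFinset] at hw
  obtain ⟨hadj, hdw⟩ := hw
  have hpar : v = par F w := par_unique hF hadj.symm (by omega)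
  have hiff : (dep F w = 1 ∧ ¬Odd (childFinset F v).card ∧ w = desig F v) ↔
      (dep F v = 0 ∧ ¬Odd (childFinset F v).card ∧ w = desig F v) := by
    constructor
    · rintro ⟨h1, h2⟩; exact ⟨by omega, h2⟩
    · rintro ⟨h1, h2⟩; exact ⟨by omega, h2⟩
  rw [f_eq F (v := w) (by omega), ← hpar, if_congr hiff rfl rfl]

lemma key (hF : F.IsAcyclic) (i : Fin 2) (v : V) :
    Odd ((F.neighborFinset v).filter (fun w => col F s(v, w) = i)).card ∨
      ((F.neighborFinset v).filter (fun w => col F s(v, w) = i)).card = 0 := by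
  have hcol : ∀ w ∈ childFinset F v, (col F s(v, w) = i) ↔ (f F w = i) := by
    intro w hw
    rw [col_child F ((mem_childFinset F).mp hw).2]
  rw [neighborFinset_eq F hF v]
  by_cases h0 : dep F v = 0
  · -- root case
    rw [if_pos h0, Finset.filter_congr hcol]
    have hfil : ∀ w ∈ childFinset F v, f F w =
        (if Odd (childFinset F v).card then 1 else 0) +
          (if ¬Odd (childFinset F v).card ∧ w = desig F v then 1 else 0) := by
      intro w hw
      rw [child_f F hF hw, f_root F h0]
      have : (dep F v = 0 ∧ ¬Odd (childFinset F v).card ∧ w = desig F v) ↔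
          (¬Odd (childFinset F v).card ∧ w = desig F v) := by
        constructor
        · rintro ⟨-, h⟩; exact h
        · intro h; exact ⟨h0, h⟩
      rw [if_congr this rfl rfl]
      open Fin.CommRing in ring
    by_cases hodd : Odd (childFinset F v).card
    · have : Finset.filter (fun w => f F w = i) (childFinset F v) =
          Finset.filter (fun _ => (1 : Fin 2) = i) (childFinset F v) := by
        apply Finset.filter_congr
        intro w hw
        rw [hfil w hw, if_pos hodd, if_neg (by simp [hodd])]
        simp
      rw [this, Finset.filter_const]
      split_ifs
      · exact Or.inl hodd
      · simp
    · -- even number of children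
      by_cases hn : (childFinset F v).card = 0
      · right
        have := Finset.card_filter_le (childFinset F v) (fun w => f F w = i)
        omega
      · have hne : (childFinset F v).Nonempty := Finset.card_pos.mp (by omega)
        have hval : ∀ w ∈ childFinset F v, f F w = (if w = desig F v then 1 else 0) := by
          intro w hw
          rw [hfil w hw, if_neg hodd]
          by_cases hd : w = desig F v
          · rw [if_pos hd, if_pos ⟨hodd, hd⟩]; rfl
          · rw [if_neg hd, if_neg (by rintro ⟨-, h⟩; exact hd h)]; rfl
        rcases (by decide : ∀ x : Fin 2, x = 0 ∨ x = 1) i with rfl | rfl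
        · -- i = 0 : everything except the designated child
          have : Finset.filter (fun w => f F w = 0) (childFinset F v) =
              Finset.filter (fun w => w ≠ desig F v) (childFinset F v) := by
            apply Finset.filter_congr
            intro w hw
            rw [hval w hw]
            by_cases hd : w = desig F v
            · simp [hd]
            · simp [hd]
          rw [this, Finset.filter_ne']
          left
          rw [Finset.card_erase_of_mem (desig_mem F hne)]
          rw [Nat.odd_iff]
          rw [Nat.not_odd_iff] at hodd
          omega
        · have : Finset.filter (fun w => f F w = 1) (childFinset F v) =
              Finset.filter (fun w => w = desig F v) (childFinset F v) := by
            apply Finset.filter_congr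
            intro w hw
            rw [hval w hw]
            by_cases hd : w = desig F v
            · simp [hd]
            · simp [hd]
          rw [this, Finset.filter_eq', if_pos (desig_mem F hne)]
          left
          simp
  · -- non-root case
    rw [if_neg h0, Finset.filter_insert]
    have hcolpar : col F s(v, par F v) = f F v := col_par F (par_spec h0).2
    have hchild : ∀ w ∈ childFinset F v, f F w =
        f F v + (if Odd (childFinset F v).card then 1 else 0) := by
      intro w hw
      have hcond : ¬(dep F v = 0 ∧ ¬Odd (childFinset F v).card ∧ w = desig F v) :=
        fun hc => h0 hc.1
      rw [child_f F hF hw, if_neg hcond]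
      open Fin.CommRing in ring
    have hsub : Finset.filter (fun w => col F s(v, w) = i) (childFinset F v) =
        Finset.filter (fun _ => f F v + (if Odd (childFinset F v).card then 1 else 0) = i)
          (childFinset F v) := by
      rw [Finset.filter_congr hcol]
      apply Finset.filter_congr
      intro w hw
      rw [hchild w hw]
    have hnotmem : ∀ s ⊆ childFinset F v, par F v ∉ s :=
      fun s hs hm => par_notMem_childFinset F h0 (hs hm)
    have hfin : ∀ x y : Fin 2, x = y ∨ (x ≠ y ∧ x = y + 1) := by decide
    have hne1 : ∀ x : Fin 2, ¬(x + 1 = x) := by decide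
    have hne2 : ∀ x : Fin 2, ¬(x + 0 = x + 1) := by decide
    by_cases hodd : Odd (childFinset F v).card
    · rcases hfin i (f F v) with rfl | ⟨hne, rfl⟩
      · rw [if_pos hcolpar, hsub, if_pos hodd,
          Finset.filter_const, if_neg (hne1 _),
          Finset.card_insert_of_notMem (hnotmem _ (Finset.empty_subset _))]
        left
        simp
      · rw [if_neg (by rw [hcolpar]; exact fun h => hne h.symm), hsub, if_pos hodd,
          Finset.filter_const, if_pos rfl]
        exact Or.inl hodd
    · rcases hfin i (f F v) with rfl | ⟨hne, rfl⟩
      · rw [if_pos hcolpar, hsub, if_neg hodd, Finset.filter_const,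
          if_pos (by open Fin.CommRing in ring),
          Finset.card_insert_of_notMem (hnotmem _ (subset_refl _))]
        left
        rw [Nat.odd_iff]
        rw [Nat.not_odd_iff] at hodd
        omega
      · rw [if_neg (by rw [hcolpar]; exact fun h => hne h.symm), hsub, if_neg hodd,
          Finset.filter_const, if_neg (hne2 _)]
        simp

end OddForestAux

/-- Every finite forest admits an odd edge coloring with at most 2 colors. -/
theorem forest_oddChromaticIndex_le_two {V : Type*} [Fintype V] [DecidableEq V]
    (F : SimpleGraph V) [DecidableRel F.Adj] (hF : F.IsAcyclic) :
    ∃ c : Sym2 V → Fin 2, IsOddEdgeColoring F c := by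
  refine ⟨OddForestAux.col F, ?_⟩
  intro i v
  rw [OddForestAux.card_edge_filter F v (fun e => OddForestAux.col F e = i)]
  exact OddForestAux.key F hF i v
end

section
/- Let G be a finite loopless multigraph in which the number of edges between any pair of adjacent vertices is odd, i.e., for all u, v, the multiplicity m({u,v}) is either zero or odd. Then G admits an odd edge coloring with at most 4 colors, i.e., χ'_o(G) ≤ 4. -/
/-- An odd edge coloring of the loopless multigraph with multiplicity function `m`
using `k` colors: the multiplicity of each edge is split among the `k` colors, and
for each color `i` and vertex `v`, the number of edges of color `i` incident to `v`
is odd or zero. -/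
def IsOddMultiColoring {V : Type*} [Fintype V] (m : Sym2 V → ℕ) {k : ℕ}
    (c : Sym2 V → Fin k → ℕ) : Prop :=
  (∀ e : Sym2 V, ∑ i, c e i = m e) ∧
    ∀ (i : Fin k) (v : V), Odd (∑ u, c s(v, u) i) ∨ (∑ u, c s(v, u) i) = 0

namespace OddPf
open Finset

attribute [local instance] Classical.propDecidable
set_option linter.unusedSectionVars false

lemma zmod2_zero_iff (n : ℕ) : (n : ZMod 2) = 0 ↔ Even n := by
  rw [ZMod.natCast_eq_zero_iff]
  exact (even_iff_two_dvd).symm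

lemma zmod2_one_iff (n : ℕ) : (n : ZMod 2) = 1 ↔ Odd n := by
  have h2 : ∀ x : ZMod 2, x = 0 ∨ x = 1 := by decide
  constructor
  · intro h
    rcases Nat.even_or_odd n with he | ho
    · exfalso
      rw [(zmod2_zero_iff n).2 he] at h
      exact absurd h (by decide)
    · exact ho
  · intro h
    rcases h2 (n : ZMod 2) with h0 | h1
    · exact absurd ((zmod2_zero_iff n).1 h0) (by rw [Nat.even_iff]; rw [Nat.odd_iff] at h; omega)
    · exact h1

lemma card_attach_filter {α : Type*} (s : Finset α) (q : α → Bool) :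
    ((s.attach.filter (fun c => q c.1 = true)).card = (s.filter (fun c => q c = true)).card) := by
  apply Finset.card_bij (fun c _ => c.1)
  · intro a ha; simp only [Finset.mem_filter, Finset.mem_attach, true_and] at ha
    simp only [Finset.mem_filter]; exact ⟨a.2, ha⟩
  · intro a _ b _ he; exact Subtype.ext he
  · intro b hb; simp only [Finset.mem_filter] at hb
    exact ⟨⟨b, hb.1⟩, by simp [hb.2], rfl⟩


variable {V : Type*} [Fintype V] [DecidableEq V]

section Graph

variable (A : V → V → Prop) (hsym : Symmetric A) (hirr : ∀ v, ¬ A v v)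

def Reach : V → V → Prop := Relation.ReflTransGen A

def sA : Setoid V :=
  ⟨Reach A, ⟨fun _ => Relation.ReflTransGen.refl,
    fun h => by induction h with
      | refl => exact Relation.ReflTransGen.refl
      | tail _ hab ih => exact Relation.ReflTransGen.head (hsym hab) ih,
    fun h h' => Relation.ReflTransGen.trans h h'⟩⟩

noncomputable def root (v : V) : V := (@Quotient.mk V (sA A hsym) v).out

lemma reach_root (v : V) : Reach A (root A hsym v) v :=
  @Quotient.mk_out V (sA A hsym) v

lemma root_eq_of_reach {u v : V} (h : Reach A u v) : root A hsym u = root A hsym v :=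
  congrArg Quotient.out (Quotient.sound h)

lemma root_root (v : V) : root A hsym (root A hsym v) = root A hsym v :=
  root_eq_of_reach A hsym (reach_root A hsym v)

def ReachN : ℕ → V → V → Prop
  | 0, u, v => u = v
  | n+1, u, v => ∃ x, ReachN n u x ∧ A x v

lemma reach_iff_reachN {u v : V} : Reach A u v ↔ ∃ n, ReachN A n u v := by
  constructor
  · intro h
    induction h with
    | refl => exact ⟨0, rfl⟩
    | tail _ hA ih => obtain ⟨n, hn⟩ := ih; exact ⟨n+1, _, hn, hA⟩
  · rintro ⟨n, hn⟩
    induction n generalizing v with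
    | zero => cases hn; exact Relation.ReflTransGen.refl
    | succ n ih => obtain ⟨x, h1, h2⟩ := hn; exact (ih h1).tail h2

lemma rankEx (v : V) : ∃ n, ReachN A n (root A hsym v) v :=
  (reach_iff_reachN A).mp (reach_root A hsym v)

noncomputable def rank (v : V) : ℕ := Nat.find (rankEx A hsym v)

lemma rank_spec (v : V) : ReachN A (rank A hsym v) (root A hsym v) v :=
  Nat.find_spec (rankEx A hsym v)

lemma rank_min {v : V} {n : ℕ} (h : ReachN A n (root A hsym v) v) : rank A hsym v ≤ n :=
  Nat.find_min' (rankEx A hsym v) h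

lemma rank_eq_zero_iff {v : V} : rank A hsym v = 0 ↔ v = root A hsym v := by
  constructor
  · intro h
    have := rank_spec A hsym v
    rw [h] at this
    exact this.symm
  · intro h
    have : ReachN A 0 (root A hsym v) v := h.symm
    exact Nat.le_zero.1 (rank_min A hsym this)

lemma pEx (v : V) (h : v ≠ root A hsym v) :
    ∃ x, A x v ∧ ReachN A (rank A hsym v - 1) (root A hsym v) x := by
  have h0 : rank A hsym v ≠ 0 := fun hz => h ((rank_eq_zero_iff A hsym).mp hz)
  have hs := rank_spec A hsym v
  obtain ⟨k, hk⟩ : ∃ k, rank A hsym v = k + 1 :=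
    ⟨rank A hsym v - 1, (Nat.succ_pred_eq_of_ne_zero h0).symm⟩
  rw [hk] at hs
  obtain ⟨x, h1, h2⟩ := hs
  refine ⟨x, h2, ?_⟩
  rw [hk]
  simpa using h1

noncomputable def p (v : V) : V :=
  if h : v = root A hsym v then v else (pEx A hsym v h).choose

lemma p_adj {v : V} (h : v ≠ root A hsym v) : A (p A hsym v) v := by
  rw [p, dif_neg h]
  exact (pEx A hsym v h).choose_spec.1

lemma p_root_self {v : V} (h : v = root A hsym v) : p A hsym v = v := by
  rw [p, dif_pos h]

lemma root_p {v : V} (h : v ≠ root A hsym v) : root A hsym (p A hsym v) = root A hsym v :=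
  root_eq_of_reach A hsym (Relation.ReflTransGen.single (p_adj A hsym h))

lemma rank_p {v : V} (h : v ≠ root A hsym v) : rank A hsym (p A hsym v) < rank A hsym v := by
  have h0 : rank A hsym v ≠ 0 := fun hz => h ((rank_eq_zero_iff A hsym).mp hz)
  have hps : ReachN A (rank A hsym v - 1) (root A hsym v) (p A hsym v) := by
    rw [p, dif_neg h]
    exact (pEx A hsym v h).choose_spec.2
  have hps' : ReachN A (rank A hsym v - 1) (root A hsym (p A hsym v)) (p A hsym v) := by
    rwa [root_p A hsym h]
  have := rank_min A hsym hps'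
  omega

lemma p_ne (hirr : ∀ v, ¬ A v v) {v : V} (h : v ≠ root A hsym v) : p A hsym v ≠ v :=
  fun he => hirr v (by nth_rewrite 1 [← he]; exact p_adj A hsym h)

lemma p_eq_self_iff (hirr : ∀ v, ¬ A v v) {v : V} : p A hsym v = v ↔ v = root A hsym v := by
  constructor
  · intro h
    by_contra hne
    exact p_ne A hsym hirr hne h
  · exact p_root_self A hsym

noncomputable def children (v : V) : Finset V :=
  univ.filter (fun c => p A hsym c = v ∧ c ≠ v)

lemma mem_children {c v : V} : c ∈ children A hsym v ↔ p A hsym c = v ∧ c ≠ v := by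
  simp [children]

lemma child_ne_root {c v : V} (h : c ∈ children A hsym v) : c ≠ root A hsym c := by
  rw [mem_children] at h
  intro he
  exact h.2 (by rw [← h.1, p_root_self A hsym he])

lemma rank_lt_of_child {c v : V} (h : c ∈ children A hsym v) :
    rank A hsym v < rank A hsym c := by
  have h1 := rank_p A hsym (child_ne_root A hsym h)
  rwa [(mem_children A hsym).1 h |>.1] at h1

lemma root_of_child {c v : V} (h : c ∈ children A hsym v) :
    root A hsym c = root A hsym v := by
  have := root_p A hsym (child_ne_root A hsym h)
  rw [(mem_children A hsym).1 h |>.1] at this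
  exact this.symm

lemma adj_of_child {c v : V} (h : c ∈ children A hsym v) : A v c := by
  have := p_adj A hsym (child_ne_root A hsym h)
  rwa [(mem_children A hsym).1 h |>.1] at this



noncomputable def compF (v : V) : Finset V :=
  univ.filter (fun u => root A hsym u = root A hsym v)

lemma mem_compF {u v : V} : u ∈ compF A hsym u ↔ True := by simp [compF]

lemma self_mem_compF (v : V) : v ∈ compF A hsym v := by simp [compF]

lemma compF_congr {u v : V} (h : root A hsym u = root A hsym v) :
    compF A hsym u = compF A hsym v := by
  unfold compF; ext x; simp [h]

noncomputable def above (v : V) : Finset V :=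
  univ.filter (fun u => rank A hsym v < rank A hsym u)

lemma above_child_lt {c v : V} (h : c ∈ children A hsym v) :
    (above A hsym c).card < (above A hsym v).card := by
  apply Finset.card_lt_card
  rw [Finset.ssubset_iff_of_subset]
  · exact ⟨c, by simp [above, rank_lt_of_child A hsym h], by simp [above]⟩
  · intro u hu
    simp only [above, Finset.mem_filter, Finset.mem_univ, true_and] at hu ⊢
    exact lt_trans (rank_lt_of_child A hsym h) hu

variable (Tstar : Finset V)

noncomputable def tz (v : V) : ZMod 2 := if v ∈ Tstar then 1 else 0

noncomputable def bit : V → Bool := fun v =>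
  xor (decide (v ∈ Tstar))
    (decide (Odd ((children A hsym v).attach.filter (fun c => bit c.1 = true)).card))
termination_by v => (above A hsym v).card
decreasing_by all_goals exact above_child_lt A hsym (Subtype.prop _)

noncomputable def bz (v : V) : ZMod 2 := if bit A hsym Tstar v = true then 1 else 0

lemma bit_rec (v : V) :
    bz A hsym Tstar v = tz Tstar v + ∑ c ∈ children A hsym v, bz A hsym Tstar c := by
  have hcard : ((children A hsym v).attach.filter
      (fun c => bit A hsym Tstar c.1 = true)).card
      = ((children A hsym v).filter (fun c => bit A hsym Tstar c = true)).card :=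
    card_attach_filter (children A hsym v) (fun c => bit A hsym Tstar c)
  have hsum : ∑ c ∈ children A hsym v, bz A hsym Tstar c
      = (((children A hsym v).filter (fun c => bit A hsym Tstar c = true)).card : ZMod 2) := by
    rw [Finset.card_filter]
    push_cast
    apply Finset.sum_congr rfl
    intro c _
    by_cases hb : bit A hsym Tstar c = true <;> simp [bz, hb]
  rw [hsum]
  set K := ((children A hsym v).filter (fun c => bit A hsym Tstar c = true)).card with hK
  have hKz : (K : ZMod 2) = if Odd K then 1 else 0 := by
    by_cases hO : Odd K
    · rw [if_pos hO, (zmod2_one_iff K).2 hO]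
    · rw [if_neg hO, (zmod2_zero_iff K).2 (Nat.not_odd_iff_even.1 hO)]
  rw [hKz, bz, bit, hcard]
  unfold tz
  by_cases hT : v ∈ Tstar <;> by_cases hO : Odd K <;>
    simp [hT, hO] <;> decide



lemma two_zmod2 : (2 : ZMod 2) = 0 := by decide

lemma sum_children_eq (hirr : ∀ v, ¬ A v v) (r : V) (hr : root A hsym r = r)
    (f : V → ZMod 2) :
    ∑ v ∈ compF A hsym r, ∑ c ∈ children A hsym v, f c
      = ∑ c ∈ (compF A hsym r).erase r, f c := by
  rw [← Finset.sum_fiberwise_of_maps_to (g := p A hsym) (t := compF A hsym r) ?hmap f]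
  case hmap =>
    intro c hc
    simp only [Finset.mem_erase, compF, Finset.mem_filter, Finset.mem_univ, true_and] at hc ⊢
    have hcr : c ≠ root A hsym c := by
      intro he
      apply hc.1
      rw [he, hc.2, hr]
    rw [root_p A hsym hcr]
    exact hc.2
  apply Finset.sum_congr rfl
  intro v hv
  simp only [compF, Finset.mem_filter, Finset.mem_univ, true_and] at hv
  congr 1
  ext c
  constructor
  · intro hc
    have h1 := (mem_children A hsym).1 hc
    have hcr : c ≠ root A hsym c := child_ne_root A hsym hc
    have hrootc : root A hsym c = root A hsym v := root_of_child A hsym hc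
    rw [Finset.mem_filter, Finset.mem_erase]
    refine ⟨⟨?_, ?_⟩, h1.1⟩
    · intro he
      apply hcr
      rw [he] at hrootc ⊢
      rw [hrootc, hv, hr]
    · simp only [compF, Finset.mem_filter, Finset.mem_univ, true_and]
      rw [hrootc, hv]
  · intro hc
    rw [Finset.mem_filter, Finset.mem_erase] at hc
    obtain ⟨⟨hcne, hcK⟩, hpc⟩ := hc
    rw [mem_children]
    refine ⟨hpc, ?_⟩
    intro he
    have hcc : c = root A hsym c := by
      by_contra hne
      exact p_ne A hsym hirr hne (by rw [hpc, he])
    apply hcne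
    simp only [compF, Finset.mem_filter, Finset.mem_univ, true_and] at hcK
    rw [hcc, hcK, hr]

lemma bz_root (hirr : ∀ v, ¬ A v v)
    (Heven : ∀ r, root A hsym r = r → ∑ v ∈ compF A hsym r, tz Tstar v = 0)
    (r : V) (hr : root A hsym r = r) : bz A hsym Tstar r = 0 := by
  have hS : ∑ v ∈ compF A hsym r, bz A hsym Tstar v
      = ∑ v ∈ compF A hsym r, tz Tstar v
        + ∑ v ∈ compF A hsym r, ∑ c ∈ children A hsym v, bz A hsym Tstar c := by
    rw [← Finset.sum_add_distrib]
    exact Finset.sum_congr rfl (fun v _ => bit_rec A hsym Tstar v)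
  rw [sum_children_eq A hsym hirr r hr, Heven r hr, zero_add] at hS
  have h2 : ∑ v ∈ compF A hsym r, bz A hsym Tstar v
      = bz A hsym Tstar r + ∑ v ∈ (compF A hsym r).erase r, bz A hsym Tstar v :=
    (Finset.add_sum_erase _ _ (self_mem_compF A hsym r)).symm
  rw [h2] at hS
  linear_combination hS

lemma bit_root_false (hirr : ∀ v, ¬ A v v)
    (Heven : ∀ r, root A hsym r = r → ∑ v ∈ compF A hsym r, tz Tstar v = 0)
    (r : V) (hr : root A hsym r = r) : ¬ (bit A hsym Tstar r = true) := by
  have h := bz_root A hsym Tstar hirr Heven r hr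
  rw [bz] at h
  intro hb
  rw [if_pos hb] at h
  exact one_ne_zero h

noncomputable def Fch (v : V) : Finset V :=
  (children A hsym v).filter (fun c => bit A hsym Tstar c = true)

lemma Kz (v : V) : (((Fch A hsym Tstar v).card : ZMod 2))
    = bz A hsym Tstar v + tz Tstar v := by
  have hsum : (((Fch A hsym Tstar v).card : ZMod 2))
      = ∑ c ∈ children A hsym v, bz A hsym Tstar c := by
    rw [Fch, Finset.card_filter]
    push_cast
    apply Finset.sum_congr rfl
    intro c _
    by_cases hb : bit A hsym Tstar c = true <;> simp [bz, hb]
  rw [hsum]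
  have hrec := bit_rec A hsym Tstar v
  linear_combination (-1 : ZMod 2) * hrec - tz Tstar v * two_zmod2

noncomputable def spc (x : V) : V :=
  if h : (Fch A hsym Tstar x).Nonempty then h.choose else x

lemma spc_mem {x : V} (h : (Fch A hsym Tstar x).Nonempty) :
    spc A hsym Tstar x ∈ Fch A hsym Tstar x := by
  rw [spc, dif_pos h]
  exact h.choose_spec

noncomputable def col : V → Bool := fun v =>
  if hv : v = root A hsym v then false
  else
    if bit A hsym Tstar (p A hsym v) = true then
      (if p A hsym v ∈ Tstar then col (p A hsym v) else !(col (p A hsym v)))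
    else (if p A hsym v ∈ Tstar then false
          else decide (v = spc A hsym Tstar (p A hsym v)))
termination_by v => rank A hsym v
decreasing_by all_goals exact rank_p A hsym hv

lemma col_child {c v : V} (h : c ∈ children A hsym v) :
    col A hsym Tstar c = if bit A hsym Tstar v = true then
      (if v ∈ Tstar then col A hsym Tstar v else !(col A hsym Tstar v))
    else (if v ∈ Tstar then false else decide (c = spc A hsym Tstar v)) := by
  conv_lhs => rw [col]
  rw [dif_neg (child_ne_root A hsym h)]
  rw [(mem_children A hsym).1 h |>.1]


lemma forest_count (hirr : ∀ v, ¬ A v v)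
    (Heven : ∀ r, root A hsym r = r → ∑ v ∈ compF A hsym r, tz Tstar v = 0)
    (v : V) (b : Bool) :
    Odd ((if (v ≠ root A hsym v ∧ bit A hsym Tstar v = true ∧ col A hsym Tstar v = b)
          then 1 else 0)
      + ((Fch A hsym Tstar v).filter (fun c => col A hsym Tstar c = b)).card)
    ∨ ((if (v ≠ root A hsym v ∧ bit A hsym Tstar v = true ∧ col A hsym Tstar v = b)
          then 1 else 0)
      + ((Fch A hsym Tstar v).filter (fun c => col A hsym Tstar c = b)).card) = 0 := by
  have hKz := Kz A hsym Tstar v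
  have hFchsub : ∀ c ∈ Fch A hsym Tstar v, c ∈ children A hsym v :=
    fun c hc => (Finset.mem_filter.1 hc).1
  by_cases hvb : v ≠ root A hsym v ∧ bit A hsym Tstar v = true
  · have hbz1 : bz A hsym Tstar v = 1 := by rw [bz, if_pos hvb.2]
    have hun : ∀ c ∈ Fch A hsym Tstar v, col A hsym Tstar c
        = (if v ∈ Tstar then col A hsym Tstar v else !(col A hsym Tstar v)) := by
      intro c hc
      rw [col_child A hsym Tstar (hFchsub c hc), if_pos hvb.2]
    by_cases hb : (if v ∈ Tstar then col A hsym Tstar v else !(col A hsym Tstar v)) = b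
    · have hcf : (Fch A hsym Tstar v).filter (fun c => col A hsym Tstar c = b)
          = Fch A hsym Tstar v :=
        Finset.filter_true_of_mem (fun c hc => by rw [hun c hc, hb])
      rw [hcf]
      by_cases hT : v ∈ Tstar
      · have hcolv : col A hsym Tstar v = b := by rw [← hb, if_pos hT]
        rw [if_pos ⟨hvb.1, hvb.2, hcolv⟩]
        left
        have hKeven : Even (Fch A hsym Tstar v).card := by
          rw [← zmod2_zero_iff, hKz, hbz1, tz, if_pos hT]
          decide
        rw [Nat.even_iff] at hKeven
        rw [Nat.odd_iff]
        omega
      · have hcolv : ¬ (col A hsym Tstar v = b) := by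
          rw [← hb, if_neg hT]
          cases (col A hsym Tstar v) <;> simp
        rw [if_neg (by tauto)]
        left
        have hKodd : Odd (Fch A hsym Tstar v).card := by
          rw [← zmod2_one_iff, hKz, hbz1, tz, if_neg hT]
          decide
        simpa using hKodd
    · have hcf : (Fch A hsym Tstar v).filter (fun c => col A hsym Tstar c = b) = ∅ :=
        Finset.filter_false_of_mem (fun c hc => by rw [hun c hc]; exact hb)
      rw [hcf]
      by_cases hT : v ∈ Tstar
      · have hcolv : ¬ (col A hsym Tstar v = b) := by
          intro h
          apply hb
          rw [if_pos hT]
          exact h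
        rw [if_neg (by tauto)]
        right
        simp
      · have hcolv : col A hsym Tstar v = b := by
          rw [if_neg hT] at hb
          cases hcb : col A hsym Tstar v <;> cases b <;> simp_all
        rw [if_pos ⟨hvb.1, hvb.2, hcolv⟩]
        left
        simpa using odd_one
  · have hbitv : ¬ (bit A hsym Tstar v = true) := by
      intro hbit
      apply hvb
      refine ⟨?_, hbit⟩
      intro hroot
      exact bit_root_false A hsym Tstar hirr Heven v hroot.symm hbit
    have hbz0 : bz A hsym Tstar v = 0 := by rw [bz, if_neg hbitv]
    rw [if_neg (by tauto)]
    have hun : ∀ c ∈ Fch A hsym Tstar v, col A hsym Tstar c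
        = (if v ∈ Tstar then false else decide (c = spc A hsym Tstar v)) := by
      intro c hc
      rw [col_child A hsym Tstar (hFchsub c hc), if_neg hbitv]
    by_cases hT : v ∈ Tstar
    · have hKodd : Odd (Fch A hsym Tstar v).card := by
        rw [← zmod2_one_iff, hKz, hbz0, tz, if_pos hT]
        decide
      cases b
      · have hcf : (Fch A hsym Tstar v).filter (fun c => col A hsym Tstar c = false)
            = Fch A hsym Tstar v :=
          Finset.filter_true_of_mem (fun c hc => by rw [hun c hc, if_pos hT])
        rw [hcf]
        left
        simpa using hKodd
      · have hcf : (Fch A hsym Tstar v).filter (fun c => col A hsym Tstar c = true) = ∅ :=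
          Finset.filter_false_of_mem (fun c hc => by rw [hun c hc, if_pos hT]; simp)
        rw [hcf]
        right
        simp
    · have hKeven : Even (Fch A hsym Tstar v).card := by
        rw [← zmod2_zero_iff, hKz, hbz0, tz, if_neg hT]
        decide
      by_cases hne : (Fch A hsym Tstar v).Nonempty
      · have hsp := spc_mem A hsym Tstar hne
        cases b
        · have hcf : (Fch A hsym Tstar v).filter (fun c => col A hsym Tstar c = false)
              = (Fch A hsym Tstar v).erase (spc A hsym Tstar v) := by
            ext c
            rw [Finset.mem_filter, Finset.mem_erase]
            constructor
            · rintro ⟨hc, hcol⟩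
              refine ⟨?_, hc⟩
              intro he
              rw [hun c hc, if_neg hT, he] at hcol
              simp at hcol
            · rintro ⟨hne', hc⟩
              refine ⟨hc, ?_⟩
              rw [hun c hc, if_neg hT]
              simp [hne']
          rw [hcf, Finset.card_erase_of_mem hsp]
          left
          have hK1 : 1 ≤ (Fch A hsym Tstar v).card := Finset.card_pos.2 hne
          rw [Nat.even_iff] at hKeven
          rw [Nat.odd_iff]
          omega
        · have hcf : (Fch A hsym Tstar v).filter (fun c => col A hsym Tstar c = true)
              = {spc A hsym Tstar v} := by
            ext c
            rw [Finset.mem_filter, Finset.mem_singleton]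
            constructor
            · rintro ⟨hc, hcol⟩
              rw [hun c hc, if_neg hT] at hcol
              exact of_decide_eq_true hcol
            · intro he
              subst he
              exact ⟨hsp, by rw [hun _ hsp, if_neg hT]; simp⟩
          rw [hcf]
          left
          simpa using odd_one
      · have h0 : Fch A hsym Tstar v = ∅ := Finset.not_nonempty_iff_eq_empty.1 hne
        rw [h0]
        right
        simp


noncomputable def degA (v : V) : ℕ := (univ.filter (fun u => A v u)).card

lemma adj_root_eq {u v : V} (h : A v u) : root A hsym u = root A hsym v :=
  root_eq_of_reach A hsym (Relation.ReflTransGen.single (hsym h))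

lemma adj_mem_compF {u v : V} (h : A v u) : u ∈ compF A hsym v := by
  simp only [compF, Finset.mem_filter, Finset.mem_univ, true_and]
  exact adj_root_eq A hsym h

lemma deg_eq_comp {r v : V} (hv : v ∈ compF A hsym r) :
    degA A v = ((compF A hsym r).filter (fun u => A v u)).card := by
  simp only [compF, Finset.mem_filter, Finset.mem_univ, true_and] at hv
  rw [degA]
  congr 1
  ext u
  simp only [Finset.mem_filter, Finset.mem_univ, true_and, compF]
  constructor
  · intro h
    exact ⟨by rw [adj_root_eq A hsym h, hv], h⟩
  · exact fun h => h.2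

lemma sum_deg_comp (hirr : ∀ v, ¬ A v v) (r : V) :
    ∑ v ∈ compF A hsym r, ((degA A v : ZMod 2)) = 0 := by
  classical
  set K := compF A hsym r with hK
  set S := (K ×ˢ K).filter (fun x : V × V => A x.1 x.2) with hS
  have hcards : ∑ v ∈ K, degA A v = S.card := by
    rw [Finset.card_eq_sum_card_fiberwise (f := Prod.fst) (t := K)
      (fun x hx => (Finset.mem_product.1 (Finset.mem_filter.1 hx).1).1)]
    apply Finset.sum_congr rfl
    intro v hv
    rw [deg_eq_comp A hsym hv]
    apply Finset.card_bij (fun u _ => (v, u)) ?mem ?inj ?surj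
    case mem =>
      intro u hu
      simp only [hS, Finset.mem_filter, Finset.mem_product] at hu ⊢
      exact ⟨⟨⟨hv, hu.1⟩, hu.2⟩, trivial⟩
    case inj =>
      intro u _ u' _ he
      exact (Prod.ext_iff.1 he).2
    case surj =>
      intro x hx
      obtain ⟨x1, x2⟩ := x
      simp only [hS, Finset.mem_filter, Finset.mem_product] at hx
      obtain ⟨⟨⟨_, hx2K⟩, hxA⟩, hx1⟩ := hx
      subst hx1
      exact ⟨x2, Finset.mem_filter.2 ⟨hx2K, hxA⟩, rfl⟩
  have hcast : ∑ v ∈ K, ((degA A v : ZMod 2)) = (S.card : ZMod 2) := by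
    rw [← hcards]
    push_cast
    rfl
  rw [hcast, Finset.card_eq_sum_ones]
  push_cast
  refine Finset.sum_involution (fun a _ => a.swap) ?h1 ?h2 ?h3 ?h4
  · intro a _
    show (1 : ZMod 2) + 1 = 0
    decide
  · intro a ha _ he
    have h1 : a.2 = a.1 := (Prod.ext_iff.1 he).1
    have haA : A a.1 a.2 := (Finset.mem_filter.1 ha).2
    rw [h1] at haA
    exact hirr a.1 haA
  · intro a ha
    simp only [hS, Finset.mem_filter, Finset.mem_product] at ha ⊢
    exact ⟨⟨ha.1.2, ha.1.1⟩, hsym ha.2⟩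
  · intro a _
    exact Prod.swap_swap a

noncomputable def wOf (v : V) : V :=
  if h : (compF A hsym v).Nonempty then
    (Finset.exists_max_image (compF A hsym v) (rank A hsym) h).choose
  else v

lemma wOf_spec (v : V) : wOf A hsym v ∈ compF A hsym v ∧
    ∀ u ∈ compF A hsym v, rank A hsym u ≤ rank A hsym (wOf A hsym v) := by
  have hne : (compF A hsym v).Nonempty := ⟨v, self_mem_compF A hsym v⟩
  rw [wOf, dif_pos hne]
  obtain ⟨h1, h2⟩ := (Finset.exists_max_image (compF A hsym v) (rank A hsym) hne).choose_spec
  exact ⟨h1, h2⟩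

lemma wOf_congr {u v : V} (h : root A hsym u = root A hsym v) :
    wOf A hsym u = wOf A hsym v := by
  have hK := compF_congr A hsym h
  have hneu : (compF A hsym u).Nonempty := ⟨u, self_mem_compF A hsym u⟩
  have hnev : (compF A hsym v).Nonempty := ⟨v, self_mem_compF A hsym v⟩
  rw [wOf, wOf, dif_pos hneu, dif_pos hnev]
  simp only [hK]

lemma wOf_children_empty (v : V) : children A hsym (wOf A hsym v) = ∅ := by
  rw [Finset.eq_empty_iff_forall_notMem]
  intro c hc
  have h1 : rank A hsym (wOf A hsym v) < rank A hsym c := rank_lt_of_child A hsym hc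
  have hc2 : c ∈ compF A hsym v := by
    simp only [compF, Finset.mem_filter, Finset.mem_univ, true_and]
    rw [root_of_child A hsym hc]
    have := (wOf_spec A hsym v).1
    simp only [compF, Finset.mem_filter, Finset.mem_univ, true_and] at this
    exact this
  exact absurd ((wOf_spec A hsym v).2 c hc2) (by omega)

lemma wOf_ne_root {v : V} (h1 : 1 < (compF A hsym v).card) :
    wOf A hsym v ≠ root A hsym (wOf A hsym v) := by
  obtain ⟨u, hu, hune⟩ := Finset.exists_mem_ne h1 (root A hsym v)
  have huroot : root A hsym u = root A hsym v := by
    simpa [compF] using hu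
  have hu0 : rank A hsym u ≠ 0 := by
    intro h0
    apply hune
    have := (rank_eq_zero_iff A hsym).1 h0
    rw [this, huroot]
  have hrk := (wOf_spec A hsym v).2 u hu
  intro he
  have : rank A hsym (wOf A hsym v) = 0 := (rank_eq_zero_iff A hsym).2 he
  omega

noncomputable def degH (v w : V) : ℕ := degA A v - (if A v w then 1 else 0)

lemma degH_cast {v w : V} :
    ((degH A v w : ZMod 2)) = (degA A v : ZMod 2) - (if A v w then 1 else 0) := by
  rw [degH]
  by_cases h : A v w
  · have h1 : 1 ≤ degA A v := by
      rw [degA]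
      apply Finset.card_pos.2
      exact ⟨w, by simp [h]⟩
    rw [if_pos h, if_pos h, Nat.cast_sub h1]
    norm_num
  · rw [if_neg h, if_neg h]
    norm_num

noncomputable def TstarPred (v : V) : Prop :=
  if Odd ((compF A hsym v).card) ∧ 1 < (compF A hsym v).card then
    (if v = wOf A hsym v then Even (degA A (wOf A hsym v))
     else if Odd (degA A (wOf A hsym v)) then Even (degH A v (wOf A hsym v))
     else ((Even (degH A v (wOf A hsym v))) ↔ ¬ (v = p A hsym (wOf A hsym v))))
  else if Even ((compF A hsym v).card) then Even (degA A v) else False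

noncomputable def TstarS : Finset V := univ.filter (TstarPred A hsym)


lemma root_mem_iff {r v : V} (hr : root A hsym r = r) :
    v ∈ compF A hsym r ↔ root A hsym v = root A hsym r := by
  simp [compF]

lemma TstarS_even (hirr : ∀ v, ¬ A v v) (r : V) (hr : root A hsym r = r) :
    ∑ v ∈ compF A hsym r, tz (TstarS A hsym) v = 0 := by
  have htz : ∀ v, tz (TstarS A hsym) v = if TstarPred A hsym v then (1:ZMod 2) else 0 := by
    intro v
    rw [tz, TstarS]
    by_cases h : TstarPred A hsym v <;> simp [h]
  have hrootv : ∀ v ∈ compF A hsym r, root A hsym v = root A hsym r := by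
    intro v hv
    simpa [compF] using hv
  have hcompv : ∀ v ∈ compF A hsym r, compF A hsym v = compF A hsym r := by
    intro v hv
    exact compF_congr A hsym (hrootv v hv)
  rw [Finset.sum_congr rfl (fun v _ => htz v)]
  by_cases hodd : Odd (compF A hsym r).card ∧ 1 < (compF A hsym r).card
  · -- odd component of size ≥ 3
    have hwK : wOf A hsym r ∈ compF A hsym r := (wOf_spec A hsym r).1
    have hwnr : wOf A hsym r ≠ root A hsym (wOf A hsym r) := wOf_ne_root A hsym hodd.2
    have hrootw : root A hsym (wOf A hsym r) = root A hsym r := hrootv _ hwK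
    have hx0K : p A hsym (wOf A hsym r) ∈ compF A hsym r := by
      rw [root_mem_iff A hsym hr, root_p A hsym hwnr]
      exact hrootw
    have hx0w : p A hsym (wOf A hsym r) ≠ wOf A hsym r := p_ne A hsym hirr hwnr
    have hwOfv : ∀ v ∈ compF A hsym r, wOf A hsym v = wOf A hsym r := by
      intro v hv
      exact wOf_congr A hsym (hrootv v hv)
    rw [← Finset.add_sum_erase _ _ hwK]
    have htzw : (if TstarPred A hsym (wOf A hsym r) then (1:ZMod 2) else 0)
        = (if Odd (degA A (wOf A hsym r)) then 0 else 1) := by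
      have h1 : TstarPred A hsym (wOf A hsym r) ↔ Even (degA A (wOf A hsym r)) := by
        rw [TstarPred, hcompv _ hwK, hwOfv _ hwK, if_pos hodd, if_pos rfl]
      by_cases hE : Even (degA A (wOf A hsym r))
      · rw [if_pos (h1.2 hE), if_neg (by rwa [Nat.not_odd_iff_even])]
      · rw [if_neg (fun h => hE (h1.1 h)), if_pos (Nat.not_even_iff_odd.1 hE)]
    have hformula : ∀ v ∈ (compF A hsym r).erase (wOf A hsym r),
        (if TstarPred A hsym v then (1:ZMod 2) else 0)
        = 1 + ((degA A v : ZMod 2) - (if A v (wOf A hsym r) then 1 else 0))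
            + (if Odd (degA A (wOf A hsym r)) then 0
               else (if v = p A hsym (wOf A hsym r) then 1 else 0)) := by
      intro v hv
      obtain ⟨hvw, hvK⟩ := Finset.mem_erase.1 hv
      have hdegH : ((degH A v (wOf A hsym r) : ZMod 2))
          = (degA A v : ZMod 2) - (if A v (wOf A hsym r) then 1 else 0) := degH_cast A
      rw [← hdegH]
      have hpred : TstarPred A hsym v ↔ (if Odd (degA A (wOf A hsym r))
          then Even (degH A v (wOf A hsym r))
          else ((Even (degH A v (wOf A hsym r))) ↔ ¬ (v = p A hsym (wOf A hsym r)))) := by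
        rw [TstarPred, hcompv v hvK, hwOfv v hvK, if_pos hodd, if_neg hvw]
      by_cases hOd : Odd (degA A (wOf A hsym r))
      · rw [if_pos hOd, add_zero]
        by_cases hE : Even (degH A v (wOf A hsym r))
        · rw [if_pos (hpred.2 (by rw [if_pos hOd]; exact hE)),
            (zmod2_zero_iff _).2 hE]
          norm_num
        · rw [if_neg (fun h => hE (by have := hpred.1 h; rwa [if_pos hOd] at this)),
            (zmod2_one_iff _).2 (Nat.not_even_iff_odd.1 hE)]
          decide
      · rw [if_neg hOd]
        have hpred' : TstarPred A hsym v ↔ ((Even (degH A v (wOf A hsym r)))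
            ↔ ¬ (v = p A hsym (wOf A hsym r))) := by
          rw [hpred, if_neg hOd]
        by_cases hE : Even (degH A v (wOf A hsym r)) <;>
          by_cases hvx : v = p A hsym (wOf A hsym r)
        · rw [if_neg (fun h => (hpred'.1 h).1 hE hvx), (zmod2_zero_iff _).2 hE, if_pos hvx]
          decide
        · rw [if_pos (hpred'.2 (iff_of_true hE hvx)), (zmod2_zero_iff _).2 hE, if_neg hvx]
          norm_num
        · rw [if_pos (hpred'.2 (iff_of_false hE (not_not_intro hvx))),
            (zmod2_one_iff _).2 (Nat.not_even_iff_odd.1 hE), if_pos hvx]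
          decide
        · rw [if_neg (by
              intro h
              have := (hpred'.1 h).2 hvx
              exact hE this),
            (zmod2_one_iff _).2 (Nat.not_even_iff_odd.1 hE), if_neg hvx]
          decide
    rw [Finset.sum_congr rfl hformula]
    have hsum1 : ∑ _v ∈ (compF A hsym r).erase (wOf A hsym r), (1 : ZMod 2)
        = (((compF A hsym r).card - 1 : ℕ) : ZMod 2) := by
      rw [Finset.sum_const, Finset.card_erase_of_mem hwK, nsmul_eq_mul, mul_one]
    have hsum2 : ∑ v ∈ (compF A hsym r).erase (wOf A hsym r), ((degA A v : ZMod 2))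
        = ∑ v ∈ compF A hsym r, ((degA A v : ZMod 2)) - (degA A (wOf A hsym r) : ZMod 2) := by
      have h := Finset.add_sum_erase (compF A hsym r)
        (fun v => (degA A v : ZMod 2)) hwK
      linear_combination h
    have hsum3 : ∑ v ∈ (compF A hsym r).erase (wOf A hsym r),
        (if A v (wOf A hsym r) then (1:ZMod 2) else 0)
        = (degA A (wOf A hsym r) : ZMod 2) := by
      have hset : ((compF A hsym r).erase (wOf A hsym r)).filter
            (fun v => A v (wOf A hsym r))
          = univ.filter (fun u => A (wOf A hsym r) u) := by
        ext u
        simp only [Finset.mem_filter, Finset.mem_erase, Finset.mem_univ, true_and]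
        constructor
        · rintro ⟨⟨_, _⟩, hA⟩
          exact hsym hA
        · intro hA
          refine ⟨⟨fun he => hirr (wOf A hsym r) (he ▸ hA), ?_⟩, hsym hA⟩
          rw [root_mem_iff A hsym hr, adj_root_eq A hsym hA, hrootw]
      calc ∑ v ∈ (compF A hsym r).erase (wOf A hsym r),
            (if A v (wOf A hsym r) then (1:ZMod 2) else 0)
          = ((((compF A hsym r).erase (wOf A hsym r)).filter
              (fun v => A v (wOf A hsym r))).card : ZMod 2) := by
            rw [Finset.card_filter]
            push_cast
            rfl
        _ = (degA A (wOf A hsym r) : ZMod 2) := by rw [hset, degA]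
    have hsum4 : ∑ v ∈ (compF A hsym r).erase (wOf A hsym r),
        (if Odd (degA A (wOf A hsym r)) then (0:ZMod 2)
         else (if v = p A hsym (wOf A hsym r) then 1 else 0))
        = (if Odd (degA A (wOf A hsym r)) then 0 else 1) := by
      by_cases hOd : Odd (degA A (wOf A hsym r))
      · simp [hOd]
      · simp only [hOd, if_false]
        rw [Finset.sum_ite_eq' ((compF A hsym r).erase (wOf A hsym r))
          (p A hsym (wOf A hsym r)) (fun _ => (1:ZMod 2))]
        rw [if_pos (Finset.mem_erase.2 ⟨hx0w, hx0K⟩)]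
    have hdeg0 : ∑ v ∈ compF A hsym r, ((degA A v : ZMod 2)) = 0 :=
      sum_deg_comp A hsym hirr r
    have hn1 : (((compF A hsym r).card - 1 : ℕ) : ZMod 2) = 0 := by
      rw [zmod2_zero_iff, Nat.even_iff]
      have h1 := hodd.1
      rw [Nat.odd_iff] at h1
      have h2 := hodd.2
      omega
    rw [Finset.sum_add_distrib, Finset.sum_add_distrib, Finset.sum_sub_distrib,
      hsum1, hsum2, hsum3, hsum4, hdeg0, hn1, htzw]
    by_cases hOd : Odd (degA A (wOf A hsym r))
    · simp only [hOd, if_true, if_pos hOd]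
      linear_combination (-(degA A (wOf A hsym r) : ZMod 2)) * two_zmod2
    · simp only [hOd, if_false, if_neg hOd]
      linear_combination (1 - (degA A (wOf A hsym r) : ZMod 2)) * two_zmod2
  · by_cases heven : Even (compF A hsym r).card
    · have hp : ∀ v ∈ compF A hsym r, (if TstarPred A hsym v then (1:ZMod 2) else 0)
          = 1 + (degA A v : ZMod 2) := by
        intro v hvK
        have hpred : TstarPred A hsym v ↔ Even (degA A v) := by
          rw [TstarPred, hcompv v hvK, if_neg hodd, if_pos heven]
        by_cases hE : Even (degA A v)
        · rw [if_pos (hpred.2 hE), (zmod2_zero_iff _).2 hE]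
          norm_num
        · rw [if_neg (fun h => hE (hpred.1 h)),
            (zmod2_one_iff _).2 (Nat.not_even_iff_odd.1 hE)]
          decide
      rw [Finset.sum_congr rfl hp, Finset.sum_add_distrib]
      rw [sum_deg_comp A hsym hirr r, add_zero, Finset.sum_const, nsmul_eq_mul, mul_one]
      exact (zmod2_zero_iff _).2 heven
    · have hp : ∀ v ∈ compF A hsym r, (if TstarPred A hsym v then (1:ZMod 2) else 0) = 0 := by
        intro v hvK
        have hpred : ¬ TstarPred A hsym v := by
          rw [TstarPred, hcompv v hvK, if_neg hodd, if_neg heven]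
          exact fun h => h
        rw [if_neg hpred]
      rw [Finset.sum_congr rfl hp]
      exact Finset.sum_const_zero


end Graph

def cF : Bool → Fin 4 := fun b => if b then 1 else 0

lemma cF_inj {a b : Bool} (h : cF a = cF b) : a = b := by
  cases a <;> cases b <;> first | rfl | (exfalso; revert h; decide)

lemma three_ne_cF (b : Bool) : (3 : Fin 4) ≠ cF b := by cases b <;> decide

lemma two_ne_cF (b : Bool) : (2 : Fin 4) ≠ cF b := by cases b <;> decide

section Chi
variable (A : V → V → Prop) (hsym : Symmetric A)

noncomputable def isW (v : V) : Prop :=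
  (Odd ((compF A hsym v).card) ∧ 1 < (compF A hsym v).card) ∧ v = wOf A hsym v

noncomputable def gcol (v u : V) : Fin 4 :=
  if p A hsym v = u ∧ v ≠ root A hsym v ∧ bit A hsym (TstarS A hsym) v = true then
    cF (col A hsym (TstarS A hsym) v)
  else if p A hsym u = v ∧ u ≠ root A hsym u ∧ bit A hsym (TstarS A hsym) u = true then
    cF (col A hsym (TstarS A hsym) u)
  else if isW A hsym v ∨ isW A hsym u then 3 else 2

lemma gcol_not_both {v u : V}
    (h1 : p A hsym v = u ∧ v ≠ root A hsym v ∧ bit A hsym (TstarS A hsym) v = true)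
    (h2 : p A hsym u = v ∧ u ≠ root A hsym u ∧ bit A hsym (TstarS A hsym) u = true) :
    False := by
  have r1 : rank A hsym u < rank A hsym v := h1.1 ▸ rank_p A hsym h1.2.1
  have r2 : rank A hsym v < rank A hsym u := h2.1 ▸ rank_p A hsym h2.2.1
  omega

lemma gcol_symm (v u : V) : gcol A hsym v u = gcol A hsym u v := by
  by_cases h1 : p A hsym v = u ∧ v ≠ root A hsym v ∧ bit A hsym (TstarS A hsym) v = true
  · by_cases h2 : p A hsym u = v ∧ u ≠ root A hsym u ∧ bit A hsym (TstarS A hsym) u = true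
    · exact absurd (gcol_not_both A hsym h1 h2) (fun h => h)
    · rw [gcol, gcol, if_pos h1, if_neg h2, if_pos h1]
  · by_cases h2 : p A hsym u = v ∧ u ≠ root A hsym u ∧ bit A hsym (TstarS A hsym) u = true
    · rw [gcol, gcol, if_neg h1, if_pos h2, if_pos h2]
    · rw [gcol, gcol, if_neg h1, if_neg h2, if_neg h2, if_neg h1]
      by_cases h3 : isW A hsym v ∨ isW A hsym u
      · rw [if_pos h3, if_pos (Or.symm h3)]
      · rw [if_neg h3, if_neg (fun h => h3 (Or.symm h))]

lemma Nb_eq (hirr : ∀ v, ¬ A v v) (v : V) (b : Bool) :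
    univ.filter (fun u => A v u ∧ gcol A hsym v u = cF b)
      = (if v ≠ root A hsym v ∧ bit A hsym (TstarS A hsym) v = true
            ∧ col A hsym (TstarS A hsym) v = b then {p A hsym v} else ∅)
        ∪ (Fch A hsym (TstarS A hsym) v).filter
            (fun c => col A hsym (TstarS A hsym) c = b) := by
  ext u
  simp only [Finset.mem_filter, Finset.mem_univ, true_and, Finset.mem_union]
  constructor
  · rintro ⟨hA, hg⟩
    rw [gcol] at hg
    by_cases h1 : p A hsym v = u ∧ v ≠ root A hsym v
        ∧ bit A hsym (TstarS A hsym) v = true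
    · rw [if_pos h1] at hg
      left
      rw [if_pos ⟨h1.2.1, h1.2.2, cF_inj hg⟩]
      simp [← h1.1]
    · rw [if_neg h1] at hg
      by_cases h2 : p A hsym u = v ∧ u ≠ root A hsym u
          ∧ bit A hsym (TstarS A hsym) u = true
      · rw [if_pos h2] at hg
        right
        refine ⟨?_, cF_inj hg⟩
        rw [Fch, Finset.mem_filter]
        refine ⟨(mem_children A hsym).2 ⟨h2.1, ?_⟩, h2.2.2⟩
        intro he
        exact hirr v (he ▸ hA)
      · rw [if_neg h2] at hg
        exfalso
        by_cases h3 : isW A hsym v ∨ isW A hsym u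
        · rw [if_pos h3] at hg
          exact three_ne_cF b hg
        · rw [if_neg h3] at hg
          exact two_ne_cF b hg
  · intro h
    rcases h with h | h
    · by_cases hc : v ≠ root A hsym v ∧ bit A hsym (TstarS A hsym) v = true
          ∧ col A hsym (TstarS A hsym) v = b
      · rw [if_pos hc] at h
        have hu : u = p A hsym v := Finset.mem_singleton.1 h
        subst hu
        refine ⟨hsym (p_adj A hsym hc.1), ?_⟩
        rw [gcol, if_pos ⟨rfl, hc.1, hc.2.1⟩, hc.2.2]
      · rw [if_neg hc] at h
        exact absurd h (Finset.notMem_empty u)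
    · obtain ⟨huF, hcolu⟩ := h
      have hFch := Finset.mem_filter.1 huF
      have hch := (mem_children A hsym).1 hFch.1
      refine ⟨adj_of_child A hsym hFch.1, ?_⟩
      rw [gcol]
      have h1 : ¬(p A hsym v = u ∧ v ≠ root A hsym v
          ∧ bit A hsym (TstarS A hsym) v = true) := by
        rintro ⟨hpv, hvr, _⟩
        have r1 : rank A hsym u < rank A hsym v := hpv ▸ rank_p A hsym hvr
        have r2 : rank A hsym v < rank A hsym u := rank_lt_of_child A hsym hFch.1
        omega
      rw [if_neg h1, if_pos ⟨hch.1, child_ne_root A hsym hFch.1, hFch.2⟩, hcolu]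


lemma card_ite_singleton (c : Prop) [Decidable c] (x : V) :
    (if c then ({x} : Finset V) else ∅).card = if c then 1 else 0 := by
  by_cases h : c <;> simp [h]

lemma mem_TstarS {v : V} : v ∈ TstarS A hsym ↔ TstarPred A hsym v := by
  simp [TstarS]

lemma bit_wOf (x : V) : bit A hsym (TstarS A hsym) (wOf A hsym x) = true
    ↔ TstarPred A hsym (wOf A hsym x) := by
  have hrec := bit_rec A hsym (TstarS A hsym) (wOf A hsym x)
  rw [wOf_children_empty A hsym x, Finset.sum_empty, add_zero, bz, tz] at hrec
  constructor
  · intro hb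
    rw [if_pos hb] at hrec
    by_cases hp : wOf A hsym x ∈ TstarS A hsym
    · exact (mem_TstarS A hsym).1 hp
    · rw [if_neg hp] at hrec
      exact absurd hrec one_ne_zero
  · intro hp
    by_cases hb : bit A hsym (TstarS A hsym) (wOf A hsym x) = true
    · exact hb
    · rw [if_neg hb, if_pos ((mem_TstarS A hsym).2 hp)] at hrec
      exact absurd hrec.symm one_ne_zero

lemma isW_wOf {v : V}
    (hodd : Odd ((compF A hsym v).card) ∧ 1 < (compF A hsym v).card) :
    isW A hsym (wOf A hsym v) := by
  have hroot : root A hsym (wOf A hsym v) = root A hsym v := by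
    have := (wOf_spec A hsym v).1
    simpa [compF] using this
  have hcomp : compF A hsym (wOf A hsym v) = compF A hsym v := compF_congr A hsym hroot
  exact ⟨by rwa [hcomp], (wOf_congr A hsym hroot).symm⟩

lemma Nb_card (hirr : ∀ v, ¬ A v v) (v : V) (b : Bool) :
    (univ.filter (fun u => A v u ∧ gcol A hsym v u = cF b)).card
      = (if v ≠ root A hsym v ∧ bit A hsym (TstarS A hsym) v = true
            ∧ col A hsym (TstarS A hsym) v = b then 1 else 0)
        + ((Fch A hsym (TstarS A hsym) v).filter
            (fun c => col A hsym (TstarS A hsym) c = b)).card := by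
  rw [Nb_eq A hsym hirr v b]
  have hdisj : Disjoint
      (if v ≠ root A hsym v ∧ bit A hsym (TstarS A hsym) v = true
          ∧ col A hsym (TstarS A hsym) v = b then ({p A hsym v} : Finset V) else ∅)
      ((Fch A hsym (TstarS A hsym) v).filter
          (fun c => col A hsym (TstarS A hsym) c = b)) := by
    rw [Finset.disjoint_left]
    intro y hy hy2
    by_cases hc : v ≠ root A hsym v ∧ bit A hsym (TstarS A hsym) v = true
        ∧ col A hsym (TstarS A hsym) v = b
    · rw [if_pos hc, Finset.mem_singleton] at hy
      subst hy
      have hchild := (Finset.mem_filter.1 (Finset.mem_filter.1 hy2).1).1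
      have r2 := rank_lt_of_child A hsym hchild
      have r1 := rank_p A hsym hc.1
      omega
    · rw [if_neg hc] at hy
      exact absurd hy (Finset.notMem_empty _)
  rw [Finset.card_union_of_disjoint hdisj, card_ite_singleton]

lemma N3_eq_isW (hirr : ∀ v, ¬ A v v) (v : V) (hW : isW A hsym v) :
    univ.filter (fun u => A v u ∧ gcol A hsym v u = 3)
      = (univ.filter (fun u => A v u))
          \ (if bit A hsym (TstarS A hsym) v = true then {p A hsym v} else ∅) := by
  have hvnr : v ≠ root A hsym v := by
    have := wOf_ne_root A hsym hW.1.2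
    rwa [← hW.2] at this
  have hchild : children A hsym v = ∅ := by
    have := wOf_children_empty A hsym v
    rwa [← hW.2] at this
  ext u
  simp only [Finset.mem_filter, Finset.mem_univ, true_and, Finset.mem_sdiff]
  constructor
  · rintro ⟨hA, hg⟩
    refine ⟨hA, ?_⟩
    intro hmem
    by_cases hb : bit A hsym (TstarS A hsym) v = true
    · rw [if_pos hb, Finset.mem_singleton] at hmem
      rw [gcol, if_pos ⟨hmem.symm, hvnr, hb⟩] at hg
      exact three_ne_cF _ hg.symm
    · rw [if_neg hb] at hmem
      exact absurd hmem (Finset.notMem_empty u)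
  · rintro ⟨hA, hnm⟩
    refine ⟨hA, ?_⟩
    rw [gcol]
    have h1 : ¬(p A hsym v = u ∧ v ≠ root A hsym v
        ∧ bit A hsym (TstarS A hsym) v = true) := by
      rintro ⟨hpv, _, hb⟩
      exact hnm (by rw [if_pos hb]; exact Finset.mem_singleton.2 hpv.symm)
    have h2 : ¬(p A hsym u = v ∧ u ≠ root A hsym u
        ∧ bit A hsym (TstarS A hsym) u = true) := by
      rintro ⟨hpu, hur, _⟩
      have hmm : u ∈ children A hsym v :=
        (mem_children A hsym).2 ⟨hpu, fun he => hirr v (he ▸ hA)⟩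
      rw [hchild] at hmm
      exact absurd hmm (Finset.notMem_empty u)
    rw [if_neg h1, if_neg h2, if_pos (Or.inl hW)]

lemma N3_eq_notW (hirr : ∀ v, ¬ A v v) (v : V) (hW : ¬ isW A hsym v) :
    univ.filter (fun u => A v u ∧ gcol A hsym v u = 3)
      = (if ((Odd ((compF A hsym v).card) ∧ 1 < (compF A hsym v).card)
              ∧ A v (wOf A hsym v)
              ∧ ¬ (p A hsym (wOf A hsym v) = v
                    ∧ bit A hsym (TstarS A hsym) (wOf A hsym v) = true))
         then {wOf A hsym v} else ∅) := by
  ext u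
  simp only [Finset.mem_filter, Finset.mem_univ, true_and]
  constructor
  · rintro ⟨hA, hg⟩
    rw [gcol] at hg
    by_cases h1 : p A hsym v = u ∧ v ≠ root A hsym v
        ∧ bit A hsym (TstarS A hsym) v = true
    · rw [if_pos h1] at hg
      exact absurd hg.symm (three_ne_cF _)
    rw [if_neg h1] at hg
    by_cases h2 : p A hsym u = v ∧ u ≠ root A hsym u
        ∧ bit A hsym (TstarS A hsym) u = true
    · rw [if_pos h2] at hg
      exact absurd hg.symm (three_ne_cF _)
    rw [if_neg h2] at hg
    by_cases h3 : isW A hsym v ∨ isW A hsym u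
    · have hWu : isW A hsym u := h3.resolve_left hW
      have hroot : root A hsym u = root A hsym v := adj_root_eq A hsym hA
      have hwu : wOf A hsym u = wOf A hsym v := wOf_congr A hsym hroot
      have hu : u = wOf A hsym v := by rw [← hwu]; exact hWu.2
      have hoddv : Odd ((compF A hsym v).card) ∧ 1 < (compF A hsym v).card := by
        have := hWu.1
        rwa [compF_congr A hsym hroot] at this
      subst hu
      rw [if_pos ⟨hoddv, hA, fun hc => h2 ⟨hc.1, by
        have hx := wOf_ne_root A hsym hWu.1.2
        rwa [hwu] at hx, hc.2⟩⟩]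
      exact Finset.mem_singleton_self _
    · rw [if_neg h3] at hg
      exact absurd hg (by decide)
  · intro h
    by_cases hc : (Odd ((compF A hsym v).card) ∧ 1 < (compF A hsym v).card)
        ∧ A v (wOf A hsym v)
        ∧ ¬ (p A hsym (wOf A hsym v) = v
              ∧ bit A hsym (TstarS A hsym) (wOf A hsym v) = true)
    · rw [if_pos hc] at h
      have hu : u = wOf A hsym v := Finset.mem_singleton.1 h
      subst hu
      obtain ⟨hoddv, hAvw, hnc⟩ := hc
      refine ⟨hAvw, ?_⟩
      rw [gcol]
      have hWw : isW A hsym (wOf A hsym v) := isW_wOf A hsym hoddv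
      have h1 : ¬(p A hsym v = wOf A hsym v ∧ v ≠ root A hsym v
          ∧ bit A hsym (TstarS A hsym) v = true) := by
        rintro ⟨hpv, hvnr, _⟩
        have hvne : v ≠ wOf A hsym v := fun he => hW ⟨hoddv, he⟩
        have hmm : v ∈ children A hsym (wOf A hsym v) :=
          (mem_children A hsym).2 ⟨hpv, hvne⟩
        rw [wOf_children_empty A hsym v] at hmm
        exact absurd hmm (Finset.notMem_empty v)
      have h2 : ¬(p A hsym (wOf A hsym v) = v ∧ wOf A hsym v ≠ root A hsym (wOf A hsym v)
          ∧ bit A hsym (TstarS A hsym) (wOf A hsym v) = true) := by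
        rintro ⟨hpu, _, hb⟩
        exact hnc ⟨hpu, hb⟩
      rw [if_neg h1, if_neg h2, if_pos (Or.inr hWw)]
    · rw [if_neg hc] at h
      exact absurd h (Finset.notMem_empty u)

lemma N2_eq_isW (v : V) (hW : isW A hsym v) :
    univ.filter (fun u => A v u ∧ gcol A hsym v u = 2) = ∅ := by
  rw [Finset.eq_empty_iff_forall_notMem]
  intro u hu
  obtain ⟨hA, hg⟩ := (Finset.mem_filter.1 hu).2
  rw [gcol] at hg
  by_cases h1 : p A hsym v = u ∧ v ≠ root A hsym v
      ∧ bit A hsym (TstarS A hsym) v = true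
  · rw [if_pos h1] at hg
    exact two_ne_cF _ hg.symm
  rw [if_neg h1] at hg
  by_cases h2 : p A hsym u = v ∧ u ≠ root A hsym u
      ∧ bit A hsym (TstarS A hsym) u = true
  · rw [if_pos h2] at hg
    exact two_ne_cF _ hg.symm
  rw [if_neg h2, if_pos (Or.inl hW)] at hg
  exact absurd hg (by decide)


lemma tz_ite (v : V) : tz (TstarS A hsym) v
    = if TstarPred A hsym v then (1:ZMod 2) else 0 := by
  rw [tz]
  by_cases h : TstarPred A hsym v <;> simp [h, mem_TstarS, TstarS]

lemma tz_even_comp (v : V) (heven : Even ((compF A hsym v).card)) :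
    tz (TstarS A hsym) v = 1 + (degA A v : ZMod 2) := by
  rw [tz_ite]
  have hpred : TstarPred A hsym v ↔ Even (degA A v) := by
    rw [TstarPred, if_neg (fun h => (Nat.not_odd_iff_even.2 heven) h.1), if_pos heven]
  by_cases hE : Even (degA A v)
  · rw [if_pos (hpred.2 hE), (zmod2_zero_iff _).2 hE]
    norm_num
  · rw [if_neg (fun h => hE (hpred.1 h)),
      (zmod2_one_iff _).2 (Nat.not_even_iff_odd.1 hE)]
    decide

lemma tz_formula (v : V)
    (hodd : Odd ((compF A hsym v).card) ∧ 1 < (compF A hsym v).card)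
    (hvw : v ≠ wOf A hsym v) :
    tz (TstarS A hsym) v
      = 1 + ((degA A v : ZMod 2) - (if A v (wOf A hsym v) then 1 else 0))
        + (if Odd (degA A (wOf A hsym v)) then 0
           else (if v = p A hsym (wOf A hsym v) then 1 else 0)) := by
  rw [tz_ite]
  have hdegH : ((degH A v (wOf A hsym v) : ZMod 2))
      = (degA A v : ZMod 2) - (if A v (wOf A hsym v) then 1 else 0) := degH_cast A
  rw [← hdegH]
  have hpred : TstarPred A hsym v ↔ (if Odd (degA A (wOf A hsym v))
      then Even (degH A v (wOf A hsym v))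
      else ((Even (degH A v (wOf A hsym v))) ↔ ¬ (v = p A hsym (wOf A hsym v)))) := by
    rw [TstarPred, if_pos hodd, if_neg hvw]
  by_cases hOd : Odd (degA A (wOf A hsym v))
  · rw [if_pos hOd, add_zero]
    by_cases hE : Even (degH A v (wOf A hsym v))
    · rw [if_pos (hpred.2 (by rw [if_pos hOd]; exact hE)), (zmod2_zero_iff _).2 hE]
      norm_num
    · rw [if_neg (fun h => hE (by have := hpred.1 h; rwa [if_pos hOd] at this)),
        (zmod2_one_iff _).2 (Nat.not_even_iff_odd.1 hE)]
      decide
  · rw [if_neg hOd]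
    have hpred' : TstarPred A hsym v ↔ ((Even (degH A v (wOf A hsym v)))
        ↔ ¬ (v = p A hsym (wOf A hsym v))) := by
      rw [hpred, if_neg hOd]
    by_cases hE : Even (degH A v (wOf A hsym v)) <;>
      by_cases hvx : v = p A hsym (wOf A hsym v)
    · rw [if_neg (fun h => (hpred'.1 h).1 hE hvx), (zmod2_zero_iff _).2 hE, if_pos hvx]
      decide
    · rw [if_pos (hpred'.2 (iff_of_true hE hvx)), (zmod2_zero_iff _).2 hE, if_neg hvx]
      norm_num
    · rw [if_pos (hpred'.2 (iff_of_false hE (not_not_intro hvx))),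
        (zmod2_one_iff _).2 (Nat.not_even_iff_odd.1 hE), if_pos hvx]
      decide
    · rw [if_neg (by
          intro h
          exact hE ((hpred'.1 h).2 hvx)),
        (zmod2_one_iff _).2 (Nat.not_even_iff_odd.1 hE), if_neg hvx]
      decide

lemma bit_wOf_even (v : V)
    (hodd : Odd ((compF A hsym v).card) ∧ 1 < (compF A hsym v).card) :
    (bit A hsym (TstarS A hsym) (wOf A hsym v) = true)
      ↔ Even (degA A (wOf A hsym v)) := by
  rw [bit_wOf A hsym v]
  have hroot : root A hsym (wOf A hsym v) = root A hsym v := by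
    have := (wOf_spec A hsym v).1
    simpa [compF] using this
  have hcomp := compF_congr A hsym hroot
  have hww : wOf A hsym (wOf A hsym v) = wOf A hsym v := wOf_congr A hsym hroot
  rw [TstarPred, hcomp, hww, if_pos hodd, if_pos rfl]

lemma N2_count_notW (hirr : ∀ v, ¬ A v v) (v : V) (hW : ¬ isW A hsym v) :
    Odd (univ.filter (fun u => A v u ∧ gcol A hsym v u = 2)).card
      ∨ (univ.filter (fun u => A v u ∧ gcol A hsym v u = 2)).card = 0 := by
  by_cases hdeg : ∀ u, ¬ A v u
  · right
    rw [Finset.card_eq_zero, Finset.eq_empty_iff_forall_notMem]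
    intro u hu
    exact hdeg u ((Finset.mem_filter.1 hu).2.1)
  push_neg at hdeg
  obtain ⟨u0, hu0⟩ := hdeg
  have hn2 : 1 < (compF A hsym v).card := by
    rw [Finset.one_lt_card]
    exact ⟨v, self_mem_compF A hsym v, u0, adj_mem_compF A hsym hu0,
      fun he => hirr v (he ▸ hu0)⟩
  left
  rw [← zmod2_one_iff]
  have hdz : (((univ.filter (fun u => A v u)).card : ℕ) : ZMod 2) = ((degA A v : ℕ) : ZMod 2) := rfl
  -- partition of the neighbourhood by colors
  have hpart : ((univ.filter (fun u => A v u)).card : ZMod 2)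
      = ∑ j : Fin 4, ((univ.filter (fun u => A v u ∧ gcol A hsym v u = j)).card : ZMod 2) := by
    rw [Finset.card_eq_sum_card_fiberwise (f := fun u => gcol A hsym v u)
      (s := univ.filter (fun u => A v u)) (t := (univ : Finset (Fin 4)))
      (fun x _ => Finset.mem_univ _)]
    push_cast
    apply Finset.sum_congr rfl
    intro j _
    congr 1
    rw [Finset.filter_filter]
  rw [Fin.sum_univ_four] at hpart
  -- colors 0 and 1
  have h0 := Nb_card A hsym hirr v false
  have h1 := Nb_card A hsym hirr v true
  rw [show cF false = (0:Fin 4) by decide] at h0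
  rw [show cF true = (1:Fin 4) by decide] at h1
  have hch : ((Fch A hsym (TstarS A hsym) v).filter
        (fun c => col A hsym (TstarS A hsym) c = false)).card
      + ((Fch A hsym (TstarS A hsym) v).filter
        (fun c => col A hsym (TstarS A hsym) c = true)).card
      = (Fch A hsym (TstarS A hsym) v).card := by
    have hneg : (Fch A hsym (TstarS A hsym) v).filter
          (fun c => col A hsym (TstarS A hsym) c = true)
        = (Fch A hsym (TstarS A hsym) v).filter
          (fun c => ¬ (col A hsym (TstarS A hsym) c = false)) := by
      apply Finset.filter_congr
      intro c _
      simp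
    rw [hneg]
    exact Finset.card_filter_add_card_filter_not
      (fun c => col A hsym (TstarS A hsym) c = false)
  have hpar : (if v ≠ root A hsym v ∧ bit A hsym (TstarS A hsym) v = true
          ∧ col A hsym (TstarS A hsym) v = false then 1 else 0)
      + (if v ≠ root A hsym v ∧ bit A hsym (TstarS A hsym) v = true
          ∧ col A hsym (TstarS A hsym) v = true then 1 else 0)
      = (if v ≠ root A hsym v ∧ bit A hsym (TstarS A hsym) v = true then 1 else 0) := by
    by_cases hc : v ≠ root A hsym v ∧ bit A hsym (TstarS A hsym) v = true
    · cases hcl : col A hsym (TstarS A hsym) v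
      · rw [if_pos ⟨hc.1, hc.2, rfl⟩, if_neg (by simp), if_pos hc]
      · rw [if_neg (by simp), if_pos ⟨hc.1, hc.2, rfl⟩, if_pos hc]

    · rw [if_neg (by tauto), if_neg (by tauto), if_neg hc]
  have hN01nat : (univ.filter (fun u => A v u ∧ gcol A hsym v u = 0)).card
      + (univ.filter (fun u => A v u ∧ gcol A hsym v u = 1)).card
      = (if v ≠ root A hsym v ∧ bit A hsym (TstarS A hsym) v = true then 1 else 0)
        + (Fch A hsym (TstarS A hsym) v).card := by
    rw [h0, h1, ← hpar, ← hch]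
    ring
  have hN01 : ((univ.filter (fun u => A v u ∧ gcol A hsym v u = 0)).card : ZMod 2)
      + ((univ.filter (fun u => A v u ∧ gcol A hsym v u = 1)).card : ZMod 2)
      = tz (TstarS A hsym) v := by
    have hc := congrArg (Nat.cast : ℕ → ZMod 2) hN01nat
    push_cast at hc
    have hKz := Kz A hsym (TstarS A hsym) v
    have hite : (if v ≠ root A hsym v ∧ bit A hsym (TstarS A hsym) v = true
        then (1 : ZMod 2) else 0) = bz A hsym (TstarS A hsym) v := by
      by_cases hvr : v = root A hsym v
      · rw [if_neg (by tauto), bz,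
          if_neg (bit_root_false A hsym (TstarS A hsym) hirr
            (TstarS_even A hsym hirr) v hvr.symm)]
      · by_cases hb : bit A hsym (TstarS A hsym) v = true
        · rw [if_pos ⟨hvr, hb⟩, bz, if_pos hb]
        · rw [if_neg (by tauto), bz, if_neg hb]
    rw [hc, hite, hKz]
    linear_combination (bz A hsym (TstarS A hsym) v) * two_zmod2
  -- color 3
  have h3 := N3_eq_notW A hsym hirr v hW
  by_cases hoddc : Odd ((compF A hsym v).card) ∧ 1 < (compF A hsym v).card
  · -- odd component
    have hvw : v ≠ wOf A hsym v := fun he => hW ⟨hoddc, he⟩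
    have hwnr : wOf A hsym v ≠ root A hsym (wOf A hsym v) := wOf_ne_root A hsym hoddc.2
    have hN3 : ((univ.filter (fun u => A v u ∧ gcol A hsym v u = 3)).card : ZMod 2)
        = (if A v (wOf A hsym v) then 1 else 0)
          + (if (p A hsym (wOf A hsym v) = v
              ∧ bit A hsym (TstarS A hsym) (wOf A hsym v) = true) then 1 else 0) := by
      rw [h3, card_ite_singleton]
      by_cases hA' : A v (wOf A hsym v) <;>
        by_cases he : (p A hsym (wOf A hsym v) = v
          ∧ bit A hsym (TstarS A hsym) (wOf A hsym v) = true)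
      · rw [if_neg (by tauto), if_pos hA', if_pos he]
        decide
      · rw [if_pos ⟨hoddc, hA', he⟩, if_pos hA', if_neg he]
        norm_num
      · exfalso
        apply hA'
        have := p_adj A hsym hwnr
        rwa [he.1] at this
      · rw [if_neg (by tauto), if_neg hA', if_neg he]
        norm_num
    have htzv := tz_formula A hsym v hoddc hvw
    have hbw := bit_wOf_even A hsym v hoddc
    have hfin : ((univ.filter (fun u => A v u ∧ gcol A hsym v u = 2)).card : ZMod 2)
        = ((univ.filter (fun u => A v u)).card : ZMod 2)
          + tz (TstarS A hsym) v
          + ((univ.filter (fun u => A v u ∧ gcol A hsym v u = 3)).card : ZMod 2) := by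
      rw [hpart, ← hN01]
      linear_combination (-(((univ.filter (fun u => A v u ∧ gcol A hsym v u = 0)).card : ZMod 2)
        + ((univ.filter (fun u => A v u ∧ gcol A hsym v u = 1)).card : ZMod 2)
        + ((univ.filter (fun u => A v u ∧ gcol A hsym v u = 3)).card : ZMod 2))) * two_zmod2
    rw [hfin, hN3, htzv]
    by_cases hOd : Odd (degA A (wOf A hsym v))
    · have hEF : (if (p A hsym (wOf A hsym v) = v
          ∧ bit A hsym (TstarS A hsym) (wOf A hsym v) = true) then (1:ZMod 2) else 0) = 0 := by
        rw [if_neg (fun he => (Nat.not_even_iff_odd.2 hOd) (hbw.1 he.2))]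
      rw [if_pos hOd, hEF]
      by_cases hA' : A v (wOf A hsym v)
      · rw [if_pos hA']
        linear_combination ((degA A v : ZMod 2)) * two_zmod2 + hdz
      · rw [if_neg hA']
        linear_combination ((degA A v : ZMod 2)) * two_zmod2 + hdz
    · rw [if_neg hOd]
      have hbw' : bit A hsym (TstarS A hsym) (wOf A hsym v) = true :=
        hbw.2 (Nat.not_odd_iff_even.1 hOd)
      have heq : (if (p A hsym (wOf A hsym v) = v
          ∧ bit A hsym (TstarS A hsym) (wOf A hsym v) = true) then (1:ZMod 2) else 0)
          = (if v = p A hsym (wOf A hsym v) then 1 else 0) := by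
        by_cases hx : v = p A hsym (wOf A hsym v)
        · rw [if_pos ⟨hx.symm, hbw'⟩, if_pos hx]
        · rw [if_neg (fun hc => hx hc.1.symm), if_neg hx]
      rw [heq]
      by_cases hA' : A v (wOf A hsym v)
      · rw [if_pos hA']
        by_cases hx : v = p A hsym (wOf A hsym v)
        · rw [if_pos hx]
          linear_combination (1 + (degA A v : ZMod 2)) * two_zmod2 + hdz
        · rw [if_neg hx]
          linear_combination ((degA A v : ZMod 2)) * two_zmod2 + hdz
      · have hx : ¬ (v = p A hsym (wOf A hsym v)) := by
          intro hx
          apply hA'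
          have := p_adj A hsym hwnr
          rwa [← hx] at this
        rw [if_neg hA', if_neg hx]
        linear_combination ((degA A v : ZMod 2)) * two_zmod2 + hdz
  · -- even component (since v has a neighbour, card ≥ 2)
    have heven : Even ((compF A hsym v).card) := by
      by_contra hne
      exact hoddc ⟨Nat.not_even_iff_odd.1 hne, hn2⟩
    have hN3 : ((univ.filter (fun u => A v u ∧ gcol A hsym v u = 3)).card : ZMod 2) = 0 := by
      rw [h3, if_neg (by tauto)]
      simp
    have htzv := tz_even_comp A hsym v heven
    have hfin : ((univ.filter (fun u => A v u ∧ gcol A hsym v u = 2)).card : ZMod 2)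
        = ((univ.filter (fun u => A v u)).card : ZMod 2)
          + tz (TstarS A hsym) v
          + ((univ.filter (fun u => A v u ∧ gcol A hsym v u = 3)).card : ZMod 2) := by
      rw [hpart, ← hN01]
      linear_combination (-(((univ.filter (fun u => A v u ∧ gcol A hsym v u = 0)).card : ZMod 2)
        + ((univ.filter (fun u => A v u ∧ gcol A hsym v u = 1)).card : ZMod 2)
        + ((univ.filter (fun u => A v u ∧ gcol A hsym v u = 3)).card : ZMod 2))) * two_zmod2
    rw [hfin, hN3, htzv]
    linear_combination (((univ.filter (fun u => A v u)).card : ZMod 2)) * two_zmod2 - hdz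

end Chi

theorem simple_main (A : V → V → Prop) (hsym : Symmetric A) (hirr : ∀ v, ¬ A v v) :
    ∃ χ : Sym2 V → Fin 4, ∀ (i : Fin 4) (v : V),
      Odd (univ.filter (fun u => A v u ∧ χ s(v, u) = i)).card
        ∨ (univ.filter (fun u => A v u ∧ χ s(v, u) = i)).card = 0 := by
  refine ⟨Sym2.lift ⟨fun a b => gcol A hsym a b, gcol_symm A hsym⟩, ?_⟩
  intro i v
  have hfe : univ.filter (fun u => A v u
        ∧ (Sym2.lift ⟨fun a b => gcol A hsym a b, gcol_symm A hsym⟩) s(v, u) = i)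
      = univ.filter (fun u => A v u ∧ gcol A hsym v u = i) := by
    apply Finset.filter_congr
    intro u _
    rw [Sym2.lift_mk]
  rw [hfe]
  have H0 : Odd (univ.filter (fun u => A v u ∧ gcol A hsym v u = (0:Fin 4))).card
      ∨ (univ.filter (fun u => A v u ∧ gcol A hsym v u = (0:Fin 4))).card = 0 := by
    have h := Nb_card A hsym hirr v false
    rw [show cF false = (0:Fin 4) from by decide] at h
    rw [h]
    exact forest_count A hsym (TstarS A hsym) hirr (TstarS_even A hsym hirr) v false
  have H1 : Odd (univ.filter (fun u => A v u ∧ gcol A hsym v u = (1:Fin 4))).card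
      ∨ (univ.filter (fun u => A v u ∧ gcol A hsym v u = (1:Fin 4))).card = 0 := by
    have h := Nb_card A hsym hirr v true
    rw [show cF true = (1:Fin 4) from by decide] at h
    rw [h]
    exact forest_count A hsym (TstarS A hsym) hirr (TstarS_even A hsym hirr) v true
  have H2 : Odd (univ.filter (fun u => A v u ∧ gcol A hsym v u = (2:Fin 4))).card
      ∨ (univ.filter (fun u => A v u ∧ gcol A hsym v u = (2:Fin 4))).card = 0 := by
    by_cases hW : isW A hsym v
    · right
      rw [N2_eq_isW A hsym v hW]
      rfl
    · exact N2_count_notW A hsym hirr v hW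
  have H3 : Odd (univ.filter (fun u => A v u ∧ gcol A hsym v u = (3:Fin 4))).card
      ∨ (univ.filter (fun u => A v u ∧ gcol A hsym v u = (3:Fin 4))).card = 0 := by
    by_cases hW : isW A hsym v
    · have hvnr : v ≠ root A hsym v := by
        have := wOf_ne_root A hsym hW.1.2
        rwa [← hW.2] at this
      rw [N3_eq_isW A hsym hirr v hW]
      have hsub : (if bit A hsym (TstarS A hsym) v = true
            then ({p A hsym v} : Finset V) else ∅)
          ⊆ univ.filter (fun u => A v u) := by
        by_cases hb : bit A hsym (TstarS A hsym) v = true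
        · rw [if_pos hb]
          intro y hy
          rw [Finset.mem_singleton] at hy
          subst hy
          simp only [Finset.mem_filter, Finset.mem_univ, true_and]
          exact hsym (p_adj A hsym hvnr)
        · rw [if_neg hb]
          exact Finset.empty_subset _
      rw [Finset.card_sdiff_of_subset hsub, card_ite_singleton]
      have hb_iff : (bit A hsym (TstarS A hsym) v = true) ↔ Even (degA A v) := by
        have h1 := bit_wOf_even A hsym v hW.1
        rwa [← hW.2] at h1
      have hdge : 1 ≤ (univ.filter (fun u => A v u)).card := by
        apply Finset.card_pos.2
        refine ⟨p A hsym v, ?_⟩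
        simp only [Finset.mem_filter, Finset.mem_univ, true_and]
        exact hsym (p_adj A hsym hvnr)
      left
      have hdd : degA A v = (univ.filter (fun u => A v u)).card := rfl
      by_cases hb : bit A hsym (TstarS A hsym) v = true
      · rw [if_pos hb]
        have hE := hb_iff.1 hb
        rw [hdd, Nat.even_iff] at hE
        rw [Nat.odd_iff]
        omega
      · rw [if_neg hb]
        have hO := Nat.not_even_iff_odd.1 (fun hE => hb (hb_iff.2 hE))
        rw [hdd, Nat.odd_iff] at hO
        rw [Nat.odd_iff]
        omega
    · rw [N3_eq_notW A hsym hirr v hW, card_ite_singleton]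
      split_ifs with hc
      · exact Or.inl odd_one
      · exact Or.inr rfl
  fin_cases i
  · exact H0
  · exact H1
  · exact H2
  · exact H3

end OddPf

lemma odd_sum_of_card {α : Type*} [Fintype α] (p : α → Prop) [DecidablePred p]
    (f : α → ℕ) (ho : ∀ a, p a → f a % 2 = 1) (h0 : ∀ a, ¬ p a → f a = 0) :
    (Odd (Finset.univ.filter p).card ∨ (Finset.univ.filter p).card = 0) →
    (Odd (∑ a, f a) ∨ (∑ a, f a) = 0) := by
  intro h
  have hsum : ∑ a, f a = ∑ a ∈ Finset.univ.filter p, f a := by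
    rw [Finset.sum_filter]
    apply Finset.sum_congr rfl
    intro a _
    by_cases hp : p a
    · rw [if_pos hp]
    · rw [if_neg hp, h0 a hp]
  rcases h with h | h
  · left
    rw [hsum, Nat.odd_iff, Finset.sum_nat_mod,
      Finset.sum_congr rfl (fun a ha => ho a ((Finset.mem_filter.1 ha).2)),
      Finset.sum_const, smul_eq_mul, mul_one]
    rw [Nat.odd_iff] at h
    exact h
  · right
    rw [hsum, Finset.card_eq_zero.1 h, Finset.sum_empty]

/-- Every finite loopless multigraph in which the number of edges between any pair of
adjacent vertices is odd admits an odd edge coloring with at most 4 colors. -/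
theorem multigraph_oddMultiplicities_oddChromaticIndex_le_four
    {V : Type*} [Fintype V] [DecidableEq V]
    (m : Sym2 V → ℕ) (hloopless : ∀ v : V, m s(v, v) = 0)
    (hodd : ∀ e : Sym2 V, m e = 0 ∨ Odd (m e)) :
    ∃ c : Sym2 V → Fin 4 → ℕ, IsOddMultiColoring m c := by
  classical
  have hsym : Symmetric (fun u v : V => u ≠ v ∧ m s(u, v) ≠ 0) := by
    intro u v h
    exact ⟨h.1.symm, by rw [Sym2.eq_swap]; exact h.2⟩
  have hirr : ∀ v, ¬ (fun u v : V => u ≠ v ∧ m s(u, v) ≠ 0) v v := fun v h => h.1 rfl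
  obtain ⟨χ, hχ⟩ := OddPf.simple_main (fun u v : V => u ≠ v ∧ m s(u, v) ≠ 0) hsym hirr
  refine ⟨fun e i => if χ e = i then m e else 0, ?_, ?_⟩
  · intro e
    rw [Finset.sum_ite_eq]
    simp
  · intro i v
    refine odd_sum_of_card (fun u => (v ≠ u ∧ m s(v, u) ≠ 0) ∧ χ s(v, u) = i)
      (fun u => if χ s(v, u) = i then m s(v, u) else 0) ?_ ?_ ?_
    · intro u hu
      have hu' : (v ≠ u ∧ m s(v, u) ≠ 0) ∧ χ s(v, u) = i := hu
      rcases hodd s(v, u) with h0 | ho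
      · exact absurd h0 hu'.1.2
      · show (if χ s(v, u) = i then m s(v, u) else 0) % 2 = 1
        rw [if_pos hu'.2]
        exact Nat.odd_iff.1 ho
    · intro u hu
      have hu' : ¬ ((v ≠ u ∧ m s(v, u) ≠ 0) ∧ χ s(v, u) = i) := hu
      show (if χ s(v, u) = i then m s(v, u) else 0) = 0
      by_cases h2 : χ s(v, u) = i
      · rw [if_pos h2]
        by_cases h3 : v = u
        · rw [← h3]
          exact hloopless v
        · by_contra hm
          exact hu' ⟨⟨h3, hm⟩, h2⟩
      · rw [if_neg h2]
    · convert hχ i v using 3 <;> congr!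
end
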